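/- arXiv:1807.09376 — 10 statements merged into one kernel-verified Lean document; each statement's English description precedes it below -/
import Mathlib

section
/- If a graph F strongly arrows the pair (G,H) (i.e., every red-blue edge colouring of F contains a red induced copy of G or a blue induced copy of H), then the disjoint union of s+t-1 copies of F strongly arrows the pair (sG, tH), where xG denotes the vertex-disjoint union of x copies of G. -/
open SimpleGraph

/-- The disjoint union of `s` copies of the graph `G`. -/
def SimpleGraph.Copies {β : Type*} (s : ℕ) (G : SimpleGraph β) :
    SimpleGraph (Fin s × β) where
  Adj x y := x.1 = y.1 ∧ G.Adj x.2 y.2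
  symm := ⟨fun x y h => ⟨h.1.symm, h.2.symm⟩⟩
  loopless := ⟨fun x h => G.loopless.irrefl x.2 h.2⟩

/-- `F` strongly arrows `(G, H)`: every red-blue (`true`/`false`) colouring of the
edges of `F` yields a red induced copy of `G` or a blue induced copy of `H`. -/
def StronglyArrows {α β γ : Type*}
    (F : SimpleGraph α) (G : SimpleGraph β) (H : SimpleGraph γ) : Prop :=
  ∀ c : Sym2 α → Bool,
    (∃ f : G ↪g F, ∀ a b : β, G.Adj a b → c s(f a, f b) = true) ∨
    (∃ f : H ↪g F, ∀ a b : γ, H.Adj a b → c s(f a, f b) = false)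

/-- The induced Ramsey number `IR(G, H)`. -/
noncomputable def IR {β γ : Type*} (G : SimpleGraph β) (H : SimpleGraph γ) : ℕ :=
  sInf {n : ℕ | ∃ F : SimpleGraph (Fin n), StronglyArrows F G H}

/-- The single-edge graph `K_2`. -/
def K2 : SimpleGraph (Fin 2) := ⊤

/-- Two disjoint edges `2K_2`. -/
def twoK2 : SimpleGraph (Fin 2 × Fin 2) := SimpleGraph.Copies 2 K2


lemma combine_copies {α β : Type*} {n k : ℕ} {F : SimpleGraph α} {G : SimpleGraph β}
    (c : Sym2 (Fin n × α) → Bool) (b : Bool) (φ : Fin k ↪ Fin n)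
    (f : Fin k → (G ↪g F))
    (hf : ∀ i a a', G.Adj a a' → c s((φ i, f i a), (φ i, f i a')) = b) :
    ∃ e : (SimpleGraph.Copies k G) ↪g (SimpleGraph.Copies n F),
      ∀ x y, (SimpleGraph.Copies k G).Adj x y → c s(e x, e y) = b := by
  refine ⟨⟨⟨fun x => (φ x.1, f x.1 x.2), ?_⟩, ?_⟩, ?_⟩
  · rintro ⟨i, a⟩ ⟨j, a'⟩ hxy
    simp only [Prod.mk.injEq] at hxy
    obtain ⟨h1, h2⟩ := hxy
    have hij : i = j := φ.injective h1
    subst hij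
    exact Prod.ext rfl ((f i).injective h2)
  · rintro ⟨i, a⟩ ⟨j, a'⟩
    show (φ i = φ j ∧ F.Adj (f i a) (f j a')) ↔ (i = j ∧ G.Adj a a')
    constructor
    · rintro ⟨h1, h2⟩
      have hij : i = j := φ.injective h1
      subst hij
      exact ⟨rfl, (f i).map_rel_iff.mp h2⟩
    · rintro ⟨rfl, h2⟩
      exact ⟨rfl, (f i).map_rel_iff.mpr h2⟩
  · rintro ⟨i, a⟩ ⟨j, a'⟩ ⟨hij, hadj⟩
    cases hij
    exact hf i a a' hadj

theorem stmt0 {α β γ : Type*} (F : SimpleGraph α) (G : SimpleGraph β)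
    (H : SimpleGraph γ) (s t : ℕ) (hs : 1 ≤ s) (ht : 1 ≤ t)
    (h : StronglyArrows F G H) :
    StronglyArrows (SimpleGraph.Copies (s + t - 1) F)
      (SimpleGraph.Copies s G) (SimpleGraph.Copies t H) := by
  classical
  intro c
  have key : ∀ i : Fin (s + t - 1),
      (∃ f : G ↪g F, ∀ a a', G.Adj a a' → c s((i, f a), (i, f a')) = true) ∨
      (∃ f : H ↪g F, ∀ a a', H.Adj a a' → c s((i, f a), (i, f a')) = false) := by
    intro i
    have := h (fun e => c (Sym2.map (fun a => (i, a)) e))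
    rcases this with ⟨f, hf⟩ | ⟨f, hf⟩
    · exact Or.inl ⟨f, fun a a' ha => by simpa using hf a a' ha⟩
    · exact Or.inr ⟨f, fun a a' ha => by simpa using hf a a' ha⟩
  let S : Finset (Fin (s + t - 1)) := Finset.univ.filter
    (fun i => ∃ f : G ↪g F, ∀ a a', G.Adj a a' → c s((i, f a), (i, f a')) = true)
  have hcard : S.card + Sᶜ.card = s + t - 1 := by
    simpa using Finset.card_add_card_compl S
  by_cases hsS : s ≤ S.card
  · left
    obtain ⟨T, hTS, hT⟩ := Finset.exists_subset_card_eq hsS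
    let φ : Fin s ↪o Fin (s + t - 1) := T.orderEmbOfFin hT
    have hφ : ∀ i, ∃ f : G ↪g F, ∀ a a', G.Adj a a' →
        c s((φ i, f a), (φ i, f a')) = true := by
      intro i
      have hm : φ i ∈ S := hTS (T.orderEmbOfFin_mem hT i)
      simpa [S] using hm
    choose f hf using hφ
    exact combine_copies c true φ.toEmbedding f hf
  · right
    have htS : t ≤ Sᶜ.card := by omega
    obtain ⟨T, hTS, hT⟩ := Finset.exists_subset_card_eq htS
    let φ : Fin t ↪o Fin (s + t - 1) := T.orderEmbOfFin hT
    have hφ : ∀ i, ∃ f : H ↪g F, ∀ a a', H.Adj a a' →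
        c s((φ i, f a), (φ i, f a')) = false := by
      intro i
      have hm : φ i ∈ Sᶜ := hTS (T.orderEmbOfFin_mem hT i)
      have hnot : ¬ ∃ f : G ↪g F, ∀ a a', G.Adj a a' →
          c s((φ i, f a), (φ i, f a')) = true := by
        simpa [S] using hm
      exact (key (φ i)).resolve_left hnot
    choose f hf using hφ
    exact combine_copies c false φ.toEmbedding f hf
end

section
/- For all graphs G and H and positive integers s,t, the induced Ramsey number satisfies IR(sG, tH) ≤ (s+t-1)·IR(G,H). -/
open SimpleGraph

section Aux

/-- `StronglyArrows` transports along isomorphisms of the host graph. -/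
lemma StronglyArrows.of_iso {α α' β γ : Type*} {F : SimpleGraph α} {F' : SimpleGraph α'}
    {G : SimpleGraph β} {H : SimpleGraph γ} (e : F ≃g F') (h : StronglyArrows F G H) :
    StronglyArrows F' G H := by
  intro c
  rcases h (fun p => c (p.map e)) with ⟨f, hf⟩ | ⟨f, hf⟩
  · exact Or.inl ⟨e.toEmbedding.comp f, fun a b hab => by
      simpa [Sym2.map_pair_eq] using hf a b hab⟩
  · exact Or.inr ⟨e.toEmbedding.comp f, fun a b hab => by
      simpa [Sym2.map_pair_eq] using hf a b hab⟩

/-- The embedding of `G` into a fixed copy inside `Copies m G`. -/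
def copyEmb {β : Type*} (G : SimpleGraph β) {m : ℕ} (k : Fin m) : G ↪g G.Copies m where
  toFun := fun b => (k, b)
  inj' := fun a b hab => (Prod.mk.injEq _ _ _ _ ▸ hab).2
  map_rel_iff' := by
    intro a b
    constructor
    · exact fun h => h.2
    · exact fun h => ⟨rfl, h⟩

lemma arrows_of_copies {α β γ : Type*} {F : SimpleGraph α}
    {G : SimpleGraph β} {H : SimpleGraph γ} {s t : ℕ} (hs : 1 ≤ s) (ht : 1 ≤ t)
    (h : StronglyArrows F (G.Copies s) (H.Copies t)) : StronglyArrows F G H := by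
  intro c
  rcases h c with ⟨f, hf⟩ | ⟨f, hf⟩
  · exact Or.inl ⟨f.comp (copyEmb G ⟨0, hs⟩), fun a b hab =>
      hf (⟨0, hs⟩, a) (⟨0, hs⟩, b) ⟨rfl, hab⟩⟩
  · exact Or.inr ⟨f.comp (copyEmb H ⟨0, ht⟩), fun a b hab =>
      hf (⟨0, ht⟩, a) (⟨0, ht⟩, b) ⟨rfl, hab⟩⟩

/-- The key construction: `s + t - 1` copies of `F` strongly arrow `(sG, tH)`. -/
lemma arrows_copies {α β γ : Type*} [Fintype α] {F : SimpleGraph α}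
    (G : SimpleGraph β) (H : SimpleGraph γ) (s t : ℕ) (hs : 1 ≤ s) (ht : 1 ≤ t)
    (hF : StronglyArrows F G H) :
    StronglyArrows (F.Copies (s + t - 1)) (G.Copies s) (H.Copies t) := by
  classical
  intro c
  have h : ∀ k : Fin (s + t - 1),
      (∃ f : G ↪g F, ∀ a b : β, G.Adj a b → c s((k, f a), (k, f b)) = true) ∨
      (∃ f : H ↪g F, ∀ a b : γ, H.Adj a b → c s((k, f a), (k, f b)) = false) := by
    intro k
    have := hF (fun e => c (e.map (fun v => (k, v))))
    simpa [Sym2.map_pair_eq] using this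
  set S : Finset (Fin (s + t - 1)) := Finset.univ.filter
    (fun k => ∃ f : G ↪g F, ∀ a b : β, G.Adj a b → c s((k, f a), (k, f b)) = true) with hSdef
  by_cases hcard : s ≤ S.card
  · -- red case
    left
    obtain ⟨T, hTS, hTcard⟩ := Finset.exists_subset_card_eq hcard
    let σ := T.orderIsoOfFin hTcard
    have hred : ∀ i : Fin s,
        ∃ f : G ↪g F, ∀ a b : β, G.Adj a b →
          c s(((σ i : Fin (s + t - 1)), f a), ((σ i : Fin (s + t - 1)), f b)) = true := by
      intro i
      have hmem : (σ i : Fin (s + t - 1)) ∈ S := hTS (σ i).2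
      rw [hSdef, Finset.mem_filter] at hmem
      exact hmem.2
    choose f hf using hred
    have hσinj : Function.Injective (fun i : Fin s => (σ i : Fin (s + t - 1))) := by
      intro i j hij
      exact σ.injective (Subtype.ext hij)
    refine ⟨⟨⟨fun p => ((σ p.1 : Fin (s + t - 1)), f p.1 p.2), ?_⟩, ?_⟩, ?_⟩
    · intro p q hpq
      have h1 : (σ p.1 : Fin (s + t - 1)) = (σ q.1 : Fin (s + t - 1)) := congrArg Prod.fst hpq
      have h1' : p.1 = q.1 := hσinj h1
      have h2 : f p.1 p.2 = f q.1 q.2 := congrArg Prod.snd hpq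
      obtain ⟨i, a⟩ := p; obtain ⟨j, b⟩ := q
      simp only at h1' h2
      subst h1'
      exact Prod.ext rfl ((f i).injective h2)
    · intro p q
      show ((σ p.1 : Fin (s + t - 1)) = (σ q.1 : Fin (s + t - 1)) ∧ F.Adj (f p.1 p.2) (f q.1 q.2)) ↔
        (p.1 = q.1 ∧ G.Adj p.2 q.2)
      constructor
      · rintro ⟨h1, h2⟩
        have h1' : p.1 = q.1 := hσinj h1
        refine ⟨h1', ?_⟩
        obtain ⟨i, a⟩ := p; obtain ⟨j, b⟩ := q
        simp only at h1' ⊢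
        subst h1'
        exact (f i).map_rel_iff.mp h2
      · rintro ⟨h1, h2⟩
        obtain ⟨i, a⟩ := p; obtain ⟨j, b⟩ := q
        simp only at h1 ⊢
        subst h1
        exact ⟨rfl, (f i).map_rel_iff.mpr h2⟩
    · rintro ⟨i, a⟩ ⟨j, b⟩ ⟨h1, h2⟩
      simp only at h1
      subst h1
      exact hf i a b h2
  · -- blue case
    right
    have hblue' : ∀ k : Fin (s + t - 1), k ∈ Sᶜ →
        ∃ f : H ↪g F, ∀ a b : γ, H.Adj a b → c s((k, f a), (k, f b)) = false := by
      intro k hk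
      rw [Finset.mem_compl, hSdef, Finset.mem_filter] at hk
      rcases h k with h1 | h2
      · exact absurd ⟨Finset.mem_univ k, h1⟩ hk
      · exact h2
    have hcc : t ≤ Sᶜ.card := by
      have := Finset.card_compl S
      have hcm : Fintype.card (Fin (s + t - 1)) = s + t - 1 := Fintype.card_fin _
      omega
    obtain ⟨T, hTS, hTcard⟩ := Finset.exists_subset_card_eq hcc
    let σ := T.orderIsoOfFin hTcard
    have hblue : ∀ i : Fin t,
        ∃ f : H ↪g F, ∀ a b : γ, H.Adj a b →
          c s(((σ i : Fin (s + t - 1)), f a), ((σ i : Fin (s + t - 1)), f b)) = false :=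
      fun i => hblue' _ (hTS (σ i).2)
    choose f hf using hblue
    have hσinj : Function.Injective (fun i : Fin t => (σ i : Fin (s + t - 1))) := by
      intro i j hij
      exact σ.injective (Subtype.ext hij)
    refine ⟨⟨⟨fun p => ((σ p.1 : Fin (s + t - 1)), f p.1 p.2), ?_⟩, ?_⟩, ?_⟩
    · intro p q hpq
      have h1 : (σ p.1 : Fin (s + t - 1)) = (σ q.1 : Fin (s + t - 1)) := congrArg Prod.fst hpq
      have h1' : p.1 = q.1 := hσinj h1
      have h2 : f p.1 p.2 = f q.1 q.2 := congrArg Prod.snd hpq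
      obtain ⟨i, a⟩ := p; obtain ⟨j, b⟩ := q
      simp only at h1' h2
      subst h1'
      exact Prod.ext rfl ((f i).injective h2)
    · intro p q
      show ((σ p.1 : Fin (s + t - 1)) = (σ q.1 : Fin (s + t - 1)) ∧ F.Adj (f p.1 p.2) (f q.1 q.2)) ↔
        (p.1 = q.1 ∧ H.Adj p.2 q.2)
      constructor
      · rintro ⟨h1, h2⟩
        have h1' : p.1 = q.1 := hσinj h1
        refine ⟨h1', ?_⟩
        obtain ⟨i, a⟩ := p; obtain ⟨j, b⟩ := q
        simp only at h1' ⊢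
        subst h1'
        exact (f i).map_rel_iff.mp h2
      · rintro ⟨h1, h2⟩
        obtain ⟨i, a⟩ := p; obtain ⟨j, b⟩ := q
        simp only at h1 ⊢
        subst h1
        exact ⟨rfl, (f i).map_rel_iff.mpr h2⟩
    · rintro ⟨i, a⟩ ⟨j, b⟩ ⟨h1, h2⟩
      simp only at h1
      subst h1
      exact hf i a b h2

end Aux

theorem stmt1 {β γ : Type*} [Fintype β] [Fintype γ]
    (G : SimpleGraph β) (H : SimpleGraph γ) (s t : ℕ) (hs : 1 ≤ s) (ht : 1 ≤ t) :
    IR (SimpleGraph.Copies s G) (SimpleGraph.Copies t H) ≤ (s + t - 1) * IR G H := by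
  classical
  by_cases hne : {n : ℕ | ∃ F : SimpleGraph (Fin n), StronglyArrows F G H}.Nonempty
  · obtain ⟨F, hF⟩ : ∃ F : SimpleGraph (Fin (IR G H)), StronglyArrows F G H :=
      Nat.sInf_mem hne
    have hF' := arrows_copies G H s t hs ht hF
    let e : Fin ((s + t - 1) * IR G H) ≃ Fin (s + t - 1) × Fin (IR G H) :=
      finProdFinEquiv.symm
    let F2 : SimpleGraph (Fin ((s + t - 1) * IR G H)) := (F.Copies (s + t - 1)).comap e
    have iso : F2 ≃g F.Copies (s + t - 1) := ⟨e, Iff.rfl⟩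
    have harr : StronglyArrows F2 (G.Copies s) (H.Copies t) :=
      StronglyArrows.of_iso iso.symm hF'
    exact Nat.sInf_le ⟨F2, harr⟩
  · have h1 : IR G H = 0 := by
      rw [Set.not_nonempty_iff_eq_empty] at hne
      rw [IR, hne, Nat.sInf_empty]
    have h2 : IR (SimpleGraph.Copies s G) (SimpleGraph.Copies t H) = 0 := by
      have he : {n : ℕ | ∃ F : SimpleGraph (Fin n),
          StronglyArrows F (G.Copies s) (H.Copies t)} = ∅ := by
        rw [Set.eq_empty_iff_forall_notMem]
        rintro n ⟨F, hF⟩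
        exact hne ⟨n, F, arrows_of_copies hs ht hF⟩
      rw [IR, he, Nat.sInf_empty]
    simp [h1, h2]
end

section
/- Let G be a graph with no isolated vertices. Then IR(G, 2K_2) ≥ |V(G)| + 2. -/
open SimpleGraph

lemma twoK2_adj_iff (x y : Fin 2 × Fin 2) :
    twoK2.Adj x y ↔ x.1 = y.1 ∧ x.2 ≠ y.2 := Iff.rfl

lemma copies_adj_iff {β : Type*} {G : SimpleGraph β} (x y : Fin 2 × β) :
    (SimpleGraph.Copies 2 G).Adj x y ↔ x.1 = y.1 ∧ G.Adj x.2 y.2 := Iff.rfl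

/-- Transport `StronglyArrows` along an isomorphism of host graphs. -/
lemma stronglyArrows_of_iso {α α' β γ : Type*} {F : SimpleGraph α} {F' : SimpleGraph α'}
    {G : SimpleGraph β} {H : SimpleGraph γ} (φ : F' ≃g F)
    (h : StronglyArrows F G H) : StronglyArrows F' G H := by
  intro c
  rcases h (fun e => c (e.map φ.symm)) with ⟨f, hf⟩ | ⟨f, hf⟩
  · exact Or.inl ⟨(φ.symm.toEmbedding).comp f, fun a b hab => by simpa using hf a b hab⟩
  · exact Or.inr ⟨(φ.symm.toEmbedding).comp f, fun a b hab => by simpa using hf a b hab⟩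

/-- Two disjoint copies of `G` strongly arrow `(G, 2K₂)`. -/
lemma copies_stronglyArrows {β : Type*} (G : SimpleGraph β)
    (hG : ∀ v : β, ∃ w : β, G.Adj v w) :
    StronglyArrows (SimpleGraph.Copies 2 G) G twoK2 := by
  classical
  intro c
  -- a fully red copy gives a red induced G
  have red : ∀ i : Fin 2,
      (¬ ∃ a b : β, G.Adj a b ∧ c s((i, a), (i, b)) = false) →
      (∃ f : G ↪g SimpleGraph.Copies 2 G, ∀ a b : β, G.Adj a b → c s(f a, f b) = true) := by
    intro i hi
    push_neg at hi
    refine ⟨⟨⟨fun a => (i, a), fun a b h => (Prod.ext_iff.mp h).2⟩, ?_⟩, ?_⟩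
    · intro a b
      exact ⟨fun h => h.2, fun h => ⟨rfl, h⟩⟩
    · intro a b hab
      have := hi a b hab
      change c s((i, a), (i, b)) = true
      simpa using this
  by_cases h0 : ∃ a b : β, G.Adj a b ∧ c s(((0 : Fin 2), a), (0, b)) = false
  · by_cases h1 : ∃ a b : β, G.Adj a b ∧ c s(((1 : Fin 2), a), (1, b)) = false
    · obtain ⟨a0, b0, hab0, hc0⟩ := h0
      obtain ⟨a1, b1, hab1, hc1⟩ := h1
      right
      set M : Fin 2 → Fin 2 → β := fun i j => if i = 0 then (if j = 0 then a0 else b0)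
        else (if j = 0 then a1 else b1) with hM
      have hMne : ∀ i : Fin 2, M i 0 ≠ M i 1 := by
        intro i
        fin_cases i <;> simp [hM] <;> [exact hab0.ne; exact hab1.ne]
      have hMadj : ∀ i : Fin 2, G.Adj (M i 0) (M i 1) := by
        intro i; fin_cases i <;> simpa [hM] using (by assumption)
      refine ⟨⟨⟨fun x => (x.1, M x.1 x.2), ?_⟩, ?_⟩, ?_⟩
      · rintro ⟨i, j⟩ ⟨i', j'⟩ h
        have h1' : i = i' := (Prod.ext_iff.mp h).1
        subst h1'
        have h2' : M i j = M i j' := (Prod.ext_iff.mp h).2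
        have : j = j' := by
          fin_cases j <;> fin_cases j' <;> first
            | rfl
            | exact absurd h2' (hMne i)
            | exact absurd h2'.symm (hMne i)
        simp [this]
      · rintro ⟨i, j⟩ ⟨i', j'⟩
        simp only [twoK2_adj_iff, copies_adj_iff]
        constructor
        · rintro ⟨rfl, hadj⟩
          refine ⟨rfl, fun hj => ?_⟩
          rw [show j = j' from hj] at hadj
          exact hadj.ne rfl
        · rintro ⟨rfl, hj⟩
          refine ⟨rfl, ?_⟩
          fin_cases j <;> fin_cases j' <;> first
            | exact absurd rfl hj
            | exact hMadj i
            | exact (hMadj i).symm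
      · rintro ⟨i, j⟩ ⟨i', j'⟩ hadj
        obtain ⟨rfl, hj⟩ := (twoK2_adj_iff _ _).mp hadj
        have hkey : ∀ i : Fin 2, c s((i, M i 0), (i, M i 1)) = false := by
          intro i; fin_cases i <;> simpa [hM] using (by assumption)
        simp only []
        fin_cases j <;> fin_cases j' <;> first
          | exact absurd rfl hj
          | exact hkey i
          | (rw [Sym2.eq_swap]; exact hkey i)
    · exact Or.inl (red 1 h1)
  · exact Or.inl (red 0 h0)

/-- Any graph that strongly arrows `(G, 2K₂)` has at least `|V(G)| + 2` vertices. -/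
lemma card_le_of_stronglyArrows {β : Type*} [Fintype β] [Nonempty β] {m : ℕ}
    (G : SimpleGraph β) (hG : ∀ v : β, ∃ w : β, G.Adj v w)
    (F : SimpleGraph (Fin m)) (hF : StronglyArrows F G twoK2) :
    Fintype.card β + 2 ≤ m := by
  classical
  by_cases hE : ∃ u v : Fin m, F.Adj u v
  · obtain ⟨u, v, huv⟩ := hE
    -- colour all edges touching u or v blue, the rest red
    set c : Sym2 (Fin m) → Bool := fun e => decide (¬ (u ∈ e ∨ v ∈ e)) with hc
    rcases hF c with ⟨f, hf⟩ | ⟨f, hf⟩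
    · -- red induced G avoids both u and v
      have hu : ∀ a : β, f a ≠ u ∧ f a ≠ v := by
        intro a
        obtain ⟨b, hab⟩ := hG a
        have h1 := hf a b hab
        simp only [hc, decide_eq_true_eq, Sym2.mem_iff] at h1
        push_neg at h1
        exact ⟨fun h => h1.1.1 h.symm, fun h => h1.2.1 h.symm⟩
      have hcard : Fintype.card (β ⊕ Fin 2) ≤ Fintype.card (Fin m) := by
        refine Fintype.card_le_of_embedding ⟨Sum.elim (fun a => f a) (![u, v]), ?_⟩
        rintro (a | i) (b | j) h
        · simp only [Sum.elim_inl] at h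
          exact congrArg Sum.inl (f.injective h)
        · exfalso
          simp only [Sum.elim_inl, Sum.elim_inr] at h
          fin_cases j <;> simp at h <;> [exact (hu a).1 h; exact (hu a).2 h]
        · exfalso
          simp only [Sum.elim_inl, Sum.elim_inr] at h
          fin_cases i <;> simp at h <;> [exact (hu b).1 h.symm; exact (hu b).2 h.symm]
        · simp only [Sum.elim_inr] at h
          refine congrArg Sum.inr ?_
          fin_cases i <;> fin_cases j <;> simp_all <;>
            first | rfl | exact absurd h huv.ne | exact absurd h.symm huv.ne
      simpa using hcard
    · -- a blue 2K₂ is impossible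
      exfalso
      have hne : ∀ i j : Fin 2, f (0, i) ≠ f (1, j) := by
        intro i j h
        have h2 := congrArg Prod.fst (f.injective h)
        simp at h2
      have hnadj : ∀ i j : Fin 2, ¬ F.Adj (f (0, i)) (f (1, j)) := by
        intro i j h
        have h3 := ((twoK2_adj_iff _ _).mp (f.map_rel_iff.mp h)).1
        simp at h3
      have e0 : twoK2.Adj (0, 0) (0, 1) := (twoK2_adj_iff _ _).mpr ⟨rfl, by decide⟩
      have e1 : twoK2.Adj (1, 0) (1, 1) := (twoK2_adj_iff _ _).mpr ⟨rfl, by decide⟩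
      have h1 := hf _ _ e0
      have h2 := hf _ _ e1
      simp only [hc, decide_eq_false_iff_not, Sym2.mem_iff, not_not] at h1 h2
      rcases h1 with (h1 | h1) | (h1 | h1) <;> rcases h2 with (h2 | h2) | (h2 | h2) <;>
        first
          | exact hne _ _ (h1.symm.trans h2)
          | exact hnadj _ _ (h1 ▸ h2 ▸ huv)
          | exact hnadj _ _ (h1 ▸ h2 ▸ huv.symm)
  · -- `F` edgeless: neither branch can produce an embedding
    exfalso
    rcases hF (fun _ => true) with ⟨f, _⟩ | ⟨f, _⟩
    · obtain ⟨v0⟩ := (inferInstance : Nonempty β)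
      obtain ⟨w, hw⟩ := hG v0
      exact hE ⟨_, _, f.map_rel_iff.mpr hw⟩
    · exact hE ⟨_, _, f.map_rel_iff.mpr ((twoK2_adj_iff (0,0) (0,1)).mpr ⟨rfl, by decide⟩)⟩

theorem stmt3 {β : Type*} [Fintype β] [Nonempty β] (G : SimpleGraph β)
    (hG : ∀ v : β, ∃ w : β, G.Adj v w) :
    Fintype.card β + 2 ≤ IR G twoK2 := by
  classical
  set S : Set ℕ := {n : ℕ | ∃ F : SimpleGraph (Fin n), StronglyArrows F G twoK2} with hS
  have hmem : (2 * Fintype.card β) ∈ S := by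
    let e : Fin (2 * Fintype.card β) ≃ Fin 2 × β :=
      finProdFinEquiv.symm.trans ((Equiv.refl (Fin 2)).prodCongr (Fintype.equivFin β).symm)
    refine ⟨(SimpleGraph.Copies 2 G).comap e, ?_⟩
    exact stronglyArrows_of_iso (⟨e, Iff.rfl⟩ : _ ≃g SimpleGraph.Copies 2 G)
      (copies_stronglyArrows G hG)
  have hinf : sInf S ∈ S := Nat.sInf_mem ⟨_, hmem⟩
  obtain ⟨F, hF⟩ := hinf
  exact card_le_of_stronglyArrows G hG F hF
end

section
/- For any graph G on n vertices with no isolated vertices, n+2 ≤ IR(G, 2K_2) ≤ 2n, and both bounds are attained (the lower bound by paths P_n for n ≥ 5, the upper bound by complete graphs K_n). -/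
open SimpleGraph

lemma twoK2_adj {x y : Fin 2 × Fin 2} : twoK2.Adj x y ↔ x.1 = y.1 ∧ x.2 ≠ y.2 := by
  rfl

set_option maxHeartbeats 1000000 in
lemma twoK2_emb {β : Type*} (G : SimpleGraph β) {a b a' b' : β}
    (hab : G.Adj a b) (hab' : G.Adj a' b') :
    ∃ f : twoK2 ↪g SimpleGraph.Copies 2 G,
      f (0,0) = (0,a) ∧ f (0,1) = (0,b) ∧ f (1,0) = (1,a') ∧ f (1,1) = (1,b') := by
  refine ⟨⟨⟨fun p => (p.1, if p.1 = 0 then (if p.2 = 0 then a else b)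
      else (if p.2 = 0 then a' else b')), ?_⟩, ?_⟩, rfl, rfl, rfl, rfl⟩
  · intro x y hxy
    have ha := G.ne_of_adj hab
    have ha' := G.ne_of_adj hab'
    simp only [Prod.mk.injEq] at hxy
    fin_cases x <;> fin_cases y <;> simp_all <;> exact (ha hxy).elim
  · intro x y
    show ((_ : Fin 2) = _ ∧ G.Adj _ _) ↔ twoK2.Adj x y
    rw [twoK2_adj]
    fin_cases x <;> fin_cases y <;>
      simp_all [DFunLike.coe, G.ne_of_adj hab, G.ne_of_adj hab', (G.ne_of_adj hab).symm, (G.ne_of_adj hab').symm,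
        hab.symm, hab'.symm]

set_option maxHeartbeats 1000000 in
lemma copies_arrows {β : Type*} (G : SimpleGraph β) :
    StronglyArrows (SimpleGraph.Copies 2 G) G twoK2 := by
  intro c
  by_cases h0 : ∀ a b : β, G.Adj a b → c s((0, a), (0, b)) = true
  · refine Or.inl ⟨⟨⟨fun a => ((0 : Fin 2), a), fun a b hab => by simpa using congrArg Prod.snd hab⟩, ?_⟩, h0⟩
    intro a b
    show (0 : Fin 2) = 0 ∧ G.Adj a b ↔ _
    simp
  by_cases h1 : ∀ a b : β, G.Adj a b → c s((1, a), (1, b)) = true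
  · refine Or.inl ⟨⟨⟨fun a => ((1 : Fin 2), a), fun a b hab => by simpa using congrArg Prod.snd hab⟩, ?_⟩, h1⟩
    intro a b
    show (1 : Fin 2) = 1 ∧ G.Adj a b ↔ _
    simp
  push_neg at h0 h1
  obtain ⟨a, b, hab, hc0⟩ := h0
  obtain ⟨a', b', hab', hc1⟩ := h1
  replace hc0 : c s(((0:Fin 2), a), ((0:Fin 2), b)) = false := Bool.not_eq_true _ |>.mp hc0
  replace hc1 : c s(((1:Fin 2), a'), ((1:Fin 2), b')) = false := Bool.not_eq_true _ |>.mp hc1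
  obtain ⟨f, f00, f01, f10, f11⟩ := twoK2_emb G hab hab'
  refine Or.inr ⟨f, ?_⟩
  intro x y hxy
  rw [twoK2_adj] at hxy
  obtain ⟨h1', h2'⟩ := hxy
  have e0 : c s(((0:Fin 2), b), ((0:Fin 2), a)) = false := Sym2.eq_swap ▸ hc0
  have e1 : c s(((1:Fin 2), b'), ((1:Fin 2), a')) = false := Sym2.eq_swap ▸ hc1
  have hfin : ∀ z : Fin 2, z = 0 ∨ z = 1 := by decide
  obtain ⟨i, j⟩ := x
  obtain ⟨i', j'⟩ := y
  simp only at h1' h2'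
  subst h1'
  rcases hfin i with rfl | rfl <;> rcases hfin j with rfl | rfl <;> rcases hfin j' with rfl | rfl <;>
    first
    | exact absurd rfl h2'
    | (rw [f00, f01]; exact hc0)
    | (rw [f01, f00]; exact e0)
    | (rw [f10, f11]; exact hc1)
    | (rw [f11, f10]; exact e1)

lemma exists_arrows_upper {β : Type*} [Fintype β] (G : SimpleGraph β) :
    ∃ F : SimpleGraph (Fin (2 * Fintype.card β)), StronglyArrows F G twoK2 := by
  classical
  let e : Fin (2 * Fintype.card β) ≃ Fin 2 × β :=
    finProdFinEquiv.symm.trans ((Equiv.refl (Fin 2)).prodCongr (Fintype.equivFin β).symm)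
  exact ⟨(SimpleGraph.Copies 2 G).comap e.toEmbedding,
    (copies_arrows G).of_iso (SimpleGraph.Iso.comap e (SimpleGraph.Copies 2 G)).symm⟩

lemma twoK2_adj_01 : twoK2.Adj (0,0) (0,1) := by rw [twoK2_adj]; exact ⟨rfl, by decide⟩
lemma twoK2_adj_11 : twoK2.Adj (1,0) (1,1) := by rw [twoK2_adj]; exact ⟨rfl, by decide⟩

lemma no_arrows_small {β : Type*} [Fintype β] [Nonempty β] (G : SimpleGraph β)
    (hmin : ∀ v, ∃ w, G.Adj v w) {m : ℕ} (hm : m ≤ Fintype.card β + 1)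
    (F : SimpleGraph (Fin m)) : ¬ StronglyArrows F G twoK2 := by
  classical
  intro hF
  by_cases hE : ∃ u v : Fin m, F.Adj u v
  · obtain ⟨u, v, huv⟩ := hE
    rcases hF (fun s => decide (u ∉ s ∧ v ∉ s)) with ⟨f, hf⟩ | ⟨f, hf⟩
    · have hinj := f.injective
      have hrange : (∃ a, f a = u) ∨ (∃ a, f a = v) := by
        by_contra h
        push_neg at h
        obtain ⟨h1, h2⟩ := h
        have hsub : (Finset.univ.map ⟨f, hinj⟩) ⊆ Finset.univ \ {u, v} := by
          intro x hx
          simp only [Finset.mem_map, Finset.mem_univ, true_and] at hx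
          obtain ⟨a, _, rfl⟩ := hx
          simp only [Finset.mem_sdiff, Finset.mem_univ, Finset.mem_insert,
            Finset.mem_singleton, true_and]
          push_neg
          exact ⟨h1 a, h2 a⟩
        have hc := Finset.card_le_card hsub
        rw [Finset.card_map, Finset.card_univ, Finset.card_sdiff_of_subset (by simp)] at hc
        rw [Finset.card_univ, Fintype.card_fin] at hc
        rw [Finset.card_insert_of_notMem (by simpa using F.ne_of_adj huv),
          Finset.card_singleton] at hc
        have hβ : 1 ≤ Fintype.card β := Fintype.card_pos
        omega
      have key : ∀ a : β, f a = u ∨ f a = v → False := by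
        intro a ha
        obtain ⟨b, hab⟩ := hmin a
        have := hf a b hab
        simp only [decide_eq_true_eq, Sym2.mem_iff] at this
        rcases ha with ha | ha
        · exact this.1 (Or.inl ha.symm)
        · exact this.2 (Or.inl ha.symm)
      rcases hrange with ⟨a, ha⟩ | ⟨a, ha⟩
      · exact key a (Or.inl ha)
      · exact key a (Or.inr ha)
    · have h1 := hf (0,0) (0,1) twoK2_adj_01
      have h2 := hf (1,0) (1,1) twoK2_adj_11
      simp only [decide_eq_false_iff_not, not_and_or, not_not, Sym2.mem_iff] at h1 h2
      -- extract vertices of the 2K2 hitting u or v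
      have pick : ∀ x y : Fin 2 × Fin 2, (u = f x ∨ u = f y) ∨ (v = f x ∨ v = f y) →
          ∃ z ∈ ({x, y} : Set (Fin 2 × Fin 2)), f z = u ∨ f z = v := by
        rintro x y ((h | h) | (h | h))
        · exact ⟨x, Or.inl rfl, Or.inl h.symm⟩
        · exact ⟨y, Or.inr rfl, Or.inl h.symm⟩
        · exact ⟨x, Or.inl rfl, Or.inr h.symm⟩
        · exact ⟨y, Or.inr rfl, Or.inr h.symm⟩
      obtain ⟨z1, hz1mem, hz1⟩ := pick _ _ h1
      obtain ⟨z2, hz2mem, hz2⟩ := pick _ _ h2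
      have hz1fst : z1.1 = 0 := by rcases hz1mem with rfl | rfl <;> rfl
      have hz2fst : z2.1 = 1 := by
        rcases hz2mem with rfl | h
        · rfl
        · rw [Set.mem_singleton_iff] at h; subst h; rfl
      have hne : z1 ≠ z2 := fun h => by rw [h, hz2fst] at hz1fst; exact absurd hz1fst (by decide)
      have hnadj : ¬ twoK2.Adj z1 z2 := by
        rw [twoK2_adj]
        rintro ⟨h, -⟩
        rw [hz1fst, hz2fst] at h
        exact absurd h (by decide)
      rcases hz1 with h1' | h1' <;> rcases hz2 with h2' | h2'
      · exact hne (f.injective (h1'.trans h2'.symm))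
      · exact hnadj (f.map_adj_iff.mp (h1'.symm ▸ h2'.symm ▸ huv))
      · exact hnadj (f.map_adj_iff.mp (h1'.symm ▸ h2'.symm ▸ huv.symm))
      · exact hne (f.injective (h1'.trans h2'.symm))
  · push_neg at hE
    rcases hF (fun _ => false) with ⟨f, hf⟩ | ⟨f, hf⟩
    · obtain ⟨v0⟩ := ‹Nonempty β›
      obtain ⟨w, hw⟩ := hmin v0
      exact hE _ _ (f.map_adj_iff.mpr hw)
    · exact hE _ _ (f.map_adj_iff.mpr twoK2_adj_01)

lemma no_arrows_clique {n m : ℕ} (hn : 2 ≤ n) (hm : m < 2 * n)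
    (F : SimpleGraph (Fin m)) : ¬ StronglyArrows F (⊤ : SimpleGraph (Fin n)) twoK2 := by
  classical
  intro hF
  by_cases hcl : Nonempty ((⊤ : SimpleGraph (Fin n)) ↪g F)
  · obtain ⟨e0⟩ := hcl
    set Q : Finset (Fin m) := Finset.univ.map ⟨e0, e0.injective⟩ with hQ
    have hQcard : Q.card = n := by simp [hQ]
    have hQclique : ∀ x ∈ Q, ∀ y ∈ Q, x ≠ y → F.Adj x y := by
      intro x hx y hy hxy
      simp only [hQ, Finset.mem_map, Finset.mem_univ, true_and,
        Function.Embedding.coeFn_mk] at hx hy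
      obtain ⟨i, rfl⟩ := hx
      obtain ⟨j, rfl⟩ := hy
      exact e0.map_adj_iff.mpr (by simpa using fun h => hxy (by rw [h]))
    rcases hF (fun s => decide (∀ a ∈ Q, a ∉ s)) with ⟨f, hf⟩ | ⟨f, hf⟩
    · set Q' : Finset (Fin m) := Finset.univ.map ⟨f, f.injective⟩ with hQ'
      have hQ'card : Q'.card = n := by simp [hQ']
      have hinter : 1 ≤ (Q ∩ Q').card := by
        have h1 := Finset.card_union_add_card_inter Q Q'
        have h2 : (Q ∪ Q').card ≤ m := by
          simpa using Finset.card_le_univ (Q ∪ Q')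
        omega
      obtain ⟨w, hw⟩ := Finset.card_pos.mp hinter
      rw [Finset.mem_inter] at hw
      obtain ⟨hwQ, hwQ'⟩ := hw
      simp only [hQ', Finset.mem_map, Finset.mem_univ, true_and,
        Function.Embedding.coeFn_mk] at hwQ'
      obtain ⟨a, rfl⟩ := hwQ'
      obtain ⟨k, rfl⟩ : ∃ k, n = k + 2 := ⟨n - 2, by omega⟩
      obtain ⟨b, hb⟩ := exists_ne a
      have := hf a b (by simpa using fun h => hb (by rw [h]))
      rw [decide_eq_true_eq] at this
      exact this (f a) hwQ (Sym2.mem_mk_left _ _)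
    · have h1 := hf (0,0) (0,1) twoK2_adj_01
      have h2 := hf (1,0) (1,1) twoK2_adj_11
      rw [decide_eq_false_iff_not] at h1 h2
      push_neg at h1 h2
      obtain ⟨q1, hq1Q, hq1⟩ := h1
      obtain ⟨q2, hq2Q, hq2⟩ := h2
      rw [Sym2.mem_iff] at hq1 hq2
      have step : ∀ z1 z2 : Fin 2 × Fin 2, z1.1 = 0 → z2.1 = 1 →
          q1 = f z1 → q2 = f z2 → False := by
        intro z1 z2 hz1 hz2 e1 e2
        have hne : q1 ≠ q2 := by
          rintro rfl
          rw [e1] at e2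
          have := f.injective e2
          rw [this, hz2] at hz1
          exact absurd hz1 (by decide)
        have hadj : F.Adj q1 q2 := hQclique q1 hq1Q q2 hq2Q hne
        rw [e1, e2] at hadj
        have := (f.map_adj_iff.mp hadj)
        rw [twoK2_adj] at this
        rw [hz1, hz2] at this
        exact absurd this.1 (by decide)
      rcases hq1 with h' | h' <;> rcases hq2 with h'' | h''
      · exact step _ _ rfl rfl h' h''
      · exact step _ _ rfl rfl h' h''
      · exact step _ _ rfl rfl h' h''
      · exact step _ _ rfl rfl h' h''
  · rcases hF (fun _ => true) with ⟨f, _⟩ | ⟨f, hf⟩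
    · exact hcl ⟨f⟩
    · simpa using hf (0,0) (0,1) twoK2_adj_01

lemma part1 {β : Type*} [Fintype β] [Nonempty β] (G : SimpleGraph β)
    (hmin : ∀ v : β, ∃ w : β, G.Adj v w) :
    Fintype.card β + 2 ≤ IR G twoK2 ∧ IR G twoK2 ≤ 2 * Fintype.card β := by
  have hne : {n : ℕ | ∃ F : SimpleGraph (Fin n), StronglyArrows F G twoK2}.Nonempty :=
    ⟨2 * Fintype.card β, exists_arrows_upper G⟩
  refine ⟨?_, Nat.sInf_le (exists_arrows_upper G)⟩
  have hmem : ∃ F : SimpleGraph (Fin (IR G twoK2)), StronglyArrows F G twoK2 :=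
    Nat.sInf_mem hne
  obtain ⟨F, hF⟩ := hmem
  by_contra h
  push_neg at h
  exact no_arrows_small G hmin (by omega) F hF

lemma part3 {n : ℕ} (hn : 2 ≤ n) : IR (⊤ : SimpleGraph (Fin n)) twoK2 = 2 * n := by
  have hub : ∃ F : SimpleGraph (Fin (2 * n)), StronglyArrows F (⊤ : SimpleGraph (Fin n)) twoK2 := by
    have := exists_arrows_upper (⊤ : SimpleGraph (Fin n))
    rwa [Fintype.card_fin] at this
  have hne : {m : ℕ | ∃ F : SimpleGraph (Fin m),
      StronglyArrows F (⊤ : SimpleGraph (Fin n)) twoK2}.Nonempty := ⟨2 * n, hub⟩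
  have h1 : IR (⊤ : SimpleGraph (Fin n)) twoK2 ≤ 2 * n := Nat.sInf_le hub
  have hmem : ∃ F : SimpleGraph (Fin (IR (⊤ : SimpleGraph (Fin n)) twoK2)),
      StronglyArrows F (⊤ : SimpleGraph (Fin n)) twoK2 := Nat.sInf_mem hne
  obtain ⟨F, hF⟩ := hmem
  rcases Nat.lt_or_ge (IR (⊤ : SimpleGraph (Fin n)) twoK2) (2 * n) with h | h
  · exact absurd hF (no_arrows_clique hn h F)
  · omega

def cyc (m : ℕ) : SimpleGraph (ZMod m) where
  Adj x y := x ≠ y ∧ (y = x + 1 ∨ x = y + 1)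
  symm := ⟨fun x y h => ⟨h.1.symm, h.2.symm⟩⟩
  loopless := ⟨fun x h => h.1 rfl⟩

lemma cyc_adj {m : ℕ} {x y : ZMod m} : (cyc m).Adj x y ↔ x ≠ y ∧ (y = x + 1 ∨ x = y + 1) :=
  Iff.rfl

section cycle

variable {n : ℕ}

lemma hcast (hn : 5 ≤ n) : ∀ x y : ℕ, x < n + 2 → y < n + 2 →
    (((x : ℕ) : ZMod (n+2)) = y ↔ x = y) := by
  intro x y hx hy
  constructor
  · intro h
    have := congrArg ZMod.val h
    rwa [ZMod.val_natCast_of_lt hx, ZMod.val_natCast_of_lt hy] at this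
  · intro h; rw [h]

lemma hnz (hn : 5 ≤ n) : ∀ d : ℕ, 0 < d → d < n + 2 → ((d : ℕ) : ZMod (n+2)) ≠ 0 := by
  intro d hd1 hd2 h
  rw [show ((0 : ZMod (n+2))) = ((0 : ℕ) : ZMod (n+2)) by push_cast; rfl] at h
  have := (hcast hn d 0 hd2 (by omega)).mp h
  omega

end cycle

set_option maxHeartbeats 1000000 in
lemma cyc_twoK2_emb {n : ℕ} {i j : ZMod (n+2)}
    (hz1 : (1 : ZMod (n+2)) ≠ 0)
    (hd0 : j - i ≠ 0) (hd1 : j - i ≠ 1) (hd2 : j - i ≠ 2)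
    (hdm1 : i - j ≠ 1) (hdm2 : i - j ≠ 2) :
    ∃ f : twoK2 ↪g cyc (n+2),
      f (0,0) = i ∧ f (0,1) = i + 1 ∧ f (1,0) = j ∧ f (1,1) = j + 1 := by
  have hfin : ∀ z : Fin 2, z = 0 ∨ z = 1 := by decide
  have t0 : ((0:Fin 2) = 0) = True := by simp
  have t1 : ((1:Fin 2) = 0) = False := by simp
  refine ⟨⟨⟨fun p => if p.1 = 0 then (if p.2 = 0 then i else i + 1)
      else (if p.2 = 0 then j else j + 1), ?_⟩, ?_⟩, rfl, rfl, rfl, rfl⟩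
  · intro x y hxy
    obtain ⟨x1, x2⟩ := x
    obtain ⟨y1, y2⟩ := y
    simp only at hxy
    rcases hfin x1 with rfl | rfl <;> rcases hfin x2 with rfl | rfl <;>
      rcases hfin y1 with rfl | rfl <;> rcases hfin y2 with rfl | rfl <;>
      simp only [t0, t1, if_true, if_false] at hxy <;>
      first
      | rfl
      | (exfalso; first
          | exact hz1 (by linear_combination hxy)
          | exact hz1 (by linear_combination -hxy)
          | exact hd0 (by linear_combination hxy)
          | exact hd0 (by linear_combination -hxy)
          | exact hd1 (by linear_combination hxy)
          | exact hd1 (by linear_combination -hxy)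
          | exact hd2 (by linear_combination hxy)
          | exact hd2 (by linear_combination -hxy)
          | exact hdm1 (by linear_combination hxy)
          | exact hdm1 (by linear_combination -hxy)
          | exact hdm2 (by linear_combination hxy)
          | exact hdm2 (by linear_combination -hxy))
  · intro x y
    show (cyc (n+2)).Adj _ _ ↔ twoK2.Adj x y
    rw [twoK2_adj]
    obtain ⟨x1, x2⟩ := x
    obtain ⟨y1, y2⟩ := y
    rcases hfin x1 with rfl | rfl <;> rcases hfin x2 with rfl | rfl <;>
      rcases hfin y1 with rfl | rfl <;> rcases hfin y2 with rfl | rfl <;>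
      simp only [DFunLike.coe, Function.Embedding.coeFn_mk, t0, t1, if_true, if_false] <;>
      first
      | exact iff_of_false (fun h => h.1 rfl) (by decide)
      | exact iff_of_true ⟨fun h => hz1 (by linear_combination -h), Or.inl rfl⟩ (by decide)
      | exact iff_of_true ⟨fun h => hz1 (by linear_combination h), Or.inr rfl⟩ (by decide)
      | (refine iff_of_false (fun h => ?_) (by decide)
         rcases h with ⟨hne, he | he⟩ <;>
           first
           | exact hz1 (by linear_combination he)
           | exact hz1 (by linear_combination -he)
           | exact hd0 (by linear_combination he)
           | exact hd0 (by linear_combination -he)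
           | exact hd1 (by linear_combination he)
           | exact hd1 (by linear_combination -he)
           | exact hd2 (by linear_combination he)
           | exact hd2 (by linear_combination -he)
           | exact hdm1 (by linear_combination he)
           | exact hdm1 (by linear_combination -he)
           | exact hdm2 (by linear_combination he)
           | exact hdm2 (by linear_combination -he))

set_option maxHeartbeats 2000000 in
lemma cyc_arrows {n : ℕ} (hn : 5 ≤ n) :
    StronglyArrows (cyc (n+2)) (pathGraph n) twoK2 := by
  classical
  have hz1 : (1 : ZMod (n+2)) ≠ 0 := by have := hnz hn 1 (by omega) (by omega); push_cast at this; exact this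
  have hz2 : (2 : ZMod (n+2)) ≠ 0 := by have := hnz hn 2 (by omega) (by omega); push_cast at this; exact this
  have hz3 : (3 : ZMod (n+2)) ≠ 0 := by have := hnz hn 3 (by omega) (by omega); push_cast at this; exact this
  have hz4 : (4 : ZMod (n+2)) ≠ 0 := by have := hnz hn 4 (by omega) (by omega); push_cast at this; exact this
  have hz5 : (5 : ZMod (n+2)) ≠ 0 := by have := hnz hn 5 (by omega) (by omega); push_cast at this; exact this
  have hz6 : (6 : ZMod (n+2)) ≠ 0 := by have := hnz hn 6 (by omega) (by omega); push_cast at this; exact this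
  intro c
  by_cases hwin : ∃ k : ZMod (n+2), ∀ i : ZMod (n+2),
      c s(i, i+1) = false → i = k ∨ i = k + 1 ∨ i = k + 2
  · -- red path
    obtain ⟨k, hk⟩ := hwin
    left
    have hinj : Function.Injective (fun a : Fin n => k + 3 + ((a : ℕ) : ZMod (n+2))) := by
      intro a b hab
      simp only at hab
      have := add_left_cancel hab
      exact Fin.ext ((hcast hn a b (by omega) (by omega)).mp this)
    refine ⟨⟨⟨fun a => k + 3 + ((a : ℕ) : ZMod (n+2)), hinj⟩, ?_⟩, ?_⟩
    · intro a b
      rw [pathGraph_adj, cyc_adj]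
      simp only [Function.Embedding.coeFn_mk]
      constructor
      · rintro ⟨hne', h | h⟩
        · rw [add_assoc (k+3)] at h
          have := add_left_cancel h
          have h2 : ((b : ℕ) : ZMod (n+2)) = (((a : ℕ) + 1 : ℕ) : ZMod (n+2)) := by push_cast; exact this
          exact Or.inl ((hcast hn b (a+1) (by omega) (by omega)).mp h2).symm
        · rw [add_assoc (k+3)] at h
          have := add_left_cancel h
          have h2 : ((a : ℕ) : ZMod (n+2)) = (((b : ℕ) + 1 : ℕ) : ZMod (n+2)) := by push_cast; exact this
          exact Or.inr ((hcast hn a (b+1) (by omega) (by omega)).mp h2).symm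
      · intro h
        have hne2 : a ≠ b := by
          intro he; subst he; omega
        refine ⟨fun he => hne2 (hinj he), ?_⟩
        rcases h with h | h
        · left
          have h2 : ((b : ℕ) : ZMod (n+2)) = ((a : ℕ) : ZMod (n+2)) + 1 := by
            rw [← h]; push_cast; ring
          linear_combination h2
        · right
          have h2 : ((a : ℕ) : ZMod (n+2)) = ((b : ℕ) : ZMod (n+2)) + 1 := by
            rw [← h]; push_cast; ring
          linear_combination h2
    · have key : ∀ a b : Fin n, (a : ℕ) + 1 = (b : ℕ) →
          c s(k + 3 + ((a : ℕ) : ZMod (n+2)), k + 3 + ((b : ℕ) : ZMod (n+2))) = true := by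
        intro a b hab
        have hfb : k + 3 + ((b : ℕ) : ZMod (n+2)) = (k + 3 + ((a : ℕ) : ZMod (n+2))) + 1 := by
          rw [← hab]; push_cast; ring
        rw [hfb]
        by_contra hcc
        rw [Bool.not_eq_true] at hcc
        have hav : (a : ℕ) + 1 ≤ n - 1 := by omega
        rcases hk _ hcc with h | h | h
        · have : (((a : ℕ) + 3 : ℕ) : ZMod (n+2)) = 0 := by push_cast; linear_combination h
          exact hnz hn _ (by omega) (by omega) this
        · have : (((a : ℕ) + 2 : ℕ) : ZMod (n+2)) = 0 := by push_cast; linear_combination h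
          exact hnz hn _ (by omega) (by omega) this
        · have : (((a : ℕ) + 1 : ℕ) : ZMod (n+2)) = 0 := by push_cast; linear_combination h
          exact hnz hn _ (by omega) (by omega) this
      intro a b hab
      rw [pathGraph_adj] at hab
      rcases hab with h | h
      · exact key a b h
      · rw [Sym2.eq_swap]; exact key b a h
  · -- blue 2K2
    push_neg at hwin
    right
    have far : ∃ i j : ZMod (n+2), c s(i, i+1) = false ∧ c s(j, j+1) = false ∧
        j - i ≠ 0 ∧ j - i ≠ 1 ∧ j - i ≠ 2 ∧ i - j ≠ 1 ∧ i - j ≠ 2 := by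
      by_contra hf
      have hnear : ∀ i j : ZMod (n+2), c s(i, i+1) = false → c s(j, j+1) = false →
          (j - i = 0 ∨ j - i = 1 ∨ j - i = 2 ∨ i - j = 1 ∨ i - j = 2) := by
        intro i j hi hj
        by_contra h
        push_neg at h
        exact hf ⟨i, j, hi, hj, h.1, h.2.1, h.2.2.1, h.2.2.2.1, h.2.2.2.2⟩
      obtain ⟨i0, hi0, -⟩ := hwin 0
      by_cases hA : c s(i0 - 2, (i0 - 2) + 1) = false
      · obtain ⟨j, hjb, hj0, hj1, hj2⟩ := hwin (i0 - 2)
        have h1 := hnear i0 j hi0 hjb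
        have h2 := hnear (i0 - 2) j hA hjb
        rcases h1 with e1 | e1 | e1 | e1 | e1 <;> rcases h2 with e2 | e2 | e2 | e2 | e2 <;>
          first
          | exact hj0 (by linear_combination e2)
          | exact hj1 (by linear_combination e2)
          | exact hj2 (by linear_combination e2)
          | exact hz1 (by linear_combination e1 - e2)
          | exact hz1 (by linear_combination e2 - e1)
          | exact hz1 (by linear_combination e1 + e2)
          | exact hz1 (by linear_combination -e1 - e2)
          | exact hz2 (by linear_combination e1 - e2)
          | exact hz2 (by linear_combination e2 - e1)
          | exact hz2 (by linear_combination e1 + e2)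
          | exact hz2 (by linear_combination -e1 - e2)
          | exact hz3 (by linear_combination e1 - e2)
          | exact hz3 (by linear_combination e2 - e1)
          | exact hz3 (by linear_combination e1 + e2)
          | exact hz3 (by linear_combination -e1 - e2)
          | exact hz4 (by linear_combination e1 - e2)
          | exact hz4 (by linear_combination e2 - e1)
          | exact hz4 (by linear_combination e1 + e2)
          | exact hz4 (by linear_combination -e1 - e2)
          | exact hz5 (by linear_combination e1 - e2)
          | exact hz5 (by linear_combination e2 - e1)
          | exact hz5 (by linear_combination e1 + e2)
          | exact hz5 (by linear_combination -e1 - e2)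
          | exact hz6 (by linear_combination e1 - e2)
          | exact hz6 (by linear_combination e2 - e1)
          | exact hz6 (by linear_combination e1 + e2)
          | exact hz6 (by linear_combination -e1 - e2)
      · by_cases hB : c s(i0 - 1, (i0 - 1) + 1) = false
        · obtain ⟨j, hjb, hj0, hj1, hj2⟩ := hwin (i0 - 1)
          have h1 := hnear i0 j hi0 hjb
          have h2 := hnear (i0 - 1) j hB hjb
          rcases h1 with e1 | e1 | e1 | e1 | e1 <;> rcases h2 with e2 | e2 | e2 | e2 | e2 <;>
            first
            | exact hj0 (by linear_combination e2)
            | exact hj1 (by linear_combination e2)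
            | exact hj2 (by linear_combination e2)
            | exact hA (by rw [show i0 - 2 = j from by linear_combination e1]; exact hjb)
            | exact hz1 (by linear_combination e1 - e2)
            | exact hz1 (by linear_combination e2 - e1)
            | exact hz1 (by linear_combination e1 + e2)
            | exact hz1 (by linear_combination -e1 - e2)
            | exact hz2 (by linear_combination e1 - e2)
            | exact hz2 (by linear_combination e2 - e1)
            | exact hz2 (by linear_combination e1 + e2)
            | exact hz2 (by linear_combination -e1 - e2)
            | exact hz3 (by linear_combination e1 - e2)
            | exact hz3 (by linear_combination e2 - e1)
            | exact hz3 (by linear_combination e1 + e2)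
            | exact hz3 (by linear_combination -e1 - e2)
            | exact hz4 (by linear_combination e1 - e2)
            | exact hz4 (by linear_combination e2 - e1)
            | exact hz4 (by linear_combination e1 + e2)
            | exact hz4 (by linear_combination -e1 - e2)
            | exact hz5 (by linear_combination e1 - e2)
            | exact hz5 (by linear_combination e2 - e1)
            | exact hz5 (by linear_combination e1 + e2)
            | exact hz5 (by linear_combination -e1 - e2)
            | exact hz6 (by linear_combination e1 - e2)
            | exact hz6 (by linear_combination e2 - e1)
            | exact hz6 (by linear_combination e1 + e2)
            | exact hz6 (by linear_combination -e1 - e2)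
        · obtain ⟨j, hjb, hj0, hj1, hj2⟩ := hwin i0
          have h1 := hnear i0 j hi0 hjb
          rcases h1 with e1 | e1 | e1 | e1 | e1 <;>
            first
            | exact hj0 (by linear_combination e1)
            | exact hj1 (by linear_combination e1)
            | exact hj2 (by linear_combination e1)
            | exact hA (by rw [show i0 - 2 = j from by linear_combination e1]; exact hjb)
            | exact hB (by rw [show i0 - 1 = j from by linear_combination e1]; exact hjb)
    obtain ⟨i, j, hi, hj, hd0, hd1, hd2, hdm1, hdm2⟩ := far
    obtain ⟨f, f00, f01, f10, f11⟩ := cyc_twoK2_emb hz1 hd0 hd1 hd2 hdm1 hdm2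
    refine ⟨f, ?_⟩
    intro x y hxy
    rw [twoK2_adj] at hxy
    obtain ⟨hxy1, hxy2⟩ := hxy
    obtain ⟨x1, x2⟩ := x
    obtain ⟨y1, y2⟩ := y
    simp only at hxy1 hxy2
    have hfin : ∀ z : Fin 2, z = 0 ∨ z = 1 := by decide
    have hi' : c s(i + 1, i) = false := by rw [Sym2.eq_swap]; exact hi
    have hj' : c s(j + 1, j) = false := by rw [Sym2.eq_swap]; exact hj
    rcases hfin x1 with rfl | rfl <;> rcases hfin x2 with rfl | rfl <;>
      rcases hfin y1 with rfl | rfl <;> rcases hfin y2 with rfl | rfl <;>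
      first
      | exact absurd hxy1 (by decide)
      | exact absurd rfl hxy2
      | (rw [f00, f01]; exact hi)
      | (rw [f01, f00]; exact hi')
      | (rw [f10, f11]; exact hj)
      | (rw [f11, f10]; exact hj')

lemma pathGraph_min {n : ℕ} (hn : 2 ≤ n) : ∀ v : Fin n, ∃ w, (pathGraph n).Adj v w := by
  intro v
  by_cases h : (v : ℕ) + 1 < n
  · exact ⟨⟨(v : ℕ) + 1, h⟩, pathGraph_adj.mpr (Or.inl rfl)⟩
  · have hv : (v : ℕ) < n := v.isLt
    refine ⟨⟨(v : ℕ) - 1, by omega⟩, pathGraph_adj.mpr (Or.inr ?_)⟩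
    simp only []
    omega

lemma part2 {n : ℕ} (hn : 5 ≤ n) : IR (pathGraph n) twoK2 = n + 2 := by
  haveI : Nonempty (Fin n) := ⟨⟨0, by omega⟩⟩
  have h1 := (part1 (pathGraph n) (pathGraph_min (by omega))).1
  rw [Fintype.card_fin] at h1
  have hub : IR (pathGraph n) twoK2 ≤ n + 2 := by
    refine Nat.sInf_le ?_
    have e : Fin (n+2) ≃ ZMod (n+2) := Equiv.cast rfl
    exact ⟨(cyc (n+2)).comap e.toEmbedding,
      (cyc_arrows hn).of_iso (SimpleGraph.Iso.comap e (cyc (n+2))).symm⟩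
  omega

theorem stmt4 :
    (∀ (β : Type) [Fintype β] [Nonempty β] (G : SimpleGraph β),
      (∀ v : β, ∃ w : β, G.Adj v w) →
      Fintype.card β + 2 ≤ IR G twoK2 ∧ IR G twoK2 ≤ 2 * Fintype.card β) ∧
    (∀ n : ℕ, 5 ≤ n → IR (SimpleGraph.pathGraph n) twoK2 = n + 2) ∧
    (∀ n : ℕ, 2 ≤ n → IR (⊤ : SimpleGraph (Fin n)) twoK2 = 2 * n) := by
  exact ⟨fun β _ _ G hmin => part1 G hmin, fun n hn => part2 hn, fun n hn => part3 hn⟩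
end

section
/- For every integer n ≥ 5, the cycle C_{n+2} strongly arrows (P_n, 2K_2): every red-blue edge colouring of the cycle on n+2 vertices contains either a red copy of the path P_n as an induced subgraph, or two blue edges at cyclic distance at least two (forming an induced blue 2K_2). -/
open SimpleGraph

private lemma hmodl {m : ℕ} (x : ℕ) (h : x < 2 * m) (h0 : 0 < m) :
    (x % m = x ∧ x < m) ∨ (x % m = x - m ∧ m ≤ x ∧ x - m < m) := by
  rcases Nat.lt_or_ge x m with h'|h'
  · exact Or.inl ⟨Nat.mod_eq_of_lt h', h'⟩
  · refine Or.inr ⟨?_, h', by omega⟩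
    rw [Nat.mod_eq_sub_mod h', Nat.mod_eq_of_lt (by omega)]

open Fin.CommRing in
private lemma adjval {n : ℕ} (u v : Fin (n+2)) :
    (SimpleGraph.cycleGraph (n+2)).Adj u v ↔
      ((v.val + 1) % (n+2) = u.val ∨ (u.val + 1) % (n+2) = v.val) := by
  rw [cycleGraph_adj]
  constructor
  · rintro (h | h)
    · left
      have : v + 1 = u := by rw [← h]; ring
      rw [← this, Fin.add_def]
      simp [Fin.val_one]
    · right
      have : u + 1 = v := by rw [← h]; ring
      rw [← this, Fin.add_def]
      simp [Fin.val_one]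
  · rintro (h | h)
    · left
      have : v + 1 = u := by
        rw [Fin.add_def]; apply Fin.ext; simpa [Fin.val_one] using h
      rw [← this]; ring
    · right
      have : u + 1 = v := by
        rw [Fin.add_def]; apply Fin.ext; simpa [Fin.val_one] using h
      rw [← this]; ring

private lemma buildEmb {n : ℕ} (i i' j j' : Fin (n+2))
    (adj01 : (cycleGraph (n+2)).Adj i i') (adj23 : (cycleGraph (n+2)).Adj j j')
    (nadj02 : ¬ (cycleGraph (n+2)).Adj i j) (nadj03 : ¬ (cycleGraph (n+2)).Adj i j')
    (nadj12 : ¬ (cycleGraph (n+2)).Adj i' j) (nadj13 : ¬ (cycleGraph (n+2)).Adj i' j')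
    (v02 : i ≠ j) (v03 : i ≠ j') (v12 : i' ≠ j) (v13 : i' ≠ j') :
    ∃ f : twoK2 ↪g cycleGraph (n+2),
      f (0,0) = i ∧ f (0,1) = i' ∧ f (1,0) = j ∧ f (1,1) = j' := by
  have v01 : i ≠ i' := adj01.ne
  have v23 : j ≠ j' := adj23.ne
  let f : Fin 2 × Fin 2 → Fin (n+2) := fun x =>
    match x with
    | (0,0) => i
    | (0,1) => i'
    | (1,0) => j
    | (1,1) => j'
  refine ⟨⟨⟨f, ?_⟩, @fun x y => ?_⟩, rfl, rfl, rfl, rfl⟩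
  · intro x y hxy
    obtain ⟨p, a⟩ := x
    obtain ⟨q, b⟩ := y
    fin_cases p <;> fin_cases q <;> fin_cases a <;> fin_cases b <;>
      simp_all [f] <;>
      first
        | rfl
        | exact absurd hxy v01 | exact absurd hxy.symm v01
        | exact absurd hxy v23 | exact absurd hxy.symm v23
        | exact absurd hxy v02 | exact absurd hxy.symm v02
        | exact absurd hxy v03 | exact absurd hxy.symm v03
        | exact absurd hxy v12 | exact absurd hxy.symm v12
        | exact absurd hxy v13 | exact absurd hxy.symm v13
  · obtain ⟨p, a⟩ := x
    obtain ⟨q, b⟩ := y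
    fin_cases p <;> fin_cases q <;> fin_cases a <;> fin_cases b <;>
      simp_all [f, twoK2, SimpleGraph.Copies, K2] <;>
      first
        | exact adj01 | exact adj01.symm
        | exact adj23 | exact adj23.symm
        | exact nadj02 | exact fun h => nadj02 h.symm
        | exact nadj03 | exact fun h => nadj03 h.symm
        | exact nadj12 | exact fun h => nadj12 h.symm
        | exact nadj13 | exact fun h => nadj13 h.symm
        | exact (cycleGraph (n+2)).irrefl

private lemma farEmb {n : ℕ} (hn : 5 ≤ n) (i j : Fin (n+2))
    (h3 : 3 ≤ (j - i).val) (h4 : (j - i).val ≤ n - 1) :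
    ∃ f : twoK2 ↪g cycleGraph (n+2),
      f (0,0) = i ∧ f (0,1) = i + 1 ∧ f (1,0) = j ∧ f (1,1) = j + 1 := by
  have h0 : 0 < n + 2 := by omega
  have hA : (i+1).val = (i.val + 1) % (n+2) := by rw [Fin.add_def]; simp [Fin.val_one]
  have hB : (j+1).val = (j.val + 1) % (n+2) := by rw [Fin.add_def]; simp [Fin.val_one]
  have hD : (j - i).val = ((n+2) - i.val + j.val) % (n+2) := by rw [Fin.sub_def]
  have hai := i.isLt
  have hbj := j.isLt
  have hmA := hmodl (i.val + 1) (by omega) h0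
  have hmB := hmodl (j.val + 1) (by omega) h0
  have hmA2 := hmodl ((i.val+1) % (n+2) + 1)
    (by have := Nat.mod_lt (i.val+1) h0; omega) h0
  have hmB2 := hmodl ((j.val+1) % (n+2) + 1)
    (by have := Nat.mod_lt (j.val+1) h0; omega) h0
  have hmD := hmodl ((n+2) - i.val + j.val) (by omega) h0
  rw [hD] at h3 h4
  exact buildEmb i (i+1) j (j+1)
    (by rw [adjval, hA]; omega) (by rw [adjval, hB]; omega)
    (by rw [adjval]; omega) (by rw [adjval, hB]; omega)
    (by rw [adjval, hA]; omega) (by rw [adjval, hA, hB]; omega)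
    (by rw [Ne, Fin.ext_iff]; omega) (by rw [Ne, Fin.ext_iff, hB]; omega)
    (by rw [Ne, Fin.ext_iff, hA]; omega) (by rw [Ne, Fin.ext_iff, hA, hB]; omega)

open Fin.CommRing in
private lemma pathEmb {n : ℕ} (hn : 5 ≤ n) (k : Fin (n+2)) :
    ∃ f : pathGraph n ↪g cycleGraph (n+2),
      ∀ a : Fin n, f a = k + ⟨(3 + a.val) % (n+2), Nat.mod_lt _ (by omega)⟩ := by
  have h0 : 0 < n+2 := by omega
  let g : Fin n → Fin (n+2) := fun a => k + ⟨(3 + a.val) % (n+2), Nat.mod_lt _ h0⟩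
  have hsub : ∀ x y : Fin (n+2), (k + x) - (k + y) = x - y := fun x y => by ring
  refine ⟨⟨⟨g, ?_⟩, @fun a b => ?_⟩, fun a => rfl⟩
  · intro a b hab
    have hva := a.isLt
    have hvb := b.isLt
    have hma := hmodl (3 + a.val) (by omega) h0
    have hmb := hmodl (3 + b.val) (by omega) h0
    have hoa := hmodl (k.val + (3 + a.val) % (n+2))
      (by have := Nat.mod_lt (3 + a.val) h0; omega) h0
    have hob := hmodl (k.val + (3 + b.val) % (n+2))
      (by have := Nat.mod_lt (3 + b.val) h0; omega) h0
    have hv := congrArg Fin.val hab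
    simp only [g, Fin.add_def] at hv
    apply Fin.ext
    omega
  · have hva := a.isLt
    have hvb := b.isLt
    have hma := hmodl (3 + a.val) (by omega) h0
    have hmb := hmodl (3 + b.val) (by omega) h0
    have hoa := hmodl ((n+2) - (3 + b.val) % (n+2) + (3 + a.val) % (n+2))
      (by have := Nat.mod_lt (3 + a.val) h0; omega) h0
    have hob := hmodl ((n+2) - (3 + a.val) % (n+2) + (3 + b.val) % (n+2))
      (by have := Nat.mod_lt (3 + b.val) h0; omega) h0
    show (cycleGraph (n+2)).Adj (g a) (g b) ↔ _
    simp only [g]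
    rw [cycleGraph_adj, pathGraph_adj, hsub, hsub]
    simp only [Fin.sub_def, Fin.ext_iff, Fin.val_one]
    omega

private instance : DecidableRel twoK2.Adj := fun x y =>
  decidable_of_iff (x.1 = y.1 ∧ x.2 ≠ y.2) Iff.rfl

open Fin.CommRing in
theorem stmt5 (n : ℕ) (hn : 5 ≤ n) :
    StronglyArrows (SimpleGraph.cycleGraph (n + 2)) (SimpleGraph.pathGraph n) twoK2 := by
  intro c
  have h0 : 0 < n + 2 := by omega
  by_cases hfar : ∃ i j : Fin (n+2), c s(i, i+1) = false ∧ c s(j, j+1) = false ∧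
      3 ≤ (j - i).val ∧ (j - i).val ≤ n - 1
  · right
    obtain ⟨i, j, hci, hcj, h3, h4⟩ := hfar
    obtain ⟨f, f00, f01, f10, f11⟩ := farEmb hn i j h3 h4
    have key : ∀ a b : Fin 2 × Fin 2, twoK2.Adj a b →
        (a = (0,0) ∧ b = (0,1)) ∨ (a = (0,1) ∧ b = (0,0)) ∨
        (a = (1,0) ∧ b = (1,1)) ∨ (a = (1,1) ∧ b = (1,0)) := by decide
    refine ⟨f, fun a b hab => ?_⟩
    rcases key a b hab with ⟨ha, hb⟩|⟨ha, hb⟩|⟨ha, hb⟩|⟨ha, hb⟩ <;> subst ha <;> subst hb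
    · rw [f00, f01]; exact hci
    · rw [f01, f00, Sym2.eq_swap]; exact hci
    · rw [f10, f11]; exact hcj
    · rw [f11, f10, Sym2.eq_swap]; exact hcj
  · left
    push_neg at hfar
    obtain ⟨k, hk⟩ : ∃ k : Fin (n+2), ∀ j : Fin (n+2),
        c s(j, j+1) = false → (j - k).val ≤ 2 := by
      by_cases hex : ∃ i : Fin (n+2), c s(i, i+1) = false
      · obtain ⟨i, hi⟩ := hex
        by_cases h2 : ∃ j0 : Fin (n+2), c s(j0, j0+1) = false ∧ (j0 - i).val = n
        · obtain ⟨j0, hj0, hj0v⟩ := h2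
          refine ⟨j0, fun j hj => ?_⟩
          have h1 := hfar i j hi hj
          have h2' := hfar j0 j hj0 hj
          have hrel : (j - j0).val = ((n+2) - (j0 - i).val + (j - i).val) % (n+2) := by
            rw [show j - j0 = (j - i) - (j0 - i) by ring, Fin.sub_def]
          rw [hj0v] at hrel
          have hm1 := hmodl ((n+2) - n + (j - i).val) (by have := (j - i).isLt; omega) h0
          have hx := (j - i).isLt
          omega
        · by_cases h3 : ∃ j0 : Fin (n+2), c s(j0, j0+1) = false ∧ (j0 - i).val = n+1
          · obtain ⟨j0, hj0, hj0v⟩ := h3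
            refine ⟨j0, fun j hj => ?_⟩
            have h1 := hfar i j hi hj
            have h2' := hfar j0 j hj0 hj
            have hn2 : (j - i).val ≠ n := fun h => h2 ⟨j, hj, h⟩
            have hrel : (j - j0).val = ((n+2) - (j0 - i).val + (j - i).val) % (n+2) := by
              rw [show j - j0 = (j - i) - (j0 - i) by ring, Fin.sub_def]
            rw [hj0v] at hrel
            have hm1 := hmodl ((n+2) - (n+1) + (j - i).val)
              (by have := (j - i).isLt; omega) h0
            have hx := (j - i).isLt
            omega
          · refine ⟨i, fun j hj => ?_⟩
            have h1 := hfar i j hi hj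
            have hn2 : (j - i).val ≠ n := fun h => h2 ⟨j, hj, h⟩
            have hn3 : (j - i).val ≠ n+1 := fun h => h3 ⟨j, hj, h⟩
            have hx := (j - i).isLt
            omega
      · exact ⟨0, fun j hj => absurd ⟨j, hj⟩ hex⟩
    obtain ⟨f, hf⟩ := pathEmb hn k
    refine ⟨f, ?_⟩
    suffices H : ∀ a b : Fin n, a.val + 1 = b.val → c s(f a, f b) = true by
      intro a b hab
      rw [pathGraph_adj] at hab
      rcases hab with h | h
      · exact H a b h
      · rw [Sym2.eq_swap]; exact H b a h
    intro a b hab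
    by_contra hc
    have hc' : c s(f a, f b) = false := by
      simpa using hc
    have hvb := b.isLt
    have hfb : f b = f a + 1 := by
      rw [hf a, hf b]
      apply Fin.ext
      simp only [Fin.add_def, Fin.val_one]
      have hm1 := hmodl (3 + a.val) (by omega) h0
      have hm2 := hmodl (3 + b.val) (by omega) h0
      have hm3 := hmodl (k.val + (3 + a.val) % (n+2))
        (by have := Nat.mod_lt (3 + a.val) h0; omega) h0
      have hm4 := hmodl (k.val + (3 + b.val) % (n+2))
        (by have := Nat.mod_lt (3 + b.val) h0; omega) h0
      have hm5 := hmodl ((k.val + (3 + a.val) % (n+2)) % (n+2) + 1)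
        (by have := Nat.mod_lt (k.val + (3 + a.val) % (n+2)) h0; omega) h0
      omega
    have hblue := hk (f a) (by rw [← hfb]; exact hc')
    have hsub : f a - k = (⟨(3 + a.val) % (n+2), Nat.mod_lt _ h0⟩ : Fin (n+2)) := by
      rw [hf a]; exact add_sub_cancel_left k _
    rw [hsub] at hblue
    have hblue' : (3 + a.val) % (n+2) ≤ 2 := hblue
    have hm := hmodl (3 + a.val) (by omega) h0
    omega
end

section
/- Every graph F on 3t vertices admits a red-blue edge colouring with no red induced path P_4 and no blue induced matching of t edges; hence IR(P_4, tK_2) ≥ 3t + 1. -/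
open SimpleGraph

open Finset

set_option linter.unusedSectionVars false

section MainLemma

variable {V : Type*} [Fintype V] [DecidableEq V]

def GoodCol (F : SimpleGraph V) (s : Finset V) : Prop :=
  ∃ r : V → V → Bool, (∀ x y, r x y = r y x) ∧
    (∀ a b c d : V, a ∈ s → b ∈ s → c ∈ s → d ∈ s →
      F.Adj a b → F.Adj b c → F.Adj c d → a ≠ c → b ≠ d → a ≠ d →
      r a b = true → r b c = true → r c d = true → False) ∧
    (∀ m : ℕ, (s.card - 1) / 3 + 1 ≤ m → ∀ p : Fin m → V × V,
      (∀ i, (p i).1 ∈ s) → (∀ i, (p i).2 ∈ s) →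
      (∀ i, F.Adj (p i).1 (p i).2) →
      (∀ i, r (p i).1 (p i).2 = false) →
      (∀ i j : Fin m, ∀ x y : V, i ≠ j → (x = (p i).1 ∨ x = (p i).2) →
        (y = (p j).1 ∨ y = (p j).2) → x ≠ y ∧ ¬ F.Adj x y) → False)

lemma good_base (F : SimpleGraph V) (s : Finset V) (h : s.card ≤ 3) : GoodCol F s := by
  refine ⟨fun _ _ => true, fun _ _ => rfl, ?_, ?_⟩
  · intro a b c d ha hb hc hd hab hbc hcd hac hbd had _ _ _
    have h1 : ({a, b, c, d} : Finset V) ⊆ s := by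
      intro x hx
      simp only [mem_insert, mem_singleton] at hx
      rcases hx with rfl | rfl | rfl | rfl <;> assumption
    have h2 : ({a, b, c, d} : Finset V).card = 4 := by
      rw [card_insert_of_notMem (by simp [hab.ne, hac, had]),
        card_insert_of_notMem (by simp [hbc.ne, hbd]),
        card_insert_of_notMem (by simp [hcd.ne]), card_singleton]
    have := card_le_card h1
    omega
  · intro m hm p _ _ _ hblue _
    have : (0 : ℕ) < m := by omega
    exact absurd (hblue ⟨0, this⟩) (by simp)


lemma good_absorb (F : SimpleGraph V) (s : Finset V) (h4 : 4 ≤ s.card)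
    (a b w : V) (ha : a ∈ s) (hb : b ∈ s) (hw : w ∈ s) (hab : F.Adj a b)
    (hwa : w ≠ a) (hwb : w ≠ b)
    (hN : ∀ v ∈ s, F.Adj w v → v = a ∨ v = b)
    (IH : GoodCol F (s \ {w, a, b})) : GoodCol F s := by
  obtain ⟨r', hsymm', hred', hblue'⟩ := IH
  set s' := s \ {w, a, b} with hs'
  have hXsub : ({w, a, b} : Finset V) ⊆ s := by
    intro x hx; simp only [mem_insert, mem_singleton] at hx
    rcases hx with rfl | rfl | rfl <;> assumption
  have hXcard : ({w, a, b} : Finset V).card = 3 := by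
    rw [card_insert_of_notMem (by simp [hwa, hwb]),
      card_insert_of_notMem (by simp [hab.ne]), card_singleton]
  have hcard : s'.card = s.card - 3 := by rw [hs', card_sdiff_of_subset hXsub, hXcard]
  refine ⟨fun x y => if x ∈ s' ∧ y ∈ s' then r' x y else false, ?_, ?_, ?_⟩
  · intro x y
    by_cases hx : x ∈ s' <;> by_cases hy : y ∈ s' <;> simp [hx, hy, hsymm' x y]
  · intro a' b' c' d' ha' hb' hc' hd' h1 h2 h3 h4' h5 h6 hr1 hr2 hr3
    dsimp only at hr1 hr2 hr3
    have m1 : a' ∈ s' ∧ b' ∈ s' := by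
      by_contra hc; rw [if_neg hc] at hr1; exact Bool.false_ne_true hr1
    have m2 : b' ∈ s' ∧ c' ∈ s' := by
      by_contra hc; rw [if_neg hc] at hr2; exact Bool.false_ne_true hr2
    have m3 : c' ∈ s' ∧ d' ∈ s' := by
      by_contra hc; rw [if_neg hc] at hr3; exact Bool.false_ne_true hr3
    rw [if_pos m1] at hr1; rw [if_pos m2] at hr2; rw [if_pos m3] at hr3
    exact hred' a' b' c' d' m1.1 m1.2 m2.2 m3.2 h1 h2 h3 h4' h5 h6 hr1 hr2 hr3
  · intro m hm p hp1 hp2 hpadj hpblue hsep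
    -- at most one blue matching edge meets {w, a, b}
    have hwcase : ∀ (i j : Fin m) (y : V), i ≠ j → ((p i).1 = w ∨ (p i).2 = w) →
        (y = (p j).1 ∨ y = (p j).2) → (y = a ∨ y = b) → False := by
      intro i j y hij hwend hy hyab
      have hz : ∃ z : V, F.Adj w z ∧ z ∈ s ∧ (z = (p i).1 ∨ z = (p i).2) := by
        rcases hwend with h | h
        · exact ⟨(p i).2, by rw [← h]; exact hpadj i, hp2 i, Or.inr rfl⟩
        · exact ⟨(p i).1, by rw [← h]; exact (hpadj i).symm, hp1 i, Or.inl rfl⟩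
      obtain ⟨z, hzadj, hzs, hzend⟩ := hz
      have hzab : z = a ∨ z = b := hN z hzs hzadj
      obtain ⟨hne, hnadj⟩ := hsep i j z y hij hzend hy
      rcases hzab with rfl | rfl <;> rcases hyab with rfl | rfl
      · exact hne rfl
      · exact hnadj hab
      · exact hnadj hab.symm
      · exact hne rfl
    have key : ∀ (i j : Fin m) (x y : V), i ≠ j → (x = (p i).1 ∨ x = (p i).2) →
        (x = w ∨ x = a ∨ x = b) → (y = (p j).1 ∨ y = (p j).2) →
        (y = w ∨ y = a ∨ y = b) → False := by
      intro i j x y hij hx hxX hy hyX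
      obtain ⟨hxy, hnadj⟩ := hsep i j x y hij hx hy
      have hx' : (p i).1 = x ∨ (p i).2 = x := hx.imp Eq.symm Eq.symm
      have hy' : (p j).1 = y ∨ (p j).2 = y := hy.imp Eq.symm Eq.symm
      rcases hxX with rfl | rfl | rfl <;> rcases hyX with rfl | rfl | rfl
      · exact hxy rfl
      · exact hwcase i j y hij hx' hy (Or.inl rfl)
      · exact hwcase i j y hij hx' hy (Or.inr rfl)
      · exact hwcase j i x hij.symm hy' hx (Or.inl rfl)
      · exact hxy rfl
      · exact hnadj hab
      · exact hwcase j i x hij.symm hy' hx (Or.inr rfl)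
      · exact hnadj hab.symm
      · exact hxy rfl
    set bad : Fin m → Prop := fun i =>
      ((p i).1 = w ∨ (p i).1 = a ∨ (p i).1 = b) ∨
      ((p i).2 = w ∨ (p i).2 = a ∨ (p i).2 = b) with hbaddef
    have hbad : ∀ i j : Fin m, bad i → bad j → i = j := by
      intro i j hi hj
      by_contra hij
      rcases hi with hi | hi <;> rcases hj with hj | hj
      · exact key i j _ _ hij (Or.inl rfl) hi (Or.inl rfl) hj
      · exact key i j _ _ hij (Or.inl rfl) hi (Or.inr rfl) hj
      · exact key i j _ _ hij (Or.inr rfl) hi (Or.inl rfl) hj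
      · exact key i j _ _ hij (Or.inr rfl) hi (Or.inr rfl) hj
    classical
    have hbadcard : (univ.filter bad).card ≤ 1 :=
      card_le_one.mpr (fun i hi j hj => hbad i j (mem_filter.mp hi).2 (mem_filter.mp hj).2)
    have hTcard : m - 1 ≤ (univ.filter (fun i => ¬ bad i)).card := by
      have := card_filter_add_card_filter_not (s := (univ : Finset (Fin m))) (p := bad)
      simp only [card_univ, Fintype.card_fin] at this
      omega
    obtain ⟨T', hT'sub, hT'card⟩ := exists_subset_card_eq hTcard
    have hm' : (s'.card - 1) / 3 + 1 ≤ m - 1 := by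
      rw [hcard]; omega
    set e := T'.orderIsoOfFin hT'card with he
    have hgood : ∀ k : Fin (m - 1), ¬ bad ((e k : Fin m)) := by
      intro k
      have := hT'sub (e k).2
      exact (mem_filter.mp this).2
    have hmem1 : ∀ k : Fin (m - 1), (p (e k : Fin m)).1 ∈ s' := by
      intro k
      have hg := hgood k
      simp only [hbaddef, not_or] at hg
      apply mem_sdiff.mpr
      refine ⟨hp1 _, ?_⟩
      simp only [mem_insert, mem_singleton, not_or]
      exact hg.1
    have hmem2 : ∀ k : Fin (m - 1), (p (e k : Fin m)).2 ∈ s' := by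
      intro k
      have hg := hgood k
      simp only [hbaddef, not_or] at hg
      apply mem_sdiff.mpr
      refine ⟨hp2 _, ?_⟩
      simp only [mem_insert, mem_singleton, not_or]
      exact hg.2
    refine hblue' (m - 1) hm' (fun k => p (e k)) (fun k => hmem1 k) (fun k => hmem2 k)
      (fun k => hpadj _) ?_ ?_
    · intro k
      have hpb := hpblue (e k : Fin m)
      dsimp only at hpb ⊢
      rwa [if_pos ⟨hmem1 k, hmem2 k⟩] at hpb
    · intro k l x y hkl hx hy
      refine hsep (e k) (e l) x y ?_ hx hy
      intro hval
      exact hkl (e.injective (Subtype.ext hval))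


lemma good_matching (F : SimpleGraph V) (s : Finset V)
    (hHC : ¬ ∃ a ∈ s, ∃ b ∈ s, ∃ w ∈ s, F.Adj a b ∧ w ≠ a ∧ w ≠ b ∧
      ∀ v ∈ s, F.Adj w v → v = a ∨ v = b) :
    GoodCol F s := by
  classical
  set P : Finset (V × V) → Prop := fun M =>
    (∀ e ∈ M, F.Adj e.1 e.2 ∧ e.1 ∈ s ∧ e.2 ∈ s) ∧
    (∀ e ∈ M, ∀ f ∈ M, e ≠ f → ∀ x y : V, (x = e.1 ∨ x = e.2) →
      (y = f.1 ∨ y = f.2) → x ≠ y) with hPdef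
  obtain ⟨M, hMmem, hMmax⟩ := Finset.exists_max_image
    ((Finset.univ : Finset (V × V)).powerset.filter P) Finset.card
    ⟨∅, by simp [hPdef]⟩
  have hMP : P M := (mem_filter.mp hMmem).2
  have hMmax' : ∀ M', P M' → M'.card ≤ M.card := fun M' h =>
    hMmax M' (mem_filter.mpr ⟨mem_powerset.mpr (subset_univ _), h⟩)
  set Cov : Finset V := M.biUnion (fun e => {e.1, e.2}) with hCovdef
  have hCovMem : ∀ x : V, x ∈ Cov ↔ ∃ e, e ∈ M ∧ (x = e.1 ∨ x = e.2) := by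
    intro x
    simp [hCovdef, Finset.mem_biUnion, Finset.mem_insert, Finset.mem_singleton]
  have hCovsub : Cov ⊆ s := by
    intro x hx
    obtain ⟨e, he, hxe⟩ := (hCovMem x).mp hx
    rcases hxe with rfl | rfl
    · exact (hMP.1 e he).2.1
    · exact (hMP.1 e he).2.2
  have hCovcard : Cov.card = 2 * M.card := by
    rw [hCovdef, card_biUnion]
    · rw [Finset.sum_congr rfl (fun e he => card_pair ((hMP.1 e he).1.ne)),
        Finset.sum_const, smul_eq_mul, mul_comm]
    · intro e he f hf hef
      rw [Function.onFun, Finset.disjoint_left]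
      intro x hx1 hx2
      simp only [mem_insert, mem_singleton] at hx1 hx2
      exact (hMP.2 e he f hf hef x x hx1 hx2) rfl
  set U : Finset V := s \ Cov with hUdef
  have hF1 : ∀ x y : V, x ∈ U → y ∈ U → ¬ F.Adj x y := by
    intro x y hx hy hadj
    have hxU := mem_sdiff.mp hx
    have hyU := mem_sdiff.mp hy
    have hnotmem : (x, y) ∉ M := fun h => hxU.2 ((hCovMem x).mpr ⟨(x,y), h, Or.inl rfl⟩)
    have hP' : P (insert (x,y) M) := by
      constructor
      · intro e he
        rcases mem_insert.mp he with rfl | he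
        · exact ⟨hadj, hxU.1, hyU.1⟩
        · exact hMP.1 e he
      · intro e he f hf hef x' y' hx' hy'
        rcases mem_insert.mp he with rfl | he <;> rcases mem_insert.mp hf with rfl | hf
        · exact absurd rfl hef
        · intro h
          subst h
          have hcov : x' ∈ Cov := (hCovMem x').mpr ⟨f, hf, hy'⟩
          rcases hx' with rfl | rfl
          · exact hxU.2 hcov
          · exact hyU.2 hcov
        · intro h
          subst h
          have hcov : x' ∈ Cov := (hCovMem x').mpr ⟨e, he, hx'⟩
          rcases hy' with rfl | rfl
          · exact hxU.2 hcov
          · exact hyU.2 hcov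
        · exact hMP.2 e he f hf hef x' y' hx' hy'
    have hcard := hMmax' _ hP'
    rw [card_insert_of_notMem hnotmem] at hcard
    omega
  refine ⟨fun x y => decide ((x, y) ∈ M ∨ (y, x) ∈ M), ?_, ?_, ?_⟩
  · intro x y
    exact decide_eq_decide.mpr or_comm
  · intro a b c d _ _ _ _ hab hbc _ hac _ _ hr1 hr2 _
    have h1 : (a, b) ∈ M ∨ (b, a) ∈ M := of_decide_eq_true hr1
    have h2 : (b, c) ∈ M ∨ (c, b) ∈ M := of_decide_eq_true hr2
    have key : ∀ (e f : V × V), e ∈ M → f ∈ M → (b = e.1 ∨ b = e.2) →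
        (b = f.1 ∨ b = f.2) → e = f := by
      intro e f he hf hbe hbf
      by_contra hef
      exact (hMP.2 e he f hf hef b b hbe hbf) rfl
    rcases h1 with h1 | h1 <;> rcases h2 with h2 | h2
    · have h := key _ _ h1 h2 (Or.inr rfl) (Or.inl rfl)
      rw [Prod.mk.injEq] at h
      exact hab.ne h.1
    · have h := key _ _ h1 h2 (Or.inr rfl) (Or.inr rfl)
      rw [Prod.mk.injEq] at h
      exact hac h.1
    · have h := key _ _ h1 h2 (Or.inl rfl) (Or.inl rfl)
      rw [Prod.mk.injEq] at h
      exact hac h.2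
    · have h := key _ _ h1 h2 (Or.inl rfl) (Or.inr rfl)
      rw [Prod.mk.injEq] at h
      exact hab.ne h.2
  · intro m hm p hp1 hp2 hpadj hpblue hsep
    have hnotM : ∀ i : Fin m, ((p i).1, (p i).2) ∉ M ∧ ((p i).2, (p i).1) ∉ M := by
      intro i
      have h := hpblue i
      rw [decide_eq_false_iff_not, not_or] at h
      exact h
    set q : Fin m × Fin 2 → V := fun ik => if ik.2 = 0 then (p ik.1).1 else (p ik.1).2
      with hqdef
    have hq0 : ∀ i, q (i, 0) = (p i).1 := by intro i; simp [hqdef]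
    have hq1 : ∀ i, q (i, 1) = (p i).2 := by intro i; simp [hqdef]
    have h2cases : ∀ k : Fin 2, k = 0 ∨ k = 1 := by decide
    have hqend : ∀ ik : Fin m × Fin 2, q ik = (p ik.1).1 ∨ q ik = (p ik.1).2 := by
      intro ⟨i, k⟩
      rcases h2cases k with rfl | rfl
      · exact Or.inl (hq0 i)
      · exact Or.inr (hq1 i)
    have hqs : ∀ ik : Fin m × Fin 2, q ik ∈ s := by
      intro ik
      rcases hqend ik with h | h
      · rw [h]; exact hp1 _
      · rw [h]; exact hp2 _
    have hqdist : ∀ a b : Fin m × Fin 2, a ≠ b → q a ≠ q b := by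
      intro ⟨i, k⟩ ⟨j, l⟩ hne
      by_cases hij : i = j
      · subst hij
        have hkl : k ≠ l := fun h => hne (by rw [h])
        rcases h2cases k with rfl | rfl <;> rcases h2cases l with rfl | rfl
        · exact absurd rfl hkl
        · rw [hq0, hq1]; exact (hpadj i).ne
        · rw [hq1, hq0]; exact (hpadj i).ne'
        · exact absurd rfl hkl
      · exact (hsep i j _ _ hij (hqend (i,k)) (hqend (j,l))).1
    have hCovE : ∀ x, x ∈ Cov → ∃ e, e ∈ M ∧ (x = e.1 ∨ x = e.2) :=
      fun x h => (hCovMem x).mp h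
    set Φ : Fin m × Fin 2 → (↥M ⊕ ↥U) := fun ik =>
      if h : q ik ∈ Cov then Sum.inl ⟨(hCovE _ h).choose, (hCovE _ h).choose_spec.1⟩
      else Sum.inr ⟨q ik, mem_sdiff.mpr ⟨hqs ik, h⟩⟩ with hΦdef
    have hΦinj : Function.Injective Φ := by
      intro a b hab
      by_contra hne
      by_cases h1 : q a ∈ Cov <;> by_cases h2 : q b ∈ Cov
      · rw [hΦdef] at hab
        simp only [dif_pos h1, dif_pos h2, Sum.inl.injEq, Subtype.mk.injEq] at hab
        have spec1 := (hCovE _ h1).choose_spec.2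
        have spec2 := (hCovE _ h2).choose_spec.2
        have heM := (hCovE _ h1).choose_spec.1
        rw [← hab] at spec2
        set e := (hCovE _ h1).choose with hedef
        have hqab : q a ≠ q b := hqdist a b hne
        have he12 : e.1 ≠ e.2 := (hMP.1 e heM).1.ne
        obtain ⟨i, k⟩ := a
        obtain ⟨j, l⟩ := b
        by_cases hij : i = j
        · subst hij
          rcases hqend (i,k) with hA | hA <;> rcases hqend (i,l) with hB | hB
          · exact hqab (hA.trans hB.symm)
          · rcases spec1 with hC | hC <;> rcases spec2 with hD | hD
            · exact hqab (hC.trans hD.symm)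
            · exact (hnotM i).1 (by
                rw [hA.symm.trans hC, hB.symm.trans hD, Prod.mk.eta]; exact heM)
            · exact (hnotM i).2 (by
                rw [hB.symm.trans hD, hA.symm.trans hC, Prod.mk.eta]; exact heM)
            · exact hqab (hC.trans hD.symm)
          · rcases spec1 with hC | hC <;> rcases spec2 with hD | hD
            · exact hqab (hC.trans hD.symm)
            · exact (hnotM i).2 (by
                rw [hA.symm.trans hC, hB.symm.trans hD, Prod.mk.eta]; exact heM)
            · exact (hnotM i).1 (by
                rw [hB.symm.trans hD, hA.symm.trans hC, Prod.mk.eta]; exact heM)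
            · exact hqab (hC.trans hD.symm)
          · exact hqab (hA.trans hB.symm)
        · have hnadj := (hsep i j _ _ hij (hqend (i,k)) (hqend (j,l))).2
          rcases spec1 with hA | hA <;> rcases spec2 with hB | hB
          · exact hqab (hA.trans hB.symm)
          · exact hnadj (by rw [hA, hB]; exact (hMP.1 e heM).1)
          · exact hnadj (by rw [hA, hB]; exact (hMP.1 e heM).1.symm)
          · exact hqab (hA.trans hB.symm)
      · rw [hΦdef] at hab
        simp only [dif_pos h1, dif_neg h2] at hab
        exact (Sum.inl_ne_inr hab).elim
      · rw [hΦdef] at hab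
        simp only [dif_neg h1, dif_pos h2] at hab
        exact (Sum.inr_ne_inl hab).elim
      · rw [hΦdef] at hab
        simp only [dif_neg h1, dif_neg h2, Sum.inr.injEq, Subtype.mk.injEq] at hab
        exact hqdist a b hne hab
    have hcard1 : m * 2 ≤ M.card + U.card := by
      have h := Fintype.card_le_of_injective Φ hΦinj
      simpa [Fintype.card_sum, Fintype.card_coe, Fintype.card_prod, Fintype.card_fin] using h
    have hpinj : Function.Injective p := by
      intro i j h
      by_contra hne
      exact (hsep i j (p i).1 (p j).1 hne (Or.inl rfl) (Or.inl rfl)).1 (by rw [h])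
    have hWP : P (Finset.univ.image p) := by
      constructor
      · intro e he
        obtain ⟨i, _, rfl⟩ := mem_image.mp he
        exact ⟨hpadj i, hp1 i, hp2 i⟩
      · intro e he f hf hef x y hx hy
        obtain ⟨i, _, rfl⟩ := mem_image.mp he
        obtain ⟨j, _, rfl⟩ := mem_image.mp hf
        have hij : i ≠ j := fun h => hef (by rw [h])
        exact (hsep i j x y hij hx hy).1
    have hmM : m ≤ M.card := by
      have h := hMmax' _ hWP
      rwa [Finset.card_image_of_injective _ hpinj, card_univ, Fintype.card_fin] at h
    have hUcard : U.card = s.card - 2 * M.card := by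
      rw [hUdef, card_sdiff_of_subset hCovsub, hCovcard]
    have hCovle : 2 * M.card ≤ s.card := by
      have h := card_le_card hCovsub
      omega
    have hMcm : M.card = m ∧ U.card = m ∧ s.card = 3 * m := by omega
    have hΦbij : Function.Bijective Φ :=
      (Fintype.bijective_iff_injective_and_card Φ).mpr ⟨hΦinj, by
        simp only [Fintype.card_sum, Fintype.card_coe, Fintype.card_prod, Fintype.card_fin]
        omega⟩
    have hUW : ∀ u : V, u ∈ U → ∃ i : Fin m, u = (p i).1 ∨ u = (p i).2 := by
      intro u hu
      obtain ⟨ik, hik⟩ := hΦbij.2 (Sum.inr ⟨u, hu⟩)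
      by_cases h : q ik ∈ Cov
      · simp only [hΦdef, dif_pos h] at hik
        exact (Sum.inl_ne_inr hik).elim
      · simp only [hΦdef, dif_neg h, Sum.inr.injEq, Subtype.mk.injEq] at hik
        exact ⟨ik.1, hik ▸ hqend ik⟩
    have hMW : ∀ e : V × V, e ∈ M → ∃ (j : Fin m) (x : V),
        (x = (p j).1 ∨ x = (p j).2) ∧ (x = e.1 ∨ x = e.2) := by
      intro e he
      obtain ⟨jl, hjl⟩ := hΦbij.2 (Sum.inl ⟨e, he⟩)
      by_cases h : q jl ∈ Cov
      · simp only [hΦdef, dif_pos h, Sum.inl.injEq, Subtype.mk.injEq] at hjl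
        have spec := (hCovE _ h).choose_spec.2
        rw [hjl] at spec
        exact ⟨jl.1, q jl, hqend jl, spec⟩
      · simp only [hΦdef, dif_neg h] at hjl
        exact (Sum.inr_ne_inl hjl).elim
    have hψ : ∀ u : {x // x ∈ U}, ∃ i : Fin m, (u : V) = (p i).1 ∨ (u : V) = (p i).2 :=
      fun u => hUW u u.2
    set ψ : {x // x ∈ U} → Fin m := fun u => (hψ u).choose with hψdef
    have hψspec : ∀ u : {x // x ∈ U}, ((u : V) = (p (ψ u)).1 ∨ (u : V) = (p (ψ u)).2) :=
      fun u => (hψ u).choose_spec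
    have hψinj : Function.Injective ψ := by
      intro u v huv
      by_contra hne
      have hval : (u : V) ≠ (v : V) := fun h => hne (Subtype.ext h)
      have h1 := hψspec u
      have h2 := hψspec v
      rw [huv] at h1
      rcases h1 with h1 | h1 <;> rcases h2 with h2 | h2
      · exact hval (h1.trans h2.symm)
      · exact hF1 _ _ u.2 v.2 (by rw [h1, h2]; exact hpadj _)
      · exact hF1 _ _ u.2 v.2 (by rw [h1, h2]; exact (hpadj _).symm)
      · exact hval (h1.trans h2.symm)
    have hψbij : Function.Bijective ψ :=
      (Fintype.bijective_iff_injective_and_card ψ).mpr ⟨hψinj, by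
        simp only [Fintype.card_coe, Fintype.card_fin]
        omega⟩
    have hUedge : ∀ j : Fin m, ∃ u : V, u ∈ U ∧ (u = (p j).1 ∨ u = (p j).2) := by
      intro j
      obtain ⟨u, hu⟩ := hψbij.2 j
      exact ⟨u, u.2, hu ▸ hψspec u⟩
    have hUpos : 0 < U.card := by omega
    obtain ⟨u0, hu0⟩ := card_pos.mp hUpos
    obtain ⟨i, hi⟩ := hUW u0 hu0
    have hu0s : u0 ∈ s := (mem_sdiff.mp hu0).1
    have hu0nc : u0 ∉ Cov := (mem_sdiff.mp hu0).2
    obtain ⟨c1, hadjuc, hc1end⟩ : ∃ c, F.Adj u0 c ∧ (c = (p i).1 ∨ c = (p i).2) := by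
      rcases hi with hi' | hi'
      · exact ⟨(p i).2, by rw [hi']; exact hpadj i, Or.inr rfl⟩
      · exact ⟨(p i).1, by rw [hi']; exact (hpadj i).symm, Or.inl rfl⟩
    have hc1s : c1 ∈ s := by
      rcases hc1end with h | h
      · rw [h]; exact hp1 i
      · rw [h]; exact hp2 i
    have hc1Cov : c1 ∈ Cov := by
      by_contra h
      exact hF1 u0 c1 hu0 (mem_sdiff.mpr ⟨hc1s, h⟩) hadjuc
    obtain ⟨E, hEM, hc1E⟩ := hCovE c1 hc1Cov
    obtain ⟨d, hadjc1d, hdE⟩ : ∃ d, F.Adj c1 d ∧ (d = E.1 ∨ d = E.2) := by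
      rcases hc1E with h | h
      · exact ⟨E.2, by rw [h]; exact (hMP.1 E hEM).1, Or.inr rfl⟩
      · exact ⟨E.1, by rw [h]; exact (hMP.1 E hEM).1.symm, Or.inl rfl⟩
    have hds : d ∈ s := by
      rcases hdE with h | h
      · rw [h]; exact (hMP.1 E hEM).2.1
      · rw [h]; exact (hMP.1 E hEM).2.2
    have hu0c1 : u0 ≠ c1 := hadjuc.ne
    have hu0d : u0 ≠ d := by
      intro h
      exact hu0nc (by rw [h]; exact (hCovMem d).mpr ⟨E, hEM, hdE⟩)
    have hcoord : ∀ y', (y' = (p i).1 ∨ y' = (p i).2) → y' ≠ u0 → y' = c1 := by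
      intro y' h1 hneq
      rcases h1 with h1 | h1 <;> rcases hi with h2 | h2 <;> rcases hc1end with h3 | h3
      · exact absurd (h1.trans h2.symm) hneq
      · exact absurd (h1.trans h2.symm) hneq
      · exact h1.trans h3.symm
      · exact absurd (h2.trans h3.symm) hu0c1
      · exact absurd (h2.trans h3.symm) hu0c1
      · exact h1.trans h3.symm
      · exact absurd (h1.trans h2.symm) hneq
      · exact absurd (h1.trans h2.symm) hneq
    apply hHC
    refine ⟨c1, hc1s, d, hds, u0, hu0s, hadjc1d, hu0c1, hu0d, ?_⟩
    intro v hv hadj_uv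
    by_contra hvcd
    push_neg at hvcd
    obtain ⟨hvc1, hvd⟩ := hvcd
    have hvCov : v ∈ Cov := by
      by_contra h
      exact hF1 u0 v hu0 (mem_sdiff.mpr ⟨hv, h⟩) hadj_uv
    obtain ⟨E', hE'M, hvE'⟩ := hCovE v hvCov
    have hEE' : E' ≠ E := by
      intro h
      rw [h] at hvE'
      rcases hc1E with h1 | h1 <;> rcases hdE with h2 | h2 <;> rcases hvE' with h3 | h3
      · exact hadjc1d.ne (h1.trans h2.symm)
      · exact hadjc1d.ne (h1.trans h2.symm)
      · exact hvc1 (h3.trans h1.symm)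
      · exact hvd (h3.trans h2.symm)
      · exact hvd (h3.trans h2.symm)
      · exact hvc1 (h3.trans h1.symm)
      · exact hadjc1d.ne (h1.trans h2.symm)
      · exact hadjc1d.ne (h1.trans h2.symm)
    obtain ⟨j, x, hxend, hxE'⟩ := hMW E' hE'M
    have hxCov : x ∈ Cov := (hCovMem x).mpr ⟨E', hE'M, hxE'⟩
    have hxu0 : x ≠ u0 := fun h => hu0nc (h ▸ hxCov)
    by_cases hxv : x = v
    · by_cases hij : i = j
      · rw [← hij] at hxend
        exact hvc1 (hcoord v (hxv ▸ hxend) hadj_uv.ne')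
      · exact (hsep i j u0 v hij hi (hxv ▸ hxend)).2 hadj_uv
    · have hij : i ≠ j := by
        intro h
        rw [← h] at hxend
        exact (hMP.2 E' hE'M E hEM hEE' x c1 hxE' hc1E) (hcoord x hxend hxu0)
      obtain ⟨z, hzU, hzend⟩ := hUedge j
      have hznc : z ∉ Cov := (mem_sdiff.mp hzU).2
      have hzs : z ∈ s := (mem_sdiff.mp hzU).1
      have hzx : z ≠ x := fun h => hznc (h ▸ hxCov)
      have hadjxz : F.Adj x z := by
        rcases hxend with h1 | h1 <;> rcases hzend with h2 | h2
        · exact absurd (h2.trans h1.symm) hzx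
        · exact (by rw [h1, h2]; exact hpadj j)
        · exact (by rw [h1, h2]; exact (hpadj j).symm)
        · exact absurd (h2.trans h1.symm) hzx
      have hu0x : u0 ≠ x := (hsep i j u0 x hij hi hxend).1
      have hu0z : u0 ≠ z := (hsep i j u0 z hij hi hzend).1
      have hvx : v ≠ x := fun h => hxv h.symm
      have hvz : v ≠ z := fun h => hznc (h ▸ hvCov)
      have hxs : x ∈ s := by
        rcases hxE' with h | h
        · rw [h]; exact (hMP.1 E' hE'M).2.1
        · rw [h]; exact (hMP.1 E' hE'M).2.2
      have hvE'mem : ∀ e ∈ M, e ≠ E' → ∀ y', (y' = e.1 ∨ y' = e.2) → y' ≠ v :=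
        fun e he hne y' hy' => hMP.2 e he E' hE'M hne y' v hy' hvE'
      have hxE'mem : ∀ e ∈ M, e ≠ E' → ∀ y', (y' = e.1 ∨ y' = e.2) → y' ≠ x :=
        fun e he hne y' hy' => hMP.2 e he E' hE'M hne y' x hy' hxE'
      have hNoCov : ∀ t : V, t ∉ Cov → ∀ e ∈ M, ∀ y', (y' = e.1 ∨ y' = e.2) → t ≠ y' := by
        intro t ht e he y' hy' hteq
        exact ht (by rw [hteq]; exact (hCovMem y').mpr ⟨e, he, hy'⟩)
      set M' := insert (u0, v) (insert (x, z) (M.erase E')) with hM'def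
      have hnm1 : (u0, v) ∉ insert (x, z) (M.erase E') := by
        intro h
        rcases mem_insert.mp h with h | h
        · exact hu0x (congrArg Prod.fst h)
        · exact hu0nc ((hCovMem u0).mpr ⟨(u0,v), mem_of_mem_erase h, Or.inl rfl⟩)
      have hnm2 : (x, z) ∉ M.erase E' := by
        intro h
        exact hznc ((hCovMem z).mpr ⟨(x,z), mem_of_mem_erase h, Or.inr rfl⟩)
      have hM'card : M'.card = M.card + 1 := by
        rw [hM'def, card_insert_of_notMem hnm1, card_insert_of_notMem hnm2,
          card_erase_of_mem hE'M]
        have hpos : 0 < M.card := card_pos.mpr ⟨E', hE'M⟩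
        omega
      have hM'P : P M' := by
        constructor
        · intro e he
          rcases mem_insert.mp he with rfl | he
          · exact ⟨hadj_uv, hu0s, hv⟩
          · rcases mem_insert.mp he with rfl | he
            · exact ⟨hadjxz, hxs, hzs⟩
            · exact hMP.1 e (mem_of_mem_erase he)
        · intro e he f hf hef x' y' hx' hy'
          rcases mem_insert.mp he with he1 | he'
          · rcases mem_insert.mp hf with hf1 | hf'
            · exact absurd (he1.trans hf1.symm) hef
            · rcases mem_insert.mp hf' with hf1 | hf2
              · rw [he1] at hx'
                rw [hf1] at hy'
                rcases hx' with rfl | rfl <;> rcases hy' with rfl | rfl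
                · exact hu0x
                · exact hu0z
                · exact hvx
                · exact hvz
              · rw [he1] at hx'
                have hfM := mem_of_mem_erase hf2
                have hfne := (mem_erase.mp hf2).1
                rcases hx' with h | h
                · rw [h]; exact hNoCov u0 hu0nc f hfM y' hy'
                · rw [h]; exact fun hh => (hvE'mem f hfM hfne y' hy') hh.symm
          · rcases mem_insert.mp he' with he1 | he2
            · rcases mem_insert.mp hf with hf1 | hf'
              · rw [he1] at hx'
                rw [hf1] at hy'
                rcases hx' with rfl | rfl <;> rcases hy' with rfl | rfl
                · exact hu0x.symm
                · exact hvx.symm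
                · exact fun hh => hu0z hh.symm
                · exact fun hh => hvz hh.symm
              · rcases mem_insert.mp hf' with hf1 | hf2
                · exact absurd (he1.trans hf1.symm) hef
                · rw [he1] at hx'
                  have hfM := mem_of_mem_erase hf2
                  have hfne := (mem_erase.mp hf2).1
                  rcases hx' with h | h
                  · rw [h]; exact fun hh => (hxE'mem f hfM hfne y' hy') hh.symm
                  · rw [h]; exact hNoCov z hznc f hfM y' hy'
            · have heM2 := mem_of_mem_erase he2
              have hene := (mem_erase.mp he2).1
              rcases mem_insert.mp hf with hf1 | hf'
              · rw [hf1] at hy'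
                rcases hy' with h | h
                · rw [h]; exact fun hh => (hNoCov u0 hu0nc e heM2 x' hx') hh.symm
                · rw [h]; exact hvE'mem e heM2 hene x' hx'
              · rcases mem_insert.mp hf' with hf1 | hf2
                · rw [hf1] at hy'
                  rcases hy' with h | h
                  · rw [h]; exact hxE'mem e heM2 hene x' hx'
                  · rw [h]; exact fun hh => (hNoCov z hznc e heM2 x' hx') hh.symm
                · exact hMP.2 e heM2 f (mem_of_mem_erase hf2) hef x' y' hx' hy'
      have hfinal := hMmax' M' hM'P
      omega


end MainLemma

section MainLemma2

variable {V : Type*} [Fintype V] [DecidableEq V]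

lemma good_all (F : SimpleGraph V) : ∀ (n : ℕ) (s : Finset V), s.card ≤ n → GoodCol F s := by
  intro n
  induction n with
  | zero => intro s hs; exact good_base F s (by omega)
  | succ n IH =>
    intro s hs
    by_cases h3 : s.card ≤ 3
    · exact good_base F s h3
    · by_cases hc : ∃ a ∈ s, ∃ b ∈ s, ∃ w ∈ s, F.Adj a b ∧ w ≠ a ∧ w ≠ b ∧
        ∀ v ∈ s, F.Adj w v → v = a ∨ v = b
      · obtain ⟨a, ha, b, hb, w, hw, hab, hwa, hwb, hN⟩ := hc
        refine good_absorb F s (by omega) a b w ha hb hw hab hwa hwb hN (IH _ ?_)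
        have hsub : ({w, a, b} : Finset V) ⊆ s := by
          intro x hx; simp only [mem_insert, mem_singleton] at hx
          rcases hx with rfl | rfl | rfl <;> assumption
        have hcard3 : ({w, a, b} : Finset V).card = 3 := by
          rw [card_insert_of_notMem (by simp [hwa, hwb]),
            card_insert_of_notMem (by simp [hab.ne]), card_singleton]
        rw [card_sdiff_of_subset hsub, hcard3]
        omega
      · exact good_matching F s hc


end MainLemma2

lemma arrows_exists (t : ℕ) :
    ∃ F : SimpleGraph (Fin (t * 4)),
      StronglyArrows F (SimpleGraph.pathGraph 4) (SimpleGraph.Copies t K2) := by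
  classical
  set G : SimpleGraph (Fin t × Fin 4) := SimpleGraph.Copies t (SimpleGraph.pathGraph 4) with hG
  set E : Fin t × Fin 4 ≃ Fin (t * 4) := finProdFinEquiv with hEdef
  refine ⟨G.comap E.symm, ?_⟩
  intro c
  have hadj : ∀ u v : Fin t × Fin 4, (G.comap ⇑E.symm).Adj (E u) (E v) ↔ G.Adj u v := by
    intro u v
    rw [comap_adj, Equiv.symm_apply_apply, Equiv.symm_apply_apply]
  by_cases hall : ∃ i : Fin t,
      c s(E (i,0), E (i,1)) = true ∧ c s(E (i,1), E (i,2)) = true ∧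
        c s(E (i,2), E (i,3)) = true
  · obtain ⟨i, h1, h2, h3⟩ := hall
    left
    have hinj : Function.Injective (fun v : Fin 4 => E (i, v)) := by
      intro a b h
      exact congrArg Prod.snd (E.injective h)
    refine ⟨⟨⟨fun v => E (i, v), hinj⟩, ?_⟩, ?_⟩
    · intro a b
      constructor
      · intro h
        exact ((hadj _ _).mp h).2
      · intro h
        exact (hadj _ _).mpr ⟨rfl, h⟩
    · intro a b hab
      rw [pathGraph_adj] at hab
      fin_cases a <;> fin_cases b <;>
        first
          | (exfalso; revert hab; decide)
          | exact h1
          | exact h2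
          | exact h3
          | (rw [Sym2.eq_swap]; exact h1)
          | (rw [Sym2.eq_swap]; exact h2)
          | (rw [Sym2.eq_swap]; exact h3)
  · right
    have hbl : ∀ i : Fin t, ∃ a b : Fin 4,
        (pathGraph 4).Adj a b ∧ c s(E (i,a), E (i,b)) = false := by
      intro i
      by_cases k1 : c s(E (i,0), E (i,1)) = true
      · by_cases k2 : c s(E (i,1), E (i,2)) = true
        · by_cases k3 : c s(E (i,2), E (i,3)) = true
          · exact absurd ⟨i, k1, k2, k3⟩ hall
          · exact ⟨2, 3, by rw [pathGraph_adj]; decide, Bool.eq_false_iff.mpr k3⟩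
        · exact ⟨1, 2, by rw [pathGraph_adj]; decide, Bool.eq_false_iff.mpr k2⟩
      · exact ⟨0, 1, by rw [pathGraph_adj]; decide, Bool.eq_false_iff.mpr k1⟩
    choose ga gb hadjg hcg using hbl
    have hgane : ∀ i, ga i ≠ gb i := fun i => (hadjg i).ne
    have h2cases : ∀ k : Fin 2, k = 0 ∨ k = 1 := by decide
    set X : Fin t → Fin 2 → Fin 4 := fun i k => if k = 0 then ga i else gb i with hX
    have hX0 : ∀ i, X i 0 = ga i := by intro i; simp [hX]
    have hX1 : ∀ i, X i 1 = gb i := by intro i; simp [hX]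
    have hinj : Function.Injective (fun ik : Fin t × Fin 2 => E (ik.1, X ik.1 ik.2)) := by
      intro ⟨i, k⟩ ⟨j, l⟩ h
      have h' := E.injective h
      rw [Prod.mk.injEq] at h'
      obtain ⟨h1, h2⟩ := h'
      subst h1
      rcases h2cases k with rfl | rfl <;> rcases h2cases l with rfl | rfl
      · rfl
      · rw [hX0, hX1] at h2; exact absurd h2 (hgane i)
      · rw [hX1, hX0] at h2; exact absurd h2.symm (hgane i)
      · rfl
    refine ⟨⟨⟨fun ik => E (ik.1, X ik.1 ik.2), hinj⟩, ?_⟩, ?_⟩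
    · intro a b
      obtain ⟨i, k⟩ := a
      obtain ⟨j, l⟩ := b
      constructor
      · intro h
        obtain ⟨hij, hadj2⟩ := (hadj _ _).mp h
        have hij' : i = j := hij
        subst hij'
        refine ⟨rfl, ?_⟩
        intro hkl
        have hkl' : k = l := hkl
        subst hkl'
        exact (pathGraph 4).loopless.irrefl _ hadj2
      · intro h
        obtain ⟨hij, hkl⟩ := h
        have hij' : i = j := hij
        subst hij'
        apply (hadj _ _).mpr
        refine ⟨rfl, ?_⟩
        have hkl' : k ≠ l := hkl
        rcases h2cases k with rfl | rfl <;> rcases h2cases l with rfl | rfl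
        · exact absurd rfl hkl'
        · rw [hX0, hX1]; exact hadjg i
        · rw [hX1, hX0]; exact (hadjg i).symm
        · exact absurd rfl hkl'
    · intro a b hab
      obtain ⟨i, k⟩ := a
      obtain ⟨j, l⟩ := b
      obtain ⟨hij, hkl⟩ := hab
      have hij' : i = j := hij
      subst hij'
      have hkl' : k ≠ l := hkl
      rcases h2cases k with rfl | rfl <;> rcases h2cases l with rfl | rfl
      · exact absurd rfl hkl'
      · show c s(E (i, X i 0), E (i, X i 1)) = false
        rw [hX0, hX1]; exact hcg i
      · show c s(E (i, X i 1), E (i, X i 0)) = false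
        rw [hX1, hX0, Sym2.eq_swap]; exact hcg i
      · exact absurd rfl hkl'

lemma main_colouring {n : ℕ} (t : ℕ) (ht : 1 ≤ t) (hn : n ≤ 3 * t)
    (F : SimpleGraph (Fin n)) :
    ∃ c : Sym2 (Fin n) → Bool,
      (¬ ∃ f : SimpleGraph.pathGraph 4 ↪g F,
        ∀ a b, (SimpleGraph.pathGraph 4).Adj a b → c s(f a, f b) = true) ∧
      (¬ ∃ f : SimpleGraph.Copies t K2 ↪g F,
        ∀ a b, (SimpleGraph.Copies t K2).Adj a b → c s(f a, f b) = false) := by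
  obtain ⟨r, hsymm, hred, hblue⟩ := good_all F n (univ : Finset (Fin n)) (by simp)
  refine ⟨Sym2.lift ⟨r, hsymm⟩, ?_, ?_⟩
  · rintro ⟨f, hf⟩
    have h01 : (pathGraph 4).Adj 0 1 := by rw [pathGraph_adj]; decide
    have h12 : (pathGraph 4).Adj 1 2 := by rw [pathGraph_adj]; decide
    have h23 : (pathGraph 4).Adj 2 3 := by rw [pathGraph_adj]; decide
    have e01 := hf 0 1 h01
    have e12 := hf 1 2 h12
    have e23 := hf 2 3 h23
    rw [Sym2.lift_mk] at e01 e12 e23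
    refine hred (f 0) (f 1) (f 2) (f 3) (mem_univ _) (mem_univ _) (mem_univ _) (mem_univ _)
      (f.map_rel_iff.mpr h01) (f.map_rel_iff.mpr h12) (f.map_rel_iff.mpr h23)
      (fun h => absurd (f.injective h) (by decide))
      (fun h => absurd (f.injective h) (by decide))
      (fun h => absurd (f.injective h) (by decide)) e01 e12 e23
  · rintro ⟨f, hf⟩
    have hK : ∀ i : Fin t, (SimpleGraph.Copies t K2).Adj (i, 0) (i, 1) := by
      intro i
      exact ⟨rfl, by simp [K2]⟩
    refine hblue t (by simp only [card_univ, Fintype.card_fin]; omega) (fun i => (f (i, 0), f (i, 1))) (fun i => mem_univ _)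
      (fun i => mem_univ _) (fun i => f.map_rel_iff.mpr (hK i)) ?_ ?_
    · intro i
      have h := hf (i, 0) (i, 1) (hK i)
      rwa [Sym2.lift_mk] at h
    · intro i j x y hij hx hy
      have key : ∀ (k l : Fin 2), f (i, k) ≠ f (j, l) ∧ ¬ F.Adj (f (i, k)) (f (j, l)) := by
        intro k l
        constructor
        · intro h
          exact hij (congrArg Prod.fst (f.injective h))
        · intro hadj
          exact hij (f.map_rel_iff.mp hadj).1
      rcases hx with rfl | rfl <;> rcases hy with rfl | rfl
      · exact key 0 0
      · exact key 0 1
      · exact key 1 0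
      · exact key 1 1


theorem stmt12 (t : ℕ) (ht : 1 ≤ t) :
    (∀ F : SimpleGraph (Fin (3 * t)), ∃ c : Sym2 (Fin (3 * t)) → Bool,
      (¬ ∃ f : SimpleGraph.pathGraph 4 ↪g F,
        ∀ a b, (SimpleGraph.pathGraph 4).Adj a b → c s(f a, f b) = true) ∧
      (¬ ∃ f : SimpleGraph.Copies t K2 ↪g F,
        ∀ a b, (SimpleGraph.Copies t K2).Adj a b → c s(f a, f b) = false)) ∧
    3 * t + 1 ≤ IR (SimpleGraph.pathGraph 4) (SimpleGraph.Copies t K2) := by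
  constructor
  · intro F
    exact main_colouring t ht le_rfl F
  · apply le_csInf
    · obtain ⟨F, hF⟩ := arrows_exists t
      exact ⟨t * 4, F, hF⟩
    · intro n hn
      obtain ⟨F, hF⟩ := hn
      by_contra hlt
      push_neg at hlt
      obtain ⟨c, hc1, hc2⟩ := main_colouring t ht (by omega) F
      rcases hF c with h | h
      · exact hc1 h
      · exact hc2 h
end

section
/- For integers n ≥ 5 and t ≥ 1, IR(P_n, tK_2) ≤ ⌈t/2⌉·n + t − rem(t,2), where rem(t,2) is the remainder of t modulo 2. -/
open SimpleGraph

/-! ### Auxiliary lemmas -/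

open scoped Fin.NatCast Fin.CommRing

@[simp] lemma Copies_adj {β : Type*} {s : ℕ} {G : SimpleGraph β} {x y : Fin s × β} :
    (SimpleGraph.Copies s G).Adj x y ↔ x.1 = y.1 ∧ G.Adj x.2 y.2 := Iff.rfl

@[simp] lemma K2_adj {x y : Fin 2} : K2.Adj x y ↔ x ≠ y := by simp [K2]

section Transport

variable {α α' β γ : Type*} {F : SimpleGraph α} {G : SimpleGraph β} {H : SimpleGraph γ}

lemma StronglyArrows.comap (e : α' ≃ α) (h : StronglyArrows F G H) :
    StronglyArrows (F.comap e.toEmbedding) G H := by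
  intro c
  let ι : F ≃g F.comap e.toEmbedding := (SimpleGraph.Iso.comap e F).symm
  rcases h (fun p => c (p.map ι)) with ⟨f, hf⟩ | ⟨f, hf⟩
  · exact Or.inl ⟨ι.toEmbedding.comp f, fun a b hab => hf a b hab⟩
  · exact Or.inr ⟨ι.toEmbedding.comp f, fun a b hab => hf a b hab⟩

lemma StronglyArrows.toFin [Fintype α] {m : ℕ} (hm : Fintype.card α = m)
    (h : StronglyArrows F G H) : ∃ F' : SimpleGraph (Fin m), StronglyArrows F' G H :=
  ⟨_, h.comap (Fintype.equivFinOfCardEq hm).symm⟩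

/-- embeddings on each summand combine -/
def sumMapEmb {A : SimpleGraph β} {B : SimpleGraph γ} {F2 : SimpleGraph α'}
    (f : A ↪g F) (g : B ↪g F2) : (A ⊕g B) ↪g (F ⊕g F2) where
  toFun := Sum.map f g
  inj' := Sum.map_injective.mpr ⟨f.injective, g.injective⟩
  map_rel_iff' := by rintro (a|a) (b|b) <;> simp

/-- `Copies (s+s') G` is isomorphic to the disjoint sum of the copies. -/
def copiesSplit (s s' : ℕ) {β : Type*} (G : SimpleGraph β) :
    SimpleGraph.Copies (s + s') G ≃g (SimpleGraph.Copies s G ⊕g SimpleGraph.Copies s' G) where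
  toEquiv := (Equiv.prodCongr finSumFinEquiv.symm (Equiv.refl β)).trans
    (Equiv.sumProdDistrib (Fin s) (Fin s') β)
  map_rel_iff' := by
    rintro ⟨j, x⟩ ⟨j', y⟩
    rcases h : finSumFinEquiv.symm j with i | i <;> rcases h' : finSumFinEquiv.symm j' with i' | i' <;>
      simp [Equiv.sumProdDistrib, h, h'] <;>
      rw [← (finSumFinEquiv.symm.injective.eq_iff (a := j) (b := j')), h, h'] <;> simp

lemma sum_arrows {F2 : SimpleGraph α'} {s s' : ℕ}
    (h1 : StronglyArrows F G (SimpleGraph.Copies s K2))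
    (h2 : StronglyArrows F2 G (SimpleGraph.Copies s' K2)) :
    StronglyArrows (F ⊕g F2) G (SimpleGraph.Copies (s + s') K2) := by
  intro c
  rcases h1 (fun p => c (p.map Sum.inl)) with ⟨f, hf⟩ | ⟨f1, hf1⟩
  · exact Or.inl ⟨Embedding.sumInl.comp f, fun a b hab => hf a b hab⟩
  rcases h2 (fun p => c (p.map Sum.inr)) with ⟨f, hf⟩ | ⟨f2, hf2⟩
  · exact Or.inl ⟨Embedding.sumInr.comp f, fun a b hab => hf a b hab⟩
  refine Or.inr ⟨(sumMapEmb f1 f2).comp (copiesSplit s s' K2).toEmbedding, ?_⟩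
  rintro ⟨j, x⟩ ⟨j', y⟩ ⟨h1, h2⟩
  subst h1
  rcases h : finSumFinEquiv.symm j with i | i
  · have he : ∀ z, ((sumMapEmb f1 f2).comp (copiesSplit s s' K2).toEmbedding) (j, z)
        = Sum.inl (f1 (i, z)) := by
      intro z
      simp [sumMapEmb, copiesSplit, Equiv.sumProdDistrib, h, Embedding.comp]
    rw [he x, he y]
    exact hf1 (i, x) (i, y) ⟨rfl, by simpa using h2⟩
  · have he : ∀ z, ((sumMapEmb f1 f2).comp (copiesSplit s s' K2).toEmbedding) (j, z)
        = Sum.inr (f2 (i, z)) := by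
      intro z
      simp [sumMapEmb, copiesSplit, Equiv.sumProdDistrib, h, Embedding.comp]
    rw [he x, he y]
    exact hf2 (i, x) (i, y) ⟨rfl, by simpa using h2⟩

end Transport

/-- Any graph strongly arrows (itself, `1·K2`). -/
lemma self_arrows {α : Type*} (F : SimpleGraph α) :
    StronglyArrows F F (SimpleGraph.Copies 1 K2) := by
  intro c
  by_cases hall : ∀ a b : α, F.Adj a b → c s(a, b) = true
  · exact Or.inl ⟨Embedding.refl, hall⟩
  · push_neg at hall
    obtain ⟨a, b, hab, hc⟩ := hall
    replace hc : c s(a, b) = false := by simpa using hc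
    refine Or.inr ⟨⟨⟨fun p => if p.2 = 0 then a else b, ?_⟩, ?_⟩, ?_⟩
    · rintro ⟨i, x⟩ ⟨j, y⟩ h
      have hij : i = j := Subsingleton.elim i j
      fin_cases x <;> fin_cases y <;> simp_all
    · rintro ⟨i, x⟩ ⟨j, y⟩
      generalize_proofs hp
      simp only [Function.Embedding.coeFn_mk]
      have hij : i = j := Subsingleton.elim i j
      subst hij
      fin_cases x <;> fin_cases y <;> simp [hab, hab.symm, F.loopless.irrefl a, F.loopless.irrefl b]
    · rintro ⟨i, x⟩ ⟨j, y⟩ ⟨h1, h2⟩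
      fin_cases x <;> fin_cases y <;> simp_all <;>
        first | exact hc | (rw [Sym2.eq_swap]; exact hc)

/-- Helper: an induced blue `2K2` from two suitably independent edges. -/
lemma embed_twoK2 {α : Type*} (F : SimpleGraph α) (c : Sym2 α → Bool) (i i' j j' : α)
    (adji : F.Adj i i') (adjj : F.Adj j j')
    (d1 : i ≠ j) (d2 : i ≠ j') (d3 : i' ≠ j) (d4 : i' ≠ j')
    (na1 : ¬F.Adj i j) (na2 : ¬F.Adj i j') (na3 : ¬F.Adj i' j) (na4 : ¬F.Adj i' j')
    (hb1 : c s(i, i') = false) (hb2 : c s(j, j') = false) :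
    ∃ f : (SimpleGraph.Copies 2 K2) ↪g F,
      ∀ a b : Fin 2 × Fin 2, (SimpleGraph.Copies 2 K2).Adj a b → c s(f a, f b) = false := by
  have na1' : ¬F.Adj j i := fun h => na1 h.symm
  have na2' : ¬F.Adj j' i := fun h => na2 h.symm
  have na3' : ¬F.Adj j i' := fun h => na3 h.symm
  have na4' : ¬F.Adj j' i' := fun h => na4 h.symm
  have adji' := adji.symm
  have adjj' := adjj.symm
  have nii : i ≠ i' := adji.ne
  have njj : j ≠ j' := adjj.ne
  refine ⟨⟨⟨fun p => if p.1 = 0 then (if p.2 = 0 then i else i') else (if p.2 = 0 then j else j'),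
      ?_⟩, ?_⟩, ?_⟩
  · rintro ⟨a, x⟩ ⟨b, y⟩ h
    fin_cases a <;> fin_cases b <;> fin_cases x <;> fin_cases y <;> simp_all
  · rintro ⟨a, x⟩ ⟨b, y⟩
    generalize_proofs hp
    simp only [Function.Embedding.coeFn_mk]
    fin_cases a <;> fin_cases b <;> fin_cases x <;> fin_cases y <;>
      simp_all [F.irrefl]
  · rintro ⟨a, x⟩ ⟨b, y⟩ ⟨h1, h2⟩
    generalize_proofs hp
    simp only [RelEmbedding.coe_mk, Function.Embedding.coeFn_mk]
    fin_cases a <;> fin_cases b <;> fin_cases x <;> fin_cases y <;> simp_all <;>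
      rw [Sym2.eq_swap] <;> assumption

/-- Helper: an induced red `P_n` in the cycle when all blue edges lie in a window of 3. -/
lemma embed_path (n : ℕ) (hn : 5 ≤ n) (c : Sym2 (Fin (n + 2)) → Bool) (k : Fin (n + 2))
    (hk : ∀ j : Fin (n + 2), c s(j, j + 1) = false →
      2 ≤ (j - (k - 2)).val ∧ (j - (k - 2)).val ≤ 4) :
    ∃ f : pathGraph n ↪g cycleGraph (n + 2),
      ∀ a b : Fin n, (pathGraph n).Adj a b → c s(f a, f b) = true := by
  have hcast : ∀ x y : ℕ, x < n + 2 → y < n + 2 →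
      ((x : Fin (n + 2)) = (y : Fin (n + 2)) ↔ x = y) := by
    intro x y hx hy
    rw [Fin.ext_iff, Fin.val_natCast, Fin.val_natCast, Nat.mod_eq_of_lt hx, Nat.mod_eq_of_lt hy]
  set f : Fin n → Fin (n + 2) := fun a => k + 3 + (a.val : Fin (n + 2)) with hf
  have hsub : ∀ a b : Fin n, (f b - f a = 1 ↔ b.val = a.val + 1) := by
    intro a b
    constructor
    · intro h
      have h1 : ((b.val : ℕ) : Fin (n + 2)) = ((a.val + 1 : ℕ) : Fin (n + 2)) := by
        push_cast; linear_combination h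
      rwa [hcast _ _ (by have := b.isLt; omega) (by have := a.isLt; omega)] at h1
    · intro h
      have h1 : ((b.val : ℕ) : Fin (n + 2)) = ((a.val + 1 : ℕ) : Fin (n + 2)) := by rw [h]
      push_cast at h1
      simp only [hf]
      linear_combination h1
  have hinj : Function.Injective f := by
    intro a b h
    have h1 : ((a.val : ℕ) : Fin (n + 2)) = ((b.val : ℕ) : Fin (n + 2)) := by
      simp only [hf] at h; linear_combination h
    rw [hcast _ _ (by have := a.isLt; omega) (by have := b.isLt; omega)] at h1
    exact Fin.ext h1
  have hred : ∀ a b : Fin n, a.val + 1 = b.val → c s(f a, f b) = true := by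
    intro a b hab
    by_contra hc
    rw [Bool.not_eq_true] at hc
    have hfb : f b = f a + 1 := by
      have h1 : ((b.val : ℕ) : Fin (n + 2)) = ((a.val + 1 : ℕ) : Fin (n + 2)) := by rw [← hab]
      push_cast at h1
      simp only [hf]; linear_combination h1
    rw [hfb] at hc
    obtain ⟨h2, h4⟩ := hk (f a) hc
    have hD : f a - (k - 2) = ((a.val + 5 : ℕ) : Fin (n + 2)) := by
      simp only [hf]; push_cast; ring
    rw [hD, Fin.val_natCast] at h2 h4
    have hbv := b.isLt
    have h5 : a.val + 5 < n + 2 ∨ a.val + 5 = n + 2 ∨ a.val + 5 = n + 3 := by omega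
    rcases h5 with h5 | h5 | h5
    · rw [Nat.mod_eq_of_lt h5] at h2 h4; omega
    · rw [h5, Nat.mod_self] at h2; omega
    · rw [h5, show n + 3 = 1 + (n + 2) by ring, Nat.add_mod_right,
        Nat.mod_eq_of_lt (by omega)] at h2; omega
  refine ⟨⟨⟨f, hinj⟩, ?_⟩, ?_⟩
  · intro a b
    show (cycleGraph (n + 2)).Adj (f a) (f b) ↔ (pathGraph n).Adj a b
    rw [cycleGraph_adj, pathGraph_adj, hsub a b, hsub b a]
    omega
  · intro a b hab
    rw [pathGraph_adj] at hab
    rcases hab with h | h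
    · exact hred a b h
    · rw [Sym2.eq_swap]; exact hred b a h

/-- The key combinatorial fact: `C_{n+2}` strongly arrows `(P_n, 2K_2)` for `n ≥ 5`. -/
lemma cycle_arrows (n : ℕ) (hn : 5 ≤ n) :
    StronglyArrows (cycleGraph (n + 2)) (pathGraph n) (SimpleGraph.Copies 2 K2) := by
  intro c
  by_cases hfar : ∃ i j : Fin (n + 2), c s(i, i + 1) = false ∧ c s(j, j + 1) = false ∧
      5 ≤ (j - (i - 2)).val
  · right
    obtain ⟨i, j, hbi, hbj, hD⟩ := hfar
    have key : ∀ m : ℕ, m ≤ 4 → j - i ≠ (m : Fin (n + 2)) - 2 := by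
      intro m hm h
      have h2 : j - (i - 2) = (m : Fin (n + 2)) := by linear_combination h
      rw [h2, Fin.val_natCast, Nat.mod_eq_of_lt (by omega)] at hD
      omega
    have hne0 : j - i ≠ 0 := by
      intro h; apply key 2 (by norm_num); rw [h]; push_cast; ring
    have hne1 : j - i ≠ 1 := by
      intro h; apply key 3 (by norm_num); rw [h]; push_cast; ring
    have hne2 : j - i ≠ 2 := by
      intro h; apply key 4 (by norm_num); rw [h]; push_cast; ring
    have hme1 : i - j ≠ 1 := by
      intro h; apply key 1 (by norm_num); push_cast; linear_combination -h
    have hme2 : i - j ≠ 2 := by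
      intro h; apply key 0 (by norm_num); push_cast; linear_combination -h
    have adji : (cycleGraph (n + 2)).Adj i (i + 1) := by
      rw [cycleGraph_adj]; right; exact add_sub_cancel_left i 1
    have adjj : (cycleGraph (n + 2)).Adj j (j + 1) := by
      rw [cycleGraph_adj]; right; exact add_sub_cancel_left j 1
    have d1 : i ≠ j := fun h => hne0 (by rw [h]; ring)
    have d2 : i ≠ j + 1 := fun h => hme1 (by linear_combination h)
    have d3 : i + 1 ≠ j := fun h => hne1 (by linear_combination -h)
    have d4 : i + 1 ≠ j + 1 := fun h => hne0 (by linear_combination -h)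
    have na1 : ¬(cycleGraph (n + 2)).Adj i j := by
      rw [cycleGraph_adj]; rintro (h | h); exacts [hme1 h, hne1 h]
    have na2 : ¬(cycleGraph (n + 2)).Adj i (j + 1) := by
      rw [cycleGraph_adj]; rintro (h | h)
      · exact hme2 (by linear_combination h)
      · exact hne0 (by linear_combination h)
    have na3 : ¬(cycleGraph (n + 2)).Adj (i + 1) j := by
      rw [cycleGraph_adj]; rintro (h | h)
      · exact hne0 (by linear_combination -h)
      · exact hne2 (by linear_combination h)
    have na4 : ¬(cycleGraph (n + 2)).Adj (i + 1) (j + 1) := by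
      rw [cycleGraph_adj]; rintro (h | h)
      · exact hme1 (by linear_combination h)
      · exact hne1 (by linear_combination h)
    exact embed_twoK2 _ c i (i + 1) j (j + 1) adji adjj d1 d2 d3 d4 na1 na2 na3 na4 hbi hbj
  · left
    push_neg at hfar
    by_cases hB : ∃ i : Fin (n + 2), c s(i, i + 1) = false
    · obtain ⟨i, hi⟩ := hB
      obtain ⟨k, hkmem, hkmin⟩ := Finset.exists_min_image
        (Finset.univ.filter fun j : Fin (n + 2) => c s(j, j + 1) = false)
        (fun j => (j - (i - 2)).val) ⟨i, by simp [hi]⟩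
      simp only [Finset.mem_filter, Finset.mem_univ, true_and] at hkmem
      apply embed_path n hn c k
      intro j hj
      have hbj : (j - (i - 2)).val ≤ 4 := by have := hfar i j hi hj; omega
      have hbk : (k - (i - 2)).val ≤ 4 := by have := hfar i k hi hkmem; omega
      have hck : (k - (i - 2)).val ≤ (j - (i - 2)).val := hkmin j (by simp [hj])
      have hkj : (j - (k - 2)).val ≤ 4 := by have := hfar k j hkmem hj; omega
      refine ⟨?_, hkj⟩
      have heq : j - (k - 2) =
          (((j - (i - 2)).val + 2 - (k - (i - 2)).val : ℕ) : Fin (n + 2)) := by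
        rw [Nat.cast_sub (by omega)]
        push_cast
        ring
      rw [heq, Fin.val_natCast, Nat.mod_eq_of_lt (by omega)]
      omega
    · push_neg at hB
      apply embed_path n hn c 0
      intro j hj
      exact absurd hj (hB j)

/-- Existence of a strongly-arrowing graph of the right size. -/
lemma exists_graph (n : ℕ) (hn : 5 ≤ n) : ∀ t : ℕ, 1 ≤ t →
    ∃ F : SimpleGraph (Fin ((t + 1) / 2 * n + t - t % 2)),
      StronglyArrows F (pathGraph n) (SimpleGraph.Copies t K2) := by
  intro t
  induction t using Nat.strong_induction_on with
  | _ t ih =>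
    intro ht
    rcases t with _ | _ | _ | m
    · omega
    · exact (self_arrows (pathGraph n)).toFin (by norm_num)
    · exact (cycle_arrows n hn).toFin (by norm_num)
    · obtain ⟨F1, hF1⟩ := ih (m + 1) (by omega) (by omega)
      have hsum := sum_arrows hF1 (cycle_arrows n hn)
      have hcard : Fintype.card
          (Fin ((m + 1 + 1) / 2 * n + (m + 1) - (m + 1) % 2) ⊕ Fin (n + 2)) =
          (m + 3 + 1) / 2 * n + (m + 3) - (m + 3) % 2 := by
        rw [Fintype.card_sum, Fintype.card_fin, Fintype.card_fin]
        have hq : (m + 3 + 1) / 2 = (m + 1 + 1) / 2 + 1 := by omega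
        rw [hq, add_mul, one_mul]
        generalize (m + 1 + 1) / 2 * n = P
        omega
      exact hsum.toFin hcard

theorem stmt13 (n t : ℕ) (hn : 5 ≤ n) (ht : 1 ≤ t) :
    IR (SimpleGraph.pathGraph n) (SimpleGraph.Copies t K2) ≤
      ((t + 1) / 2) * n + t - t % 2 := by
  obtain ⟨F, hF⟩ := exists_graph n hn t ht
  exact Nat.sInf_le ⟨F, hF⟩
end

section
/- For integers s ≥ 1 and n ≥ 3, IR(sP_3, K_n) ≥ C(n+1,2) + (2s−2)(n−1), where C(n+1,2) = n(n+1)/2. -/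
open SimpleGraph

/-! ### Auxiliary machinery for the lower bound -/

namespace IRAux

variable {α : Type*} [Fintype α] [DecidableEq α]

def tverts (p : α × α × α) : Finset α := {p.1, p.2.1, p.2.2}
def Cherry (F : SimpleGraph α) (p : α × α × α) : Prop :=
  F.Adj p.1 p.2.1 ∧ F.Adj p.2.1 p.2.2 ∧ ¬ F.Adj p.1 p.2.2 ∧ p.1 ≠ p.2.2
def RedC (F : SimpleGraph α) (c : Sym2 α → Bool) (p : α × α × α) : Prop :=
  Cherry F p ∧ c s(p.1, p.2.1) = true ∧ c s(p.2.1, p.2.2) = true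
def Sepr (F : SimpleGraph α) (p q : α × α × α) : Prop :=
  ∀ x ∈ tverts p, ∀ y ∈ tverts q, x ≠ y ∧ ¬ F.Adj x y
def Fam (F : SimpleGraph α) (c : Sym2 α → Bool) (A : Finset α) (m : ℕ) : Prop :=
  ∃ T : Finset (α × α × α), m ≤ T.card ∧
    (∀ p ∈ T, RedC F c p ∧ tverts p ⊆ A) ∧
    (∀ p ∈ T, ∀ q ∈ T, p ≠ q → Sepr F p q)
def BlueK (F : SimpleGraph α) (c : Sym2 α → Bool) (k : ℕ) (A : Finset α) : Prop :=
  ∃ t : Finset α, t ⊆ A ∧ F.IsNClique k t ∧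
    ∀ x ∈ t, ∀ y ∈ t, x ≠ y → c s(x, y) = false
def Obl (F : SimpleGraph α) (k j : ℕ) (A : Finset α) : Prop :=
  ∀ c : Sym2 α → Bool, Fam F c A (j + 1) ∨ BlueK F c k A
def PR (F : SimpleGraph α) (r : ℕ) (A : Finset α) : Prop :=
  ∀ pa : α → ℕ, (∀ x ∈ A, ∀ y ∈ A, x ≠ y → pa x = pa y → F.Adj x y) →
    ∃ t : Finset α, t ⊆ A ∧ F.IsNClique r t ∧
      ∀ x ∈ t, ∀ y ∈ t, x ≠ y → pa x ≠ pa y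
variable {F : SimpleGraph α}

@[simp] lemma mem_tverts1 (p : α × α × α) : p.1 ∈ tverts p := by simp [tverts]
@[simp] lemma mem_tverts2 (p : α × α × α) : p.2.1 ∈ tverts p := by simp [tverts]
@[simp] lemma mem_tverts3 (p : α × α × α) : p.2.2 ∈ tverts p := by simp [tverts]

theorem Obl_to_PR {k : ℕ} {A : Finset α} (h : Obl F k 0 A) : PR F k A := by
  intro pa hpa
  set c : Sym2 α → Bool :=
    Sym2.lift ⟨fun x y => decide (pa x = pa y), fun x y => by simp [eq_comm]⟩ with hc
  have hcval : ∀ x y, c s(x, y) = decide (pa x = pa y) := fun x y => Sym2.lift_mk _ x y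
  rcases h c with hfam | hblue
  · exfalso
    obtain ⟨T, hT1, hT2, -⟩ := hfam
    have : T.Nonempty := Finset.card_pos.1 (by omega)
    obtain ⟨p, hp⟩ := this
    obtain ⟨⟨hch, hr1, hr2⟩, hsub⟩ := hT2 p hp
    rw [hcval] at hr1 hr2
    have h1 : pa p.1 = pa p.2.1 := of_decide_eq_true hr1
    have h2 : pa p.2.1 = pa p.2.2 := of_decide_eq_true hr2
    exact hch.2.2.1 (hpa p.1 (hsub (mem_tverts1 p)) p.2.2 (hsub (mem_tverts3 p))
      hch.2.2.2 (h1.trans h2))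
  · obtain ⟨t, htA, htcl, htb⟩ := hblue
    refine ⟨t, htA, htcl, fun x hx y hy hxy => ?_⟩
    have := htb x hx y hy hxy
    rw [hcval] at this
    exact of_decide_eq_false this

theorem Obl_clique {k j : ℕ} {A : Finset α} (h : Obl F k j A) :
    ∃ t : Finset α, t ⊆ A ∧ F.IsNClique k t := by
  rcases h (fun _ => false) with hfam | hblue
  · exfalso
    obtain ⟨T, hT1, hT2, -⟩ := hfam
    obtain ⟨p, hp⟩ := Finset.card_pos.1 (by omega : 0 < T.card)
    exact absurd (hT2 p hp).1.2.1 (by simp)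
  · obtain ⟨t, htA, htcl, -⟩ := hblue
    exact ⟨t, htA, htcl⟩

theorem Obl_anchor {k j : ℕ} {A t : Finset α} (hk : 2 ≤ k) (ht : t ⊆ A)
    (hcl : F.IsClique (t : Set α)) (h : Obl F k (j + 1) A) : Obl F k j (A \ t) := by
  intro c'
  by_contra hcon
  push_neg at hcon
  obtain ⟨hnf, hnb⟩ := hcon
  set c : Sym2 α → Bool :=
    Sym2.lift ⟨fun x y => if x ∈ t ∨ y ∈ t then true else c' s(x, y),
      fun x y => by
        by_cases hx : x ∈ t <;> by_cases hy : y ∈ t <;>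
          simp [hx, hy, Sym2.eq_swap]⟩ with hc
  have hcval : ∀ x y, c s(x, y) = if x ∈ t ∨ y ∈ t then true else c' s(x, y) :=
    fun x y => Sym2.lift_mk _ x y
  rcases h c with hfam | hblue
  · -- at most one cherry touches t; the rest give a family for c'
    obtain ⟨T, hT1, hT2, hT3⟩ := hfam
    set Tout := T.filter (fun p => Disjoint (tverts p) t) with hTout
    -- the touching cherries form a subsingleton
    have htouch : (T.filter (fun p => ¬ Disjoint (tverts p) t)).card ≤ 1 := by
      rw [Finset.card_le_one]
      intro p hp q hq
      by_contra hpq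
      obtain ⟨hpT, hnd⟩ := Finset.mem_filter.1 hp
      obtain ⟨hqT, hnd'⟩ := Finset.mem_filter.1 hq
      obtain ⟨x, hxp, hxt⟩ := Finset.not_disjoint_iff.1 hnd
      obtain ⟨y, hyq, hyt⟩ := Finset.not_disjoint_iff.1 hnd'
      obtain ⟨hne, hnadj⟩ := hT3 p hpT q hqT hpq x hxp y hyq
      exact hnadj (hcl (by exact_mod_cast hxt) (by exact_mod_cast hyt) hne)
    have hsplit : T.card ≤ (T.filter (fun p => ¬ Disjoint (tverts p) t)).card + Tout.card := by
      have heq := Finset.card_filter_add_card_filter_not (s := T)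
        (p := fun p => Disjoint (tverts p) t)
      rw [hTout]
      omega
    have hout : j + 1 ≤ Tout.card := by omega
    apply hnf
    refine ⟨Tout, hout, ?_, ?_⟩
    · intro p hp
      obtain ⟨hpT, hptd⟩ := Finset.mem_filter.1 hp
      have hpt : ∀ x ∈ tverts p, x ∉ t := fun x hx hxt =>
        Finset.not_disjoint_iff.2 ⟨x, hx, hxt⟩ (by exact hptd)
      obtain ⟨⟨hch, hr1, hr2⟩, hsub⟩ := hT2 p hpT
      rw [hcval] at hr1 hr2
      rw [if_neg (by push_neg; exact ⟨hpt _ (mem_tverts1 p), hpt _ (mem_tverts2 p)⟩)] at hr1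
      rw [if_neg (by push_neg; exact ⟨hpt _ (mem_tverts2 p), hpt _ (mem_tverts3 p)⟩)] at hr2
      refine ⟨⟨hch, hr1, hr2⟩, fun x hx => Finset.mem_sdiff.2 ⟨hsub hx, hpt x hx⟩⟩
    · intro p hp q hq hpq
      exact hT3 p (Finset.mem_filter.1 hp).1 q (Finset.mem_filter.1 hq).1 hpq
  · -- blue clique avoids t
    obtain ⟨Q, hQA, hQcl, hQb⟩ := hblue
    apply hnb
    have hQt : ∀ x ∈ Q, x ∉ t := by
      intro x hx hxt
      -- pick another vertex of Q
      have h2 : 2 ≤ Q.card := by rw [hQcl.2]; omega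
      obtain ⟨y, hy, hyx⟩ : ∃ y ∈ Q, y ≠ x := Finset.exists_mem_ne (by omega) x
      have := hQb x hx y hy (Ne.symm hyx)
      rw [hcval, if_pos (Or.inl hxt)] at this
      exact absurd this (by simp)
    refine ⟨Q, fun x hx => Finset.mem_sdiff.2 ⟨hQA hx, hQt x hx⟩, hQcl, ?_⟩
    intro x hx y hy hxy
    have := hQb x hx y hy hxy
    rw [hcval, if_neg (by push_neg; exact ⟨hQt x hx, hQt y hy⟩)] at this
    exact this


theorem cherry_union_bound {T : ℕ} (V : Fin T → Finset α)
    (hcl : ∀ i, F.IsClique (V i : Set α))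
    (hdisj : ∀ i i', i ≠ i' → Disjoint (V i) (V i'))
    (P : Finset (α × α × α))
    (hch : ∀ p ∈ P, Cherry F p ∧ tverts p ⊆ Finset.univ.biUnion V)
    (hsep : ∀ p ∈ P, ∀ q ∈ P, p ≠ q → Sepr F p q) :
    P.card ≤ T / 2 := by
  classical
  set I : (α × α × α) → Finset (Fin T) :=
    fun p => Finset.univ.filter (fun i => ∃ x ∈ tverts p, x ∈ V i) with hI
  have hI2 : ∀ p ∈ P, 2 ≤ (I p).card := by
    intro p hp
    obtain ⟨hchp, hsub⟩ := hch p hp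
    obtain ⟨ia, -, hia⟩ := Finset.mem_biUnion.1 (hsub (mem_tverts1 p))
    obtain ⟨ic, -, hic⟩ := Finset.mem_biUnion.1 (hsub (mem_tverts3 p))
    have hne : ia ≠ ic := by
      intro hiac
      subst hiac
      exact hchp.2.2.1 (hcl ia (by exact_mod_cast hia) (by exact_mod_cast hic) hchp.2.2.2)
    have hsubI : ({ia, ic} : Finset (Fin T)) ⊆ I p := by
      intro i hi
      rcases Finset.mem_insert.1 hi with h1 | h1
      · subst h1; exact Finset.mem_filter.2 ⟨Finset.mem_univ _, ⟨p.1, mem_tverts1 p, hia⟩⟩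
      · rw [Finset.mem_singleton.1 h1]
        exact Finset.mem_filter.2 ⟨Finset.mem_univ _, ⟨p.2.2, mem_tverts3 p, hic⟩⟩
    calc 2 = ({ia, ic} : Finset (Fin T)).card := (Finset.card_pair hne).symm
    _ ≤ (I p).card := Finset.card_le_card hsubI
  have hIdisj : ∀ p ∈ P, ∀ q ∈ P, p ≠ q → Disjoint (I p) (I q) := by
    intro p hp q hq hpq
    rw [Finset.disjoint_left]
    intro i hip hiq
    obtain ⟨-, x, hxp, hxV⟩ := Finset.mem_filter.1 hip
    obtain ⟨-, y, hyq, hyV⟩ := Finset.mem_filter.1 hiq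
    obtain ⟨hne, hnadj⟩ := hsep p hp q hq hpq x hxp y hyq
    exact hnadj (hcl i (by exact_mod_cast hxV) (by exact_mod_cast hyV) hne)
  have hsum : P.card * 2 ≤ ∑ p ∈ P, (I p).card := by
    have := Finset.card_nsmul_le_sum P (fun p => (I p).card) 2 hI2
    simpa [mul_comm] using this
  have hbu : ∑ p ∈ P, (I p).card = (P.biUnion I).card := (Finset.card_biUnion hIdisj).symm
  have hle : (P.biUnion I).card ≤ T := by
    calc (P.biUnion I).card ≤ (Finset.univ : Finset (Fin T)).card := Finset.card_le_univ _
    _ = T := by simp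
  rw [Nat.le_div_iff_mul_le (by norm_num : (0:ℕ) < 2)]
  omega

theorem Obl_family {k j : ℕ} {A : Finset α} {T : ℕ} (V : Fin T → Finset α)
    (hcl : ∀ i, F.IsClique (V i : Set α))
    (hdisj : ∀ i i', i ≠ i' → Disjoint (V i) (V i'))
    (hsub : ∀ i, V i ⊆ A)
    (hnocl : ¬ ∃ t : Finset α, t ⊆ A \ Finset.univ.biUnion V ∧ F.IsNClique (k - 1) t)
    (hk : 1 ≤ k)
    (h : Obl F k (j + T / 2) A) : Obl F k j (A \ Finset.univ.biUnion V) := by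
  intro c'
  by_contra hcon
  push_neg at hcon
  obtain ⟨hnf, hnb⟩ := hcon
  set U := Finset.univ.biUnion V with hU
  set c : Sym2 α → Bool :=
    Sym2.lift ⟨fun x y =>
      if x ∈ U then (if y ∈ U then true else false)
      else (if y ∈ U then false else c' s(x, y)),
      fun x y => by
        by_cases hx : x ∈ U <;> by_cases hy : y ∈ U <;> simp [hx, hy, Sym2.eq_swap]⟩ with hc
  have hcval : ∀ x y, c s(x, y) =
      if x ∈ U then (if y ∈ U then true else false)
      else (if y ∈ U then false else c' s(x, y)) := fun x y => Sym2.lift_mk _ x y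
  have hdich : ∀ p : α × α × α, RedC F c p → ((tverts p ⊆ U) ∨ (∀ x ∈ tverts p, x ∉ U)) := by
    intro p hred
    obtain ⟨-, hr1, hr2⟩ := hred
    rw [hcval] at hr1 hr2
    by_cases h1 : p.1 ∈ U
    · left
      rw [if_pos h1] at hr1
      have h2 : p.2.1 ∈ U := by by_contra h2; rw [if_neg h2] at hr1; simp at hr1
      rw [if_pos h2] at hr2
      have h3 : p.2.2 ∈ U := by by_contra h3; rw [if_neg h3] at hr2; simp at hr2
      intro x hx
      simp only [tverts, Finset.mem_insert, Finset.mem_singleton] at hx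
      rcases hx with rfl | rfl | rfl <;> assumption
    · right
      rw [if_neg h1] at hr1
      have h2 : p.2.1 ∉ U := by intro h2; rw [if_pos h2] at hr1; simp at hr1
      rw [if_neg h2] at hr2
      have h3 : p.2.2 ∉ U := by intro h3; rw [if_pos h3] at hr2; simp at hr2
      intro x hx
      simp only [tverts, Finset.mem_insert, Finset.mem_singleton] at hx
      rcases hx with rfl | rfl | rfl <;> assumption
  rcases h c with hfam | hblue
  · obtain ⟨S, hS1, hS2, hS3⟩ := hfam
    have hsplit : (S.filter (fun p => p.1 ∈ U)).card
        + (S.filter (fun p => ¬ (p.1 ∈ U))).card = S.card :=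
      Finset.card_filter_add_card_filter_not (s := S) (p := fun p => p.1 ∈ U)
    have hinb : (S.filter (fun p => p.1 ∈ U)).card ≤ T / 2 := by
      apply cherry_union_bound V hcl hdisj
      · intro p hp
        obtain ⟨hpS, hp1⟩ := Finset.mem_filter.1 hp
        refine ⟨(hS2 p hpS).1.1, ?_⟩
        rcases hdich p (hS2 p hpS).1 with hin | hout
        · exact hin
        · exact absurd hp1 (hout p.1 (mem_tverts1 p))
      · intro p hp q hq hpq
        exact hS3 p (Finset.mem_filter.1 hp).1 q (Finset.mem_filter.1 hq).1 hpq
    have houtc : j + 1 ≤ (S.filter (fun p => ¬ (p.1 ∈ U))).card := by omega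
    apply hnf
    refine ⟨S.filter (fun p => ¬ (p.1 ∈ U)), houtc, ?_, ?_⟩
    · intro p hp
      obtain ⟨hpS, hp1⟩ := Finset.mem_filter.1 hp
      obtain ⟨⟨hch, hr1, hr2⟩, hsubA⟩ := hS2 p hpS
      have hout : ∀ x ∈ tverts p, x ∉ U := by
        rcases hdich p (hS2 p hpS).1 with hin | hout
        · exact absurd (hin (mem_tverts1 p)) hp1
        · exact hout
      have h1 := hout p.1 (mem_tverts1 p)
      have h2 := hout p.2.1 (mem_tverts2 p)
      have h3 := hout p.2.2 (mem_tverts3 p)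
      rw [hcval, if_neg h1, if_neg h2] at hr1
      rw [hcval, if_neg h2, if_neg h3] at hr2
      exact ⟨⟨hch, hr1, hr2⟩, fun x hx => Finset.mem_sdiff.2 ⟨hsubA hx, hout x hx⟩⟩
    · intro p hp q hq hpq
      exact hS3 p (Finset.mem_filter.1 hp).1 q (Finset.mem_filter.1 hq).1 hpq
  · obtain ⟨Q, hQA, hQcl, hQb⟩ := hblue
    have hQU : (Q ∩ U).card ≤ 1 := by
      rw [Finset.card_le_one]
      intro x hx y hy
      by_contra hxy
      have hx' := Finset.mem_inter.1 hx
      have hy' := Finset.mem_inter.1 hy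
      have := hQb x hx'.1 y hy'.1 hxy
      rw [hcval, if_pos hx'.2, if_pos hy'.2] at this
      simp at this
    have hcards : (Q ∩ U).card + (Q \ U).card = Q.card := Finset.card_inter_add_card_sdiff Q U
    by_cases hQU0 : (Q ∩ U).card = 0
    · apply hnb
      have hQout : ∀ x ∈ Q, x ∉ U := by
        intro x hx hxU
        have : x ∈ Q ∩ U := Finset.mem_inter.2 ⟨hx, hxU⟩
        rw [Finset.card_eq_zero] at hQU0
        rw [hQU0] at this
        simp at this
      refine ⟨Q, fun x hx => Finset.mem_sdiff.2 ⟨hQA hx, hQout x hx⟩, hQcl, ?_⟩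
      intro x hx y hy hxy
      have := hQb x hx y hy hxy
      rw [hcval, if_neg (hQout x hx), if_neg (hQout y hy)] at this
      exact this
    · apply hnocl
      refine ⟨Q \ U, fun x hx => ?_, ?_⟩
      · have hx' := Finset.mem_sdiff.1 hx
        exact Finset.mem_sdiff.2 ⟨hQA hx'.1, hx'.2⟩
      · constructor
        · exact hQcl.1.subset (Finset.coe_subset.2 Finset.sdiff_subset)
        · have := hQcl.2
          omega

theorem Obl_caseB {k j : ℕ} {A : Finset α} {T : ℕ} (V : Fin T → Finset α)
    (hcl : ∀ i, F.IsClique (V i : Set α))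
    (hdisj : ∀ i i', i ≠ i' → Disjoint (V i) (V i'))
    (hsub : ∀ i, V i ⊆ A)
    (hb : T / 2 ≤ j) (hk : 1 ≤ k)
    (h : Obl F k j A) : PR F (k - 1) (A \ Finset.univ.biUnion V) := by
  intro pa hpa
  by_contra hno
  set U := Finset.univ.biUnion V with hU
  set c : Sym2 α → Bool :=
    Sym2.lift ⟨fun x y =>
      if x ∈ U then (if y ∈ U then true else false)
      else (if y ∈ U then false else decide (pa x = pa y)),
      fun x y => by
        by_cases hx : x ∈ U <;> by_cases hy : y ∈ U <;> simp [hx, hy, eq_comm]⟩ with hc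
  have hcval : ∀ x y, c s(x, y) =
      if x ∈ U then (if y ∈ U then true else false)
      else (if y ∈ U then false else decide (pa x = pa y)) := fun x y => Sym2.lift_mk _ x y
  have hdich : ∀ p : α × α × α, RedC F c p → ((tverts p ⊆ U) ∨ (∀ x ∈ tverts p, x ∉ U)) := by
    intro p hred
    obtain ⟨-, hr1, hr2⟩ := hred
    rw [hcval] at hr1 hr2
    by_cases h1 : p.1 ∈ U
    · left
      rw [if_pos h1] at hr1
      have h2 : p.2.1 ∈ U := by by_contra h2; rw [if_neg h2] at hr1; simp at hr1
      rw [if_pos h2] at hr2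
      have h3 : p.2.2 ∈ U := by by_contra h3; rw [if_neg h3] at hr2; simp at hr2
      intro x hx
      simp only [tverts, Finset.mem_insert, Finset.mem_singleton] at hx
      rcases hx with rfl | rfl | rfl <;> assumption
    · right
      rw [if_neg h1] at hr1
      have h2 : p.2.1 ∉ U := by intro h2; rw [if_pos h2] at hr1; simp at hr1
      rw [if_neg h2] at hr2
      have h3 : p.2.2 ∉ U := by intro h3; rw [if_pos h3] at hr2; simp at hr2
      intro x hx
      simp only [tverts, Finset.mem_insert, Finset.mem_singleton] at hx
      rcases hx with rfl | rfl | rfl <;> assumption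
  rcases h c with hfam | hblue
  · obtain ⟨S, hS1, hS2, hS3⟩ := hfam
    -- no all-out red cherries
    have hallin : ∀ p ∈ S, tverts p ⊆ U := by
      intro p hp
      rcases hdich p (hS2 p hp).1 with hin | hout
      · exact hin
      · exfalso
        obtain ⟨⟨hch, hr1, hr2⟩, hsubA⟩ := hS2 p hp
        have h1 := hout p.1 (mem_tverts1 p)
        have h2 := hout p.2.1 (mem_tverts2 p)
        have h3 := hout p.2.2 (mem_tverts3 p)
        rw [hcval, if_neg h1, if_neg h2] at hr1
        rw [hcval, if_neg h2, if_neg h3] at hr2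
        have e1 : pa p.1 = pa p.2.1 := of_decide_eq_true hr1
        have e2 : pa p.2.1 = pa p.2.2 := of_decide_eq_true hr2
        apply hch.2.2.1
        apply hpa p.1 (Finset.mem_sdiff.2 ⟨hsubA (mem_tverts1 p), h1⟩)
          p.2.2 (Finset.mem_sdiff.2 ⟨hsubA (mem_tverts3 p), h3⟩) hch.2.2.2
        exact e1.trans e2
    have : S.card ≤ T / 2 := by
      apply cherry_union_bound V hcl hdisj
      · exact fun p hp => ⟨(hS2 p hp).1.1, hallin p hp⟩
      · exact hS3
    omega
  · obtain ⟨Q, hQA, hQcl, hQb⟩ := hblue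
    have hQU : (Q ∩ U).card ≤ 1 := by
      rw [Finset.card_le_one]
      intro x hx y hy
      by_contra hxy
      have hx' := Finset.mem_inter.1 hx
      have hy' := Finset.mem_inter.1 hy
      have := hQb x hx'.1 y hy'.1 hxy
      rw [hcval, if_pos hx'.2, if_pos hy'.2] at this
      simp at this
    have hcards : (Q ∩ U).card + (Q \ U).card = Q.card := Finset.card_inter_add_card_sdiff Q U
    have hQcard := hQcl.2
    have hk1 : k - 1 ≤ (Q \ U).card := by omega
    obtain ⟨t', ht'sub, ht'card⟩ := Finset.exists_subset_card_eq hk1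
    apply hno
    refine ⟨t', ?_, ?_, ?_⟩
    · intro x hx
      have hx' := Finset.mem_sdiff.1 (ht'sub hx)
      exact Finset.mem_sdiff.2 ⟨hQA hx'.1, hx'.2⟩
    · exact ⟨hQcl.1.subset (Finset.coe_subset.2 (ht'sub.trans Finset.sdiff_subset)), ht'card⟩
    · intro x hx y hy hxy
      have hxQ := Finset.mem_sdiff.1 (ht'sub hx)
      have hyQ := Finset.mem_sdiff.1 (ht'sub hy)
      have := hQb x hxQ.1 y hyQ.1 hxy
      rw [hcval, if_neg hxQ.2, if_neg hyQ.2] at this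
      exact of_decide_eq_false this


theorem PR_bound : ∀ (r : ℕ) (A : Finset α), PR F r A → r * (r + 1) / 2 ≤ A.card := by
  intro r
  induction r with
  | zero => intro A _; simp
  | succ r ih =>
    intro A h
    -- extract an (r+1)-clique using an injective labelling
    obtain ⟨t, htA, htcl, -⟩ :=
      h (fun x => ((Fintype.equivFin α) x : ℕ))
        (fun x _ y _ hxy hpa => by
          exact absurd (by
            have := Fin.val_injective hpa
            exact (Fintype.equivFin α).injective this) hxy)
    have htcard : t.card = r + 1 := htcl.2
    have htclique : F.IsClique (t : Set α) := htcl.1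
    -- show PR F r (A \ t)
    have hPR : PR F r (A \ t) := by
      intro pa' hpa'
      set N := (A.sup pa') + 1 with hN
      set pa : α → ℕ := fun x => if x ∈ t then N else pa' x with hpa
      have hprop : ∀ x ∈ A, ∀ y ∈ A, x ≠ y → pa x = pa y → F.Adj x y := by
        intro x hx y hy hxy heq
        by_cases hxt : x ∈ t <;> by_cases hyt : y ∈ t
        · exact htclique (by exact_mod_cast hxt) (by exact_mod_cast hyt) hxy
        · exfalso
          simp only [hpa, if_pos hxt, if_neg hyt] at heq
          have : pa' y ≤ A.sup pa' := Finset.le_sup hy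
          omega
        · exfalso
          simp only [hpa, if_neg hxt, if_pos hyt] at heq
          have : pa' x ≤ A.sup pa' := Finset.le_sup hx
          omega
        · simp only [hpa, if_neg hxt, if_neg hyt] at heq
          exact hpa' x (Finset.mem_sdiff.2 ⟨hx, hxt⟩) y (Finset.mem_sdiff.2 ⟨hy, hyt⟩) hxy heq
      obtain ⟨Q, hQA, hQcl, hQrb⟩ := h pa hprop
      -- at most one vertex of Q is in t
      have hQt : (Q ∩ t).card ≤ 1 := by
        rw [Finset.card_le_one]
        intro x hx y hy
        by_contra hxy
        have hx' := Finset.mem_inter.1 hx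
        have hy' := Finset.mem_inter.1 hy
        have := hQrb x hx'.1 y hy'.1 hxy
        simp only [hpa, if_pos hx'.2, if_pos hy'.2] at this
        exact this rfl
      have hcards : (Q ∩ t).card + (Q \ t).card = Q.card := Finset.card_inter_add_card_sdiff Q t
      have hQcard : Q.card = r + 1 := hQcl.2
      have : r ≤ (Q \ t).card := by omega
      obtain ⟨t', ht'sub, ht'card⟩ := Finset.exists_subset_card_eq this
      refine ⟨t', ?_, ?_, ?_⟩
      · intro x hx
        have hx' := Finset.mem_sdiff.1 (ht'sub hx)
        exact Finset.mem_sdiff.2 ⟨hQA hx'.1, hx'.2⟩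
      · exact ⟨hQcl.1.subset (by
          intro x hx
          exact (Finset.sdiff_subset.trans (le_refl Q)) (ht'sub (by exact_mod_cast hx))), ht'card⟩
      · intro x hx y hy hxy
        have hx' := Finset.mem_sdiff.1 (ht'sub hx)
        have hy' := Finset.mem_sdiff.1 (ht'sub hy)
        have := hQrb x hx'.1 y hy'.1 hxy
        simpa only [hpa, if_neg hx'.2, if_neg hy'.2] using this
    have hrec := ih (A \ t) hPR
    have hsd : (A \ t).card = A.card - t.card := Finset.card_sdiff_of_subset htA
    have htle : t.card ≤ A.card := Finset.card_le_card htA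
    have hident : (r+1)*(r+2)/2 = r*(r+1)/2 + (r+1) := by
      have h1 : (r+1)*(r+2) = r*(r+1) + 2*(r+1) := by ring
      rw [h1, Nat.add_mul_div_left _ _ (by norm_num : (0:ℕ) < 2)]
    show (r+1)*(r+2)/2 ≤ A.card
    omega


theorem Obl_bound {k : ℕ} (hk : 2 ≤ k) :
    ∀ (j : ℕ) (A : Finset α), Obl F k j A → k * (k + 1) / 2 + j * (2 * (k - 1)) ≤ A.card := by
  intro j
  induction j using Nat.strong_induction_on with
  | _ j ih =>
    intro A h
    match j, ih with
    | 0, _ =>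
      simpa using PR_bound k A (Obl_to_PR h)
    | j' + 1, ih =>
      obtain ⟨t₁, ht₁A, ht₁cl⟩ := Obl_clique h
      have h₁ : Obl F k j' (A \ t₁) := Obl_anchor hk ht₁A ht₁cl.1 h
      obtain ⟨t₂, ht₂A, ht₂cl⟩ := Obl_clique h₁
      classical
      set B := (A \ t₁) \ t₂ with hB
      set Pr : ℕ → Prop := fun r => ∃ V : Fin r → Finset α,
        (∀ i, F.IsNClique (k-1) (V i) ∧ V i ⊆ B) ∧
        (∀ i i', i ≠ i' → Disjoint (V i) (V i')) with hPr
      have combined : ∀ (r : ℕ) (V : Fin r → Finset α),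
          (∀ i, F.IsNClique (k-1) (V i) ∧ V i ⊆ B) →
          (∀ i i', i ≠ i' → Disjoint (V i) (V i')) →
          ∃ W : Fin (r+2) → Finset α,
            (∀ i, F.IsClique ((W i : Finset α) : Set α)) ∧
            (∀ i i', i ≠ i' → Disjoint (W i) (W i')) ∧
            (∀ i, W i ⊆ A) ∧
            (Finset.univ.biUnion W).card = 2 * k + r * (k-1) ∧
            (A \ Finset.univ.biUnion W) = B \ Finset.univ.biUnion V := by
        intro r V hV1 hV2
        set W : Fin (r+2) → Finset α := Fin.cons t₁ (Fin.cons t₂ V) with hW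
        have htri : ∀ i : Fin (r+2), (i = 0 ∧ W i = t₁) ∨
            (i = Fin.succ 0 ∧ W i = t₂) ∨
            (∃ a : Fin r, i = Fin.succ (Fin.succ a) ∧ W i = V a) := by
          intro i
          refine Fin.cases ?_ (fun a => ?_) i
          · exact Or.inl ⟨rfl, by simp [hW]⟩
          · refine Fin.cases ?_ (fun b => ?_) a
            · exact Or.inr (Or.inl ⟨rfl, by simp [hW]⟩)
            · exact Or.inr (Or.inr ⟨b, rfl, by simp [hW]⟩)
        have hd12 : Disjoint t₁ t₂ := by
          rw [Finset.disjoint_left]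
          intro x hx hx2
          exact (Finset.mem_sdiff.1 (ht₂A hx2)).2 hx
        have hd1V : ∀ i'', Disjoint t₁ (V i'') := by
          intro i''
          rw [Finset.disjoint_left]
          intro x hx hx2
          have h3 := (hV1 i'').2 hx2
          rw [hB] at h3
          exact (Finset.mem_sdiff.1 (Finset.mem_sdiff.1 h3).1).2 hx
        have hd2V : ∀ i'', Disjoint t₂ (V i'') := by
          intro i''
          rw [Finset.disjoint_left]
          intro x hx hx2
          have h3 := (hV1 i'').2 hx2
          rw [hB] at h3
          exact (Finset.mem_sdiff.1 h3).2 hx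
        have hdisjW : ∀ i i', i ≠ i' → Disjoint (W i) (W i') := by
          intro i i' hne
          rcases htri i with ⟨hi, hWi⟩ | ⟨hi, hWi⟩ | ⟨a, hi, hWi⟩ <;>
            rcases htri i' with ⟨hi', hWi'⟩ | ⟨hi', hWi'⟩ | ⟨a', hi', hWi'⟩ <;>
              rw [hWi, hWi']
          · exact absurd (hi.trans hi'.symm) hne
          · exact hd12
          · exact hd1V a'
          · exact hd12.symm
          · exact absurd (hi.trans hi'.symm) hne
          · exact hd2V a'
          · exact (hd1V a).symm
          · exact (hd2V a).symm
          · refine hV2 a a' (fun haa => hne ?_)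
            rw [hi, hi', haa]
        have hsubW : ∀ i, W i ⊆ A := by
          intro i
          rcases htri i with ⟨-, hWi⟩ | ⟨-, hWi⟩ | ⟨a, -, hWi⟩ <;> rw [hWi]
          · exact ht₁A
          · exact ht₂A.trans Finset.sdiff_subset
          · have h3 := (hV1 a).2
            rw [hB] at h3
            exact h3.trans (Finset.sdiff_subset.trans Finset.sdiff_subset)
        have hcardW : (Finset.univ.biUnion W).card = 2 * k + r * (k-1) := by
          rw [Finset.card_biUnion (fun i _ i' _ hne => hdisjW i i' hne)]
          have : ∑ i : Fin (r+2), (W i).card = t₁.card + (t₂.card + ∑ a : Fin r, (V a).card) := by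
            rw [Fin.sum_univ_succ, Fin.sum_univ_succ]
            simp only [hW, Fin.cons_zero, Fin.cons_succ]
          rw [this, ht₁cl.2, ht₂cl.2]
          have hsum : ∑ a : Fin r, (V a).card = r * (k-1) := by
            rw [Finset.sum_congr rfl (fun a _ => (hV1 a).1.2)]
            simp [mul_comm]
          rw [hsum]
          ring
        have hmemU : ∀ x, x ∈ Finset.univ.biUnion W ↔
            (x ∈ t₁ ∨ x ∈ t₂ ∨ x ∈ Finset.univ.biUnion V) := by
          intro x
          simp only [Finset.mem_biUnion, Finset.mem_univ, true_and]
          constructor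
          · rintro ⟨i, hi⟩
            rcases htri i with ⟨-, hWi⟩ | ⟨-, hWi⟩ | ⟨a, -, hWi⟩ <;> rw [hWi] at hi
            · exact Or.inl hi
            · exact Or.inr (Or.inl hi)
            · exact Or.inr (Or.inr ⟨a, hi⟩)
          · rintro (hx | hx | ⟨a, hx⟩)
            · exact ⟨0, by simpa [hW] using hx⟩
            · exact ⟨Fin.succ 0, by simpa [hW] using hx⟩
            · exact ⟨Fin.succ (Fin.succ a), by simpa [hW] using hx⟩
        have hsetEq : (A \ Finset.univ.biUnion W) = B \ Finset.univ.biUnion V := by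
          ext x
          simp only [Finset.mem_sdiff, hmemU, hB]
          constructor
          · rintro ⟨hxA, hx⟩
            push_neg at hx
            exact ⟨⟨⟨hxA, hx.1⟩, hx.2.1⟩, hx.2.2⟩
          · rintro ⟨⟨⟨hxA, h1⟩, h2⟩, h3⟩
            exact ⟨hxA, by push_neg; exact ⟨h1, h2, h3⟩⟩
        exact ⟨W, fun i => by
            rcases htri i with ⟨-, hWi⟩ | ⟨-, hWi⟩ | ⟨a, -, hWi⟩ <;> rw [hWi]
            · exact ht₁cl.1
            · exact ht₂cl.1
            · exact (hV1 a).1.1, hdisjW, hsubW, hcardW, hsetEq⟩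
      obtain ⟨m, rfl⟩ : ∃ m, k = m + 2 := ⟨k - 2, by omega⟩
      have hk1 : m + 2 - 1 = m + 1 := by omega
      by_cases hP2 : Pr (2*j'+1)
      · -- case B : a family of 2j'+1 disjoint (k-1)-cliques exists
        obtain ⟨V, hV1, hV2⟩ := hP2
        obtain ⟨W, hWcl, hWdisj, hWsub, hWcard, hWset⟩ := combined _ V hV1 hV2
        have hPR : PR F (m+2-1) (A \ Finset.univ.biUnion W) :=
          Obl_caseB W hWcl hWdisj hWsub (by omega) (by omega) h
        rw [hk1] at hPR
        have hbound := PR_bound (m+1) _ hPR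
        have hUA : Finset.univ.biUnion W ⊆ A := by
          intro x hx
          obtain ⟨i, -, hi⟩ := Finset.mem_biUnion.1 hx
          exact hWsub i hi
        have hsd : (A \ Finset.univ.biUnion W).card = A.card - (Finset.univ.biUnion W).card :=
          Finset.card_sdiff_of_subset hUA
        have hUle : (Finset.univ.biUnion W).card ≤ A.card := Finset.card_le_card hUA
        rw [hk1] at hWcard
        rw [hsd, hWcard] at hbound
        rw [hWcard] at hUle
        -- arithmetic
        have e1 : (2*j'+1)*(m+1) = 2*(j'*(m+1)) + (m+1) := by ring
        have e2 : (j'+1)*(2*((m+2) - 1)) = 2*(j'*(m+1)) + 2*(m+1) := by rw [hk1]; ring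
        have e3 : (m+2)*(m+2+1)/2 = (m+1)*(m+1+1)/2 + (m+2) := by
          have h1 : (m+2)*(m+2+1) = (m+1)*(m+1+1) + 2*(m+2) := by ring
          rw [h1, Nat.add_mul_div_left _ _ (by norm_num : (0:ℕ) < 2)]
        rw [e2, e3]
        omega
      · -- case A : maximal family
        have hPr0 : Pr 0 := ⟨fun i => i.elim0, fun i => i.elim0, fun i i' _ => i.elim0⟩
        set r := Nat.findGreatest Pr (2*j') with hr
        have hPrr : Pr r := Nat.findGreatest_spec (Nat.zero_le _) hPr0
        have hrle : r ≤ 2*j' := Nat.findGreatest_le _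
        have hnot : ¬ Pr (r+1) := by
          by_cases hreq : r = 2*j'
          · rw [hreq]; exact hP2
          · exact Nat.findGreatest_is_greatest
              (show Nat.findGreatest Pr (2*j') < r+1 by rw [← hr]; omega)
              (show r+1 ≤ 2*j' by omega)
        obtain ⟨V, hV1, hV2⟩ := hPrr
        obtain ⟨W, hWcl, hWdisj, hWsub, hWcard, hWset⟩ := combined r V hV1 hV2
        have hnocl : ¬ ∃ t : Finset α, t ⊆ A \ Finset.univ.biUnion W ∧
            F.IsNClique ((m+2) - 1) t := by
          rintro ⟨t, htsub, htcl⟩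
          apply hnot
          rw [hWset] at htsub
          have htB : t ⊆ B := htsub.trans Finset.sdiff_subset
          have htV : ∀ a : Fin r, Disjoint t (V a) := by
            intro a
            rw [Finset.disjoint_left]
            intro x hx hx2
            have := (Finset.mem_sdiff.1 (htsub hx)).2
            exact this (Finset.mem_biUnion.2 ⟨a, Finset.mem_univ _, hx2⟩)
          have htri2 : ∀ i : Fin (r+1),
              (i = Fin.last r ∧ (Fin.snoc V t : Fin (r+1) → Finset α) i = t) ∨
              (∃ a : Fin r, i = Fin.castSucc a ∧
                (Fin.snoc V t : Fin (r+1) → Finset α) i = V a) := by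
            intro i
            refine Fin.lastCases ?_ (fun a => ?_) i
            · exact Or.inl ⟨rfl, Fin.snoc_last _ _⟩
            · exact Or.inr ⟨a, rfl, Fin.snoc_castSucc _ _ _⟩
          refine ⟨Fin.snoc V t, ?_, ?_⟩
          · intro i
            rcases htri2 i with ⟨-, hsi⟩ | ⟨a, -, hsi⟩ <;> rw [hsi]
            · exact ⟨htcl, htB⟩
            · exact hV1 a
          · intro i i' hne
            rcases htri2 i with ⟨hi, hsi⟩ | ⟨a, hi, hsi⟩ <;>
              rcases htri2 i' with ⟨hi', hsi'⟩ | ⟨b, hi', hsi'⟩ <;> rw [hsi, hsi']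
            · exact absurd (hi.trans hi'.symm) hne
            · exact htV b
            · exact (htV a).symm
            · refine hV2 a b (fun hab => hne ?_)
              rw [hi, hi', hab]
        obtain ⟨b, hbdef⟩ : ∃ b, b = (r+2)/2 := ⟨_, rfl⟩
        have hb1 : 1 ≤ b := by omega
        have hble : b ≤ j'+1 := by omega
        have hOb : Obl F (m+2) ((j'+1-b) + (r+2)/2) A := by
          have heq : (j'+1-b) + (r+2)/2 = j'+1 := by omega
          rw [heq]; exact h
        have hrec := Obl_family W hWcl hWdisj hWsub hnocl (by omega) hOb
        have hbound := ih (j'+1-b) (by omega) _ hrec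
        have hUA : Finset.univ.biUnion W ⊆ A := by
          intro x hx
          obtain ⟨i, -, hi⟩ := Finset.mem_biUnion.1 hx
          exact hWsub i hi
        have hsd : (A \ Finset.univ.biUnion W).card = A.card - (Finset.univ.biUnion W).card :=
          Finset.card_sdiff_of_subset hUA
        have hUle : (Finset.univ.biUnion W).card ≤ A.card := Finset.card_le_card hUA
        rw [hk1] at hWcard
        rw [hsd, hWcard] at hbound
        rw [hWcard] at hUle
        -- key: b * (2*(m+1)) ≤ 2*(m+2) + r*(m+1)
        have hkey : b * (2*(m+1)) ≤ 2*(m+2) + r*(m+1) := by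
          have h2 : b * 2 ≤ r + 2 := by rw [hbdef]; exact Nat.div_mul_le_self (r+2) 2
          calc b * (2*(m+1)) = (b*2) * (m+1) := by ring
          _ ≤ (r+2) * (m+1) := Nat.mul_le_mul_right _ h2
          _ = r*(m+1) + 2*(m+1) := by ring
          _ ≤ 2*(m+2) + r*(m+1) := by omega
        obtain ⟨d, hd⟩ : ∃ d, d = j'+1-b := ⟨_, rfl⟩
        rw [hk1, ← hd] at hbound
        have hdb : j'+1 = d + b := by omega
        have e2 : (j'+1)*(2*((m+2) - 1)) = d*(2*(m+1)) + b*(2*(m+1)) := by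
          rw [hk1, hdb]
          ring
        rw [e2]
        omega


end IRAux

/-! ### Path and multipartite facts -/

lemma path3_adj_01 : (SimpleGraph.pathGraph 3).Adj 0 1 := by
  rw [SimpleGraph.pathGraph_adj]; decide
lemma path3_adj_12 : (SimpleGraph.pathGraph 3).Adj 1 2 := by
  rw [SimpleGraph.pathGraph_adj]; decide
lemma path3_nadj_02 : ¬ (SimpleGraph.pathGraph 3).Adj 0 2 := by
  rw [SimpleGraph.pathGraph_adj]; decide
lemma path3_nadj_20 : ¬ (SimpleGraph.pathGraph 3).Adj 2 0 := by
  rw [SimpleGraph.pathGraph_adj]; decide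
lemma fin3_cases : ∀ t : Fin 3, t = 0 ∨ t = 1 ∨ t = 2 := by decide
lemma copies_adj {β : Type*} {s : ℕ} {G : SimpleGraph β} {u v : Fin s × β} :
    (SimpleGraph.Copies s G).Adj u v ↔ (u.1 = v.1 ∧ G.Adj u.2 v.2) := Iff.rfl

def MPG (s n : ℕ) : SimpleGraph (Fin s × Fin n × Fin n) where
  Adj u v := u.1 = v.1 ∧ u.2.1 ≠ v.2.1
  symm := ⟨fun u v h => ⟨h.1.symm, h.2.symm⟩⟩
  loopless := ⟨fun u h => h.2 rfl⟩

lemma MPG_adj {s n : ℕ} {u v : Fin s × Fin n × Fin n} :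
    (MPG s n).Adj u v ↔ (u.1 = v.1 ∧ u.2.1 ≠ v.2.1) := Iff.rfl

theorem MPG_arrows (s n : ℕ) (hn : 3 ≤ n) :
    StronglyArrows (MPG s n) (SimpleGraph.Copies s (SimpleGraph.pathGraph 3))
      (⊤ : SimpleGraph (Fin n)) := by
  classical
  intro c
  by_cases hC : ∀ i : Fin s, ∃ p q x x' y : Fin n, p ≠ q ∧ x ≠ x' ∧
      c s(((i,p,x) : Fin s × Fin n × Fin n), (i,q,y)) = true ∧
      c s(((i,p,x') : Fin s × Fin n × Fin n), (i,q,y)) = true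
  · -- every copy contains a red cherry: red induced sP₃
    left
    choose p q x x' y hpq hxx' hred1 hred2 using hC
    set vert : Fin s × Fin 3 → Fin s × Fin n × Fin n :=
      fun u => (u.1, if u.2 = 1 then q u.1 else p u.1,
        if u.2 = 0 then x u.1 else if u.2 = 1 then y u.1 else x' u.1) with hvert
    have hv0 : ∀ i, vert (i, 0) = (i, p i, x i) := fun i => by
      show (i, if (0 : Fin 3) = 1 then q i else p i,
        if (0 : Fin 3) = 0 then x i else if (0 : Fin 3) = 1 then y i else x' i) = _
      rw [if_neg (by decide), if_pos rfl]
    have hv1 : ∀ i, vert (i, 1) = (i, q i, y i) := fun i => by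
      show (i, if (1 : Fin 3) = 1 then q i else p i,
        if (1 : Fin 3) = 0 then x i else if (1 : Fin 3) = 1 then y i else x' i) = _
      rw [if_pos rfl, if_neg (by decide), if_pos rfl]
    have hv2 : ∀ i, vert (i, 2) = (i, p i, x' i) := fun i => by
      show (i, if (2 : Fin 3) = 1 then q i else p i,
        if (2 : Fin 3) = 0 then x i else if (2 : Fin 3) = 1 then y i else x' i) = _
      rw [if_neg (by decide), if_neg (by decide), if_neg (by decide)]
    have hinj : Function.Injective vert := by
      rintro ⟨i, t⟩ ⟨i', t'⟩ huv
      have h1 : i = i' := congrArg Prod.fst huv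
      subst h1
      suffices ht : t = t' by rw [ht]
      rcases fin3_cases t with rfl | rfl | rfl <;> rcases fin3_cases t' with rfl | rfl | rfl <;>
        try rfl
      · rw [hv0, hv1] at huv
        simp only [Prod.mk.injEq] at huv
        exact absurd huv.2.1 (hpq i)
      · rw [hv0, hv2] at huv
        simp only [Prod.mk.injEq] at huv
        exact absurd huv.2.2 (hxx' i)
      · rw [hv1, hv0] at huv
        simp only [Prod.mk.injEq] at huv
        exact absurd huv.2.1 (Ne.symm (hpq i))
      · rw [hv1, hv2] at huv
        simp only [Prod.mk.injEq] at huv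
        exact absurd huv.2.1 (Ne.symm (hpq i))
      · rw [hv2, hv0] at huv
        simp only [Prod.mk.injEq] at huv
        exact absurd huv.2.2 (Ne.symm (hxx' i))
      · rw [hv2, hv1] at huv
        simp only [Prod.mk.injEq] at huv
        exact absurd huv.2.1 (hpq i)
    refine ⟨⟨⟨vert, hinj⟩, ?_⟩, ?_⟩
    · -- map_rel_iff
      rintro ⟨i, t⟩ ⟨i', t'⟩
      show (MPG s n).Adj (vert (i,t)) (vert (i',t')) ↔
        (SimpleGraph.Copies s (SimpleGraph.pathGraph 3)).Adj (i,t) (i',t')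
      rw [MPG_adj, copies_adj]
      by_cases hi : i = i'
      · subst hi
        have hfst : (vert (i,t)).1 = i := rfl
        have hfst' : (vert (i,t')).1 = i := rfl
        constructor
        · rintro ⟨-, h2⟩
          refine ⟨rfl, ?_⟩
          rcases fin3_cases t with rfl | rfl | rfl <;> rcases fin3_cases t' with rfl | rfl | rfl
          · exfalso; rw [hv0] at h2; exact h2 rfl
          · exact path3_adj_01
          · exfalso; rw [hv0, hv2] at h2; exact h2 rfl
          · exact path3_adj_01.symm
          · exfalso; rw [hv1] at h2; exact h2 rfl
          · exact path3_adj_12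
          · exfalso; rw [hv2, hv0] at h2; exact h2 rfl
          · exact path3_adj_12.symm
          · exfalso; rw [hv2] at h2; exact h2 rfl
        · rintro ⟨-, h2⟩
          refine ⟨rfl, ?_⟩
          rcases fin3_cases t with rfl | rfl | rfl <;> rcases fin3_cases t' with rfl | rfl | rfl
          · exact absurd h2 ((SimpleGraph.pathGraph 3).loopless.irrefl 0)
          · rw [hv0, hv1]; exact hpq i
          · exact absurd h2 path3_nadj_02
          · rw [hv1, hv0]; exact Ne.symm (hpq i)
          · exact absurd h2 ((SimpleGraph.pathGraph 3).loopless.irrefl 1)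
          · rw [hv1, hv2]; exact Ne.symm (hpq i)
          · exact absurd h2 path3_nadj_20
          · rw [hv2, hv1]; exact hpq i
          · exact absurd h2 ((SimpleGraph.pathGraph 3).loopless.irrefl 2)
      · constructor
        · rintro ⟨h1, -⟩
          exact absurd h1 hi
        · rintro ⟨h1, -⟩
          exact absurd h1 hi
    · rintro ⟨i, t⟩ ⟨i', t'⟩ hadj
      rw [copies_adj] at hadj
      obtain ⟨h1, h2⟩ := hadj
      have h1' : i = i' := h1
      subst h1'
      show c s(vert (i,t), vert (i,t')) = true
      rcases fin3_cases t with rfl | rfl | rfl <;> rcases fin3_cases t' with rfl | rfl | rfl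
      · exact absurd h2 ((SimpleGraph.pathGraph 3).loopless.irrefl 0)
      · rw [hv0, hv1]; exact hred1 i
      · exact absurd h2 path3_nadj_02
      · rw [hv1, hv0, Sym2.eq_swap]; exact hred1 i
      · exact absurd h2 ((SimpleGraph.pathGraph 3).loopless.irrefl 1)
      · rw [hv1, hv2, Sym2.eq_swap]; exact hred2 i
      · exact absurd h2 path3_nadj_20
      · rw [hv2, hv1]; exact hred2 i
      · exact absurd h2 ((SimpleGraph.pathGraph 3).loopless.irrefl 2)
  · -- some copy has no red cherry: build a blue Kₙ
    right
    push_neg at hC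
    obtain ⟨i₀, hno⟩ := hC
    have claim : ∀ mm : ℕ, ∃ g : Fin n → Fin n, ∀ a b : Fin n, (a:ℕ) < mm → (b:ℕ) < mm →
        a ≠ b → c s(((i₀, a, g a) : Fin s × Fin n × Fin n), (i₀, b, g b)) = false := by
      intro mm
      induction mm with
      | zero => exact ⟨fun _ => ⟨0, by omega⟩, fun a b ha => by omega⟩
      | succ mm ihm =>
        obtain ⟨g, hg⟩ := ihm
        by_cases hmm : mm < n
        · set P : Fin n := ⟨mm, hmm⟩ with hP
          set bad : Finset (Fin n) :=
            (Finset.univ.filter (fun b : Fin n => (b:ℕ) < mm)).biUnion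
              (fun b => Finset.univ.filter
                (fun z => c s(((i₀, P, z) : Fin s × Fin n × Fin n), (i₀, b, g b)) = true))
            with hbad
          have hbad1 : ∀ b : Fin n, (b:ℕ) < mm → (Finset.univ.filter
              (fun z => c s(((i₀, P, z) : Fin s × Fin n × Fin n), (i₀, b, g b)) = true)).card
                ≤ 1 := by
            intro b hb
            rw [Finset.card_le_one]
            intro z hz z' hz'
            by_contra hzz
            have hzr := (Finset.mem_filter.1 hz).2
            have hzr' := (Finset.mem_filter.1 hz').2
            have hPb : P ≠ b := by
              intro hPb
              rw [← hPb] at hb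
              simp [hP] at hb
            exact hno P b z z' (g b) hPb hzz hzr hzr'
          have hbadcard : bad.card ≤ mm := by
            calc bad.card ≤ ∑ b ∈ Finset.univ.filter (fun b : Fin n => (b:ℕ) < mm),
                (Finset.univ.filter
                  (fun z => c s(((i₀, P, z) : Fin s × Fin n × Fin n), (i₀, b, g b)) = true)).card :=
                Finset.card_biUnion_le
            _ ≤ ∑ b ∈ Finset.univ.filter (fun b : Fin n => (b:ℕ) < mm), 1 :=
                Finset.sum_le_sum (fun b hb => hbad1 b (Finset.mem_filter.1 hb).2)
            _ = (Finset.univ.filter (fun b : Fin n => (b:ℕ) < mm)).card := by simp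
            _ ≤ mm := by
                apply Finset.card_le_card_of_injOn (fun b : Fin n => (b:ℕ))
                  (fun b hb => Finset.mem_range.2 (Finset.mem_filter.1 hb).2)
                  (fun b _ b' _ hbb => Fin.ext hbb) |>.trans
                simp
          have hz : ∃ z : Fin n, z ∉ bad := by
            by_contra hcon
            push_neg at hcon
            have : (Finset.univ : Finset (Fin n)).card ≤ bad.card :=
              Finset.card_le_card (fun z _ => hcon z)
            simp only [Finset.card_univ, Fintype.card_fin] at this
            omega
          obtain ⟨z, hzb⟩ := hz
          refine ⟨Function.update g P z, ?_⟩
          intro a b ha hb hab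
          have hblue : ∀ b : Fin n, (b:ℕ) < mm →
              c s(((i₀, P, z) : Fin s × Fin n × Fin n), (i₀, b, g b)) = false := by
            intro b hb
            rcases Bool.eq_false_or_eq_true
              (c s(((i₀, P, z) : Fin s × Fin n × Fin n), (i₀, b, g b))) with h | h
            swap
            · exact h
            · exfalso
              apply hzb
              rw [hbad]
              refine Finset.mem_biUnion.2 ⟨b, Finset.mem_filter.2 ⟨Finset.mem_univ _, hb⟩,
                Finset.mem_filter.2 ⟨Finset.mem_univ _, h⟩⟩
          by_cases ha' : (a:ℕ) < mm <;> by_cases hb' : (b:ℕ) < mm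
          · have hna : a ≠ P := fun h => by subst h; exact absurd ha' (by simp [hP])
            have hnb : b ≠ P := fun h => by subst h; exact absurd hb' (by simp [hP])
            rw [Function.update_of_ne hna, Function.update_of_ne hnb]
            exact hg a b ha' hb' hab
          · -- b = P
            have hbP : b = P := Fin.ext (by simp [hP]; omega)
            subst hbP
            rw [Function.update_of_ne (by exact hab), Function.update_self]
            rw [Sym2.eq_swap]
            exact hblue a ha'
          · -- a = P
            have haP : a = P := Fin.ext (by simp [hP]; omega)
            subst haP
            rw [Function.update_self, Function.update_of_ne (Ne.symm hab)]
            exact hblue b hb'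
          · exfalso
            have : a = P := Fin.ext (by simp [hP]; omega)
            have hb2 : b = P := Fin.ext (by simp [hP]; omega)
            exact hab (this.trans hb2.symm)
        · refine ⟨g, fun a b ha hb hab => hg a b ?_ ?_ hab⟩ <;> omega
    obtain ⟨g, hg⟩ := claim n
    refine ⟨⟨⟨fun a => (i₀, a, g a), ?_⟩, ?_⟩, ?_⟩
    · intro a b hab
      exact congrArg (fun u : Fin s × Fin n × Fin n => u.2.1) hab
    · intro a b
      rw [MPG_adj]
      constructor
      · rintro ⟨-, h2⟩
        exact (SimpleGraph.top_adj _ _).2 h2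
      · intro h
        exact ⟨rfl, (SimpleGraph.top_adj _ _).1 h⟩
    · intro a b hab
      exact hg a b a.isLt b.isLt ((SimpleGraph.top_adj _ _).1 hab)


/-! ### From arrowing to the obligation property -/

theorem arrows_to_obl {m n s : ℕ} (hn : 3 ≤ n) (hs : 1 ≤ s) (F : SimpleGraph (Fin m))
    (h : StronglyArrows F (SimpleGraph.Copies s (SimpleGraph.pathGraph 3))
      (⊤ : SimpleGraph (Fin n))) :
    IRAux.Obl F n (s - 1) Finset.univ := by
  classical
  intro c
  rcases h c with ⟨f, hf⟩ | ⟨f, hf⟩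
  · left
    set tri : Fin s → (Fin m × Fin m × Fin m) :=
      fun i => (f (i, 0), f (i, 1), f (i, 2)) with htri
    have htriinj : Function.Injective tri := by
      intro i i' hii
      have h0 : f (i, 0) = f (i', 0) := congrArg Prod.fst hii
      have := f.injective h0
      exact congrArg Prod.fst this
    refine ⟨Finset.univ.image tri, ?_, ?_, ?_⟩
    · rw [Finset.card_image_of_injective _ htriinj]
      simp only [Finset.card_univ, Fintype.card_fin]
      omega
    · intro p hp
      obtain ⟨i, -, rfl⟩ := Finset.mem_image.1 hp
      refine ⟨⟨⟨?_, ?_, ?_, ?_⟩, ?_, ?_⟩, fun x _ => Finset.mem_univ x⟩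
      · exact f.map_adj_iff.2 ⟨rfl, path3_adj_01⟩
      · exact f.map_adj_iff.2 ⟨rfl, path3_adj_12⟩
      · intro hadj
        exact path3_nadj_02 (f.map_adj_iff.1 hadj).2
      · intro heq
        have := f.injective heq
        have h02 : (0 : Fin 3) = 2 := congrArg Prod.snd this
        exact absurd h02 (by decide)
      · exact hf (i, 0) (i, 1) ⟨rfl, path3_adj_01⟩
      · exact hf (i, 1) (i, 2) ⟨rfl, path3_adj_12⟩
    · intro p hp q hq hpq
      obtain ⟨i, -, rfl⟩ := Finset.mem_image.1 hp
      obtain ⟨i', -, rfl⟩ := Finset.mem_image.1 hq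
      have hii : i ≠ i' := fun hii => hpq (by rw [hii])
      intro x hx y hy
      have hx' : ∃ a : Fin 3, x = f (i, a) := by
        simp only [IRAux.tverts, htri, Finset.mem_insert, Finset.mem_singleton] at hx
        rcases hx with rfl | rfl | rfl
        exacts [⟨0, rfl⟩, ⟨1, rfl⟩, ⟨2, rfl⟩]
      have hy' : ∃ b : Fin 3, y = f (i', b) := by
        simp only [IRAux.tverts, htri, Finset.mem_insert, Finset.mem_singleton] at hy
        rcases hy with rfl | rfl | rfl
        exacts [⟨0, rfl⟩, ⟨1, rfl⟩, ⟨2, rfl⟩]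
      obtain ⟨a, rfl⟩ := hx'
      obtain ⟨b, rfl⟩ := hy'
      constructor
      · intro heq
        have := f.injective heq
        exact hii (congrArg Prod.fst this)
      · intro hadj
        exact hii (f.map_adj_iff.1 hadj).1
  · right
    refine ⟨Finset.univ.image f, fun x _ => Finset.mem_univ x, ⟨?_, ?_⟩, ?_⟩
    · intro x hx y hy hxy
      simp only [Finset.coe_image, Set.mem_image, Finset.coe_univ, Set.image_univ] at hx hy
      obtain ⟨a, rfl⟩ := hx
      obtain ⟨b, rfl⟩ := hy
      have hab : a ≠ b := fun hab => hxy (by rw [hab])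
      exact f.map_adj_iff.2 ((SimpleGraph.top_adj _ _).2 hab)
    · rw [Finset.card_image_of_injective _ f.injective]
      simp
    · intro x hx y hy hxy
      obtain ⟨a, -, rfl⟩ := Finset.mem_image.1 hx
      obtain ⟨b, -, rfl⟩ := Finset.mem_image.1 hy
      have hab : a ≠ b := fun hab => hxy (by rw [hab])
      exact hf a b ((SimpleGraph.top_adj _ _).2 hab)

/-! ### Existence of an arrowing graph -/

theorem arrows_comap {α β γ δ : Type*} (e : δ ≃ α) {F : SimpleGraph δ}
    {G : SimpleGraph β} {H : SimpleGraph γ} (h : StronglyArrows F G H) :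
    StronglyArrows (F.comap e.symm) G H := by
  intro c
  set c₀ : Sym2 δ → Bool := fun p => c (p.map e) with hc₀
  have hkey : ∀ x y : δ, c₀ s(x, y) = c s(e x, e y) := by
    intro x y
    rw [hc₀]
    simp [Sym2.map_pair_eq]
  rcases h c₀ with ⟨f, hf⟩ | ⟨f, hf⟩
  · left
    refine ⟨⟨⟨fun b => e (f b), fun a b hab => f.injective (e.injective hab)⟩, ?_⟩, ?_⟩
    · intro a b
      show F.Adj (e.symm (e (f a))) (e.symm (e (f b))) ↔ G.Adj a b
      rw [Equiv.symm_apply_apply, Equiv.symm_apply_apply]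
      exact f.map_adj_iff
    · intro a b hab
      have := hf a b hab
      rw [hkey] at this
      exact this
  · right
    refine ⟨⟨⟨fun b => e (f b), fun a b hab => f.injective (e.injective hab)⟩, ?_⟩, ?_⟩
    · intro a b
      show F.Adj (e.symm (e (f a))) (e.symm (e (f b))) ↔ H.Adj a b
      rw [Equiv.symm_apply_apply, Equiv.symm_apply_apply]
      exact f.map_adj_iff
    · intro a b hab
      have := hf a b hab
      rw [hkey] at this
      exact this

theorem exists_arrowing (n s : ℕ) (hn : 3 ≤ n) (hs : 1 ≤ s) :
    ∃ (M : ℕ) (F : SimpleGraph (Fin M)),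
      StronglyArrows F (SimpleGraph.Copies s (SimpleGraph.pathGraph 3))
        (⊤ : SimpleGraph (Fin n)) := by
  have e : (Fin s × Fin n × Fin n) ≃ Fin (s * (n * n)) :=
    (Equiv.prodCongr (Equiv.refl (Fin s)) finProdFinEquiv).trans finProdFinEquiv
  exact ⟨s * (n * n), (MPG s n).comap e.symm, arrows_comap e (MPG_arrows s n hn)⟩

theorem stmt14 (s n : ℕ) (hs : 1 ≤ s) (hn : 3 ≤ n) :
    (n + 1).choose 2 + (2 * s - 2) * (n - 1) ≤
      IR (SimpleGraph.Copies s (SimpleGraph.pathGraph 3)) (⊤ : SimpleGraph (Fin n)) := by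
  obtain ⟨M, F0, hF0⟩ := exists_arrowing n s hn hs
  have hne : {m : ℕ | ∃ F : SimpleGraph (Fin m),
      StronglyArrows F (SimpleGraph.Copies s (SimpleGraph.pathGraph 3))
        (⊤ : SimpleGraph (Fin n))}.Nonempty := ⟨M, F0, hF0⟩
  rw [IR]
  apply le_csInf hne
  rintro m ⟨F, hF⟩
  have hobl := arrows_to_obl hn hs F hF
  have hb := IRAux.Obl_bound (by omega : 2 ≤ n) (s - 1) Finset.univ hobl
  have hcard : (Finset.univ : Finset (Fin m)).card = m := by simp
  have hch : (n + 1).choose 2 = n * (n + 1) / 2 := by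
    rw [Nat.choose_two_right]
    simp [Nat.mul_comm]
  have harith : (2 * s - 2) * (n - 1) = (s - 1) * (2 * (n - 1)) := by
    have h1 : 2 * s - 2 = 2 * (s - 1) := by omega
    rw [h1]; ring
  rw [hch, harith]
  omega
end

section
/- For any graph G on n vertices, there exists a partition V(G) = V_1 ∪ V_2 such that every induced matching M in G contains at most n/3 edges having both endpoints in V_1 or both endpoints in V_2. -/
open SimpleGraph

/-- `M` is an induced matching in `G`: its edges are edges of `G`, pairwise
vertex-disjoint, and the subgraph induced on the endpoints of `M` is exactly `M`. -/
def SimpleGraph.IsInducedMatching {V : Type*} (G : SimpleGraph V)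
    (M : Finset (Sym2 V)) : Prop :=
  (↑M ⊆ G.edgeSet) ∧
  (∀ e ∈ M, ∀ f ∈ M, e ≠ f → ∀ v : V, v ∈ e → v ∉ f) ∧
  (∀ u v : V, (∃ e ∈ M, u ∈ e) → (∃ e ∈ M, v ∈ e) → G.Adj u v → s(u, v) ∈ M)

theorem stmt16 {V : Type*} [Fintype V] (G : SimpleGraph V) :
    ∃ V1 : Finset V, ∀ M : Finset (Sym2 V), G.IsInducedMatching M →
      3 * Set.ncard {e : Sym2 V | e ∈ M ∧
          ((∀ v ∈ e, v ∈ V1) ∨ (∀ v ∈ e, v ∉ V1))} ≤ Fintype.card V := by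
  classical
  obtain ⟨M0, hM0, hmax⟩ : ∃ M0, G.IsInducedMatching M0 ∧
      ∀ M, G.IsInducedMatching M → M.card ≤ M0.card := by
    have hne : (Finset.univ.filter fun M : Finset (Sym2 V) =>
        G.IsInducedMatching M).Nonempty :=
      ⟨∅, by simp [SimpleGraph.IsInducedMatching]⟩
    obtain ⟨M0, hM0, hmax⟩ := Finset.exists_max_image _ Finset.card hne
    exact ⟨M0, by simpa using hM0, fun M hM => hmax M (by simpa using hM)⟩
  by_cases h : 3 * M0.card ≤ Fintype.card V
  · refine ⟨∅, fun M hM => ?_⟩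
    have hset : {e : Sym2 V | e ∈ M ∧
        ((∀ v ∈ e, v ∈ (∅ : Finset V)) ∨ (∀ v ∈ e, v ∉ (∅ : Finset V)))} = ↑M := by
      ext e; simp
    rw [hset, Set.ncard_coe_finset]
    calc 3 * M.card ≤ 3 * M0.card := by
            have := hmax M hM; omega
      _ ≤ Fintype.card V := h
  · push_neg at h
    -- one endpoint from each edge of M0
    set f : Sym2 V → V := fun e => (Quot.out e).1 with hf
    refine ⟨M0.image f, fun M hM => ?_⟩
    set V1 : Finset V := M0.image f with hV1
    set S : Set (Sym2 V) := {e : Sym2 V | e ∈ M ∧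
        ((∀ v ∈ e, v ∈ V1) ∨ (∀ v ∈ e, v ∉ V1))} with hS
    -- endpoints of edges of M0
    have hout : ∀ e : Sym2 V, e = s((Quot.out e).1, (Quot.out e).2) := by
      intro e
      conv_lhs => rw [← Quot.out_eq e]
    have hndiag : ∀ e ∈ M0, (Quot.out e).1 ≠ (Quot.out e).2 := by
      intro e he heq
      have hedge : e ∈ G.edgeSet := hM0.1 he
      have : e.IsDiag := by rw [hout e, Sym2.mk_isDiag_iff]; exact heq
      exact G.not_isDiag_of_mem_edgeSet hedge this
    -- second out is never in V1
    have hsnd : ∀ e ∈ M0, (Quot.out e).2 ∉ V1 := by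
      intro e he hmem
      rw [hV1, Finset.mem_image] at hmem
      obtain ⟨e', he', heq⟩ := hmem
      by_cases hee : e = e'
      · subst hee
        exact hndiag e he (show f e = (Quot.out e).2 from heq)
      · exact hM0.2.1 e' he' e he (fun h' => hee h'.symm) ((Quot.out e).2)
          (heq ▸ Sym2.out_fst_mem e') (Sym2.out_snd_mem e)
    -- every mono edge has a vertex not covered by M0
    have key : ∀ e ∈ S, ∃ v, v ∈ e ∧ ∀ e0 ∈ M0, v ∉ e0 := by
      intro e he
      by_contra hcon
      push_neg at hcon
      have hcov : ∀ v ∈ e, ∃ e0 ∈ M0, v ∈ e0 := by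
        intro v hv
        obtain ⟨e0, he0, hv0⟩ := hcon v hv
        exact ⟨e0, he0, hv0⟩
      obtain ⟨heM, hmono⟩ := he
      have hedge : e ∈ G.edgeSet := hM.1 heM
      have hadj : G.Adj (Quot.out e).1 (Quot.out e).2 := by
        rw [← SimpleGraph.mem_edgeSet, ← hout e]; exact hedge
      have h1 : e ∈ M0 := by
        have := hM0.2.2 (Quot.out e).1 (Quot.out e).2
          (hcov _ (Sym2.out_fst_mem e)) (hcov _ (Sym2.out_snd_mem e)) hadj
        rwa [← hout e] at this
      have hfst : (Quot.out e).1 ∈ V1 := Finset.mem_image_of_mem f h1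
      rcases hmono with hall | hall
      · exact hsnd e h1 (hall _ (Sym2.out_snd_mem e))
      · exact hall _ (Sym2.out_fst_mem e) hfst
    -- choice function (total)
    have key' : ∀ e : Sym2 V, ∃ v, e ∈ S → (v ∈ e ∧ ∀ e0 ∈ M0, v ∉ e0) := by
      intro e
      by_cases he : e ∈ S
      · obtain ⟨v, hv⟩ := key e he
        exact ⟨v, fun _ => hv⟩
      · have : Nonempty V := ⟨(Quot.out e).1⟩
        exact ⟨Classical.arbitrary _, fun h => absurd h he⟩
    choose g hg using key'
    have hg1 : ∀ e ∈ S, g e ∈ e := fun e he => (hg e he).1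
    have hg2 : ∀ e ∈ S, ∀ e0 ∈ M0, g e ∉ e0 := fun e he => (hg e he).2
    -- covered vertex set of M0
    set V0 : Finset V := M0.biUnion (fun e => {(Quot.out e).1, (Quot.out e).2})
      with hV0
    have hmemV0 : ∀ v : V, v ∈ V0 ↔ ∃ e ∈ M0, v ∈ e := by
      intro v
      rw [hV0, Finset.mem_biUnion]
      constructor
      · rintro ⟨e, he, hv⟩
        refine ⟨e, he, ?_⟩
        rw [hout e, Sym2.mem_iff]
        simpa using hv
      · rintro ⟨e, he, hv⟩
        refine ⟨e, he, ?_⟩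
        rw [hout e, Sym2.mem_iff] at hv
        simpa using hv
    have hV0card : V0.card = 2 * M0.card := by
      rw [hV0, Finset.card_biUnion]
      · rw [Finset.sum_congr rfl (fun e he => ?_), Finset.sum_const, smul_eq_mul,
          mul_comm]
        rw [Finset.card_insert_of_notMem (by simpa using hndiag e he),
          Finset.card_singleton]
      · intro e he e' he' hne
        rw [Function.onFun, Finset.disjoint_left]
        intro v hv hv'
        have hv1 : v ∈ e := by
          rw [hout e, Sym2.mem_iff]; simpa using hv
        have hv2 : v ∈ e' := by
          rw [hout e', Sym2.mem_iff]; simpa using hv'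
        exact hM0.2.1 e he e' he' hne v hv1 hv2
    -- finish by counting
    have hsub : g '' S ⊆ ↑(Finset.univ \ V0) := by
      rintro v ⟨e, he, rfl⟩
      simp only [Finset.coe_sdiff, Set.mem_diff, Finset.coe_univ, Set.mem_univ,
        true_and, Finset.mem_coe]
      rw [hmemV0]
      rintro ⟨e0, he0, hv0⟩
      exact hg2 e he e0 he0 hv0
    have hinj : Set.InjOn g S := by
      intro e he e' he' heq
      by_contra hne
      exact hM.2.1 e he.1 e' he'.1 hne (g e) (hg1 e he) (heq ▸ hg1 e' he')
    have hcount : S.ncard ≤ Fintype.card V - 2 * M0.card := by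
      calc S.ncard = (g '' S).ncard := (Set.ncard_image_of_injOn hinj).symm
        _ ≤ (↑(Finset.univ \ V0) : Set V).ncard :=
            Set.ncard_le_ncard hsub (Finset.finite_toSet _)
        _ = (Finset.univ \ V0).card := Set.ncard_coe_finset _
        _ = Fintype.card V - 2 * M0.card := by
            rw [Finset.card_sdiff_of_subset (Finset.subset_univ _), Finset.card_univ,
              hV0card]
    have hle : 2 * M0.card ≤ Fintype.card V := by
      rw [← hV0card]
      calc V0.card ≤ Finset.univ.card := Finset.card_le_univ _
        _ = Fintype.card V := Finset.card_univ
    omega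
end

section
/- If F is a disconnected graph with components S_1,…,S_m (m ≥ 2) such that F →ind (G, tH) for connected graphs G, H, and for each j, t_j is the largest integer with S_j →ind (G, t_jH), then t_1 + … + t_m ≥ t whenever F is a minimum-order graph strongly arrowing (G, tH). -/
open SimpleGraph

theorem stmt19 {β γ : Type*} [Fintype β] [Fintype γ]
    (G : SimpleGraph β) (H : SimpleGraph γ) (hG : G.Connected) (hH : H.Connected)
    (t : ℕ) (ht : 1 ≤ t)
    (F : SimpleGraph (Fin (IR G (SimpleGraph.Copies t H))))
    [Fintype F.ConnectedComponent]
    (hF : StronglyArrows F G (SimpleGraph.Copies t H))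
    (hm : 2 ≤ Fintype.card F.ConnectedComponent)
    (tj : F.ConnectedComponent → ℕ)
    (htj : ∀ c : F.ConnectedComponent,
      StronglyArrows (F.induce c.supp) G (SimpleGraph.Copies (tj c) H) ∧
      ∀ i : ℕ, StronglyArrows (F.induce c.supp) G (SimpleGraph.Copies i H) → i ≤ tj c) :
    t ≤ ∑ c : F.ConnectedComponent, tj c := by
  classical
  -- For each component `j`, pick a colouring witnessing that it does NOT strongly
  -- arrow `(G, (tj j + 1) H)`.
  have hbad : ∀ j : F.ConnectedComponent, ∃ cj : Sym2 j.supp → Bool,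
      ¬ (∃ f : G ↪g (F.induce j.supp), ∀ a b : β, G.Adj a b → cj s(f a, f b) = true) ∧
      ¬ (∃ f : (SimpleGraph.Copies (tj j + 1) H) ↪g (F.induce j.supp),
          ∀ a b : Fin (tj j + 1) × γ, (SimpleGraph.Copies (tj j + 1) H).Adj a b →
            cj s(f a, f b) = false) := by
    intro j
    have h1 : ¬ StronglyArrows (F.induce j.supp) G (SimpleGraph.Copies (tj j + 1) H) := by
      intro h
      have := (htj j).2 _ h
      omega
    obtain ⟨cj, hcj⟩ := not_forall.1 h1
    rw [not_or] at hcj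
    exact ⟨cj, hcj.1, hcj.2⟩
  choose cc hcc1 hcc2 using hbad
  let V := Fin (IR G (SimpleGraph.Copies t H))
  set cmp : V → F.ConnectedComponent := F.connectedComponentMk with hcmp
  have hmem : ∀ a : V, a ∈ (cmp a).supp := fun a => rfl
  -- transport lemma across equal components
  have key : ∀ (j k : F.ConnectedComponent), j = k → ∀ (a b : V)
      (ha : a ∈ j.supp) (hb : b ∈ j.supp) (ha' : a ∈ k.supp) (hb' : b ∈ k.supp),
      cc j s(⟨a, ha⟩, ⟨b, hb⟩) = cc k s(⟨a, ha'⟩, ⟨b, hb'⟩) := by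
    rintro j _ rfl a b _ _ _ _
    rfl
  -- glue the bad colourings into a global colouring
  set f0 : V → V → Bool := fun a b =>
    if h : cmp a = cmp b then cc (cmp a) s(⟨a, hmem a⟩, ⟨b, h.symm⟩) else true with hf0
  have hsymm : ∀ a b : V, f0 a b = f0 b a := by
    intro a b
    by_cases h : cmp a = cmp b
    · simp only [hf0, dif_pos h, dif_pos h.symm]
      rw [key (cmp a) (cmp b) h a b (hmem a) h.symm (h : a ∈ (cmp b).supp) (hmem b)]
      congr 1
      exact Sym2.eq_swap
    · have h' : ¬ cmp b = cmp a := fun h' => h h'.symm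
      simp only [hf0, dif_neg h, dif_neg h']
  set c : Sym2 V → Bool := Sym2.lift ⟨f0, hsymm⟩ with hcdef
  have hc : ∀ (j : F.ConnectedComponent) (a b : V) (ha : a ∈ j.supp) (hb : b ∈ j.supp),
      c s(a, b) = cc j s(⟨a, ha⟩, ⟨b, hb⟩) := by
    intro j a b ha hb
    have h : cmp a = cmp b := by
      have ha' : cmp a = j := ha
      have hb' : cmp b = j := hb
      rw [ha', hb']
    show f0 a b = _
    simp only [hf0, dif_pos h]
    exact key (cmp a) j ha a b (hmem a) h.symm ha hb
  rcases hF c with ⟨f, hf⟩ | ⟨f, hf⟩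
  · -- red case: a red induced G would lie inside one component, contradiction
    exfalso
    obtain ⟨b0⟩ := hG.nonempty
    set j : F.ConnectedComponent := cmp (f b0) with hj
    have hall : ∀ a : β, f a ∈ j.supp := by
      intro a
      exact ConnectedComponent.sound ((hG.preconnected a b0).map f.toHom)
    refine hcc1 j ⟨⟨⟨fun a => ⟨f a, hall a⟩, ?_⟩, ?_⟩, ?_⟩
    · intro a b hab
      exact f.injective (congrArg Subtype.val hab)
    · intro a b
      exact f.map_rel_iff
    · intro a b hab
      have := hf a b hab
      rw [hc j (f a) (f b) (hall a) (hall b)] at this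
      exact this
  · -- blue case
    obtain ⟨x0⟩ := hH.nonempty
    set jdx : Fin t → F.ConnectedComponent := fun i => cmp (f (i, x0)) with hjdx
    have hall : ∀ (i : Fin t) (x : γ), f (i, x) ∈ (jdx i).supp := by
      intro i x
      let hom : H →g SimpleGraph.Copies t H := ⟨fun y => (i, y), fun hadj => ⟨rfl, hadj⟩⟩
      exact ConnectedComponent.sound (((hH.preconnected x x0).map hom).map f.toHom)
    have hsum : t = ∑ j : F.ConnectedComponent, (Finset.univ.filter fun i => jdx i = j).card := by
      have := Finset.card_eq_sum_card_fiberwise (fun (i : Fin t) (_ : i ∈ Finset.univ) =>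
        Finset.mem_univ (jdx i))
      simpa using this
    refine hsum.trans_le (Finset.sum_le_sum ?_)
    intro j _
    by_contra hlt
    push_neg at hlt
    have hge : tj j + 1 ≤ (Finset.univ.filter fun i => jdx i = j).card := hlt
    obtain ⟨u, hu, hucard⟩ := Finset.exists_subset_card_eq hge
    set e := u.orderIsoOfFin hucard with he
    have hej : ∀ i : Fin (tj j + 1), jdx (e i) = j := by
      intro i
      have := hu (e i).2
      exact (Finset.mem_filter.1 this).2
    have hemem : ∀ (i : Fin (tj j + 1)) (x : γ), f ((e i : Fin t), x) ∈ j.supp := by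
      intro i x
      have := hall (e i) x
      rwa [hej i] at this
    have heinj : Function.Injective fun i : Fin (tj j + 1) => (e i : Fin t) := by
      intro i₁ i₂ h
      exact e.injective (Subtype.ext h)
    refine hcc2 j ⟨⟨⟨fun p => ⟨f ((e p.1 : Fin t), p.2), hemem p.1 p.2⟩, ?_⟩, ?_⟩, ?_⟩
    · intro p q hpq
      have h1 : ((e p.1 : Fin t), p.2) = ((e q.1 : Fin t), q.2) :=
        f.injective (congrArg Subtype.val hpq)
      have h2 : (e p.1 : Fin t) = (e q.1 : Fin t) := congrArg Prod.fst h1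
      have h3 := congrArg Prod.snd h1
      exact Prod.ext_iff.2 ⟨heinj h2, h3⟩
    · intro p q
      constructor
      · intro h
        have h' : F.Adj (f ((e p.1 : Fin t), p.2)) (f ((e q.1 : Fin t), q.2)) := h
        obtain ⟨h1, h2⟩ := f.map_rel_iff.1 h'
        exact ⟨heinj h1, h2⟩
      · rintro ⟨h1, h2⟩
        exact f.map_rel_iff.2 ⟨congrArg (fun i => ((e i : Fin t))) h1, h2⟩
    · intro p q hpq
      obtain ⟨h1, h2⟩ := hpq
      have hadj : (SimpleGraph.Copies t H).Adj ((e p.1 : Fin t), p.2) ((e q.1 : Fin t), q.2) :=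
        ⟨congrArg (fun i => ((e i : Fin t))) h1, h2⟩
      have := hf _ _ hadj
      rw [hc j _ _ (hemem p.1 p.2) (hemem q.1 q.2)] at this
      exact this
end
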